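/- arXiv:0911.0090 — 7 statements merged into one kernel-verified Lean document; each statement's English description precedes it below -/
import Mathlib

section
/- Let G be a finitely generated group, K a subgroup of G, Σ a finite alphabet, and ψ : Σ → G a semigroup presentation of G (i.e., the image ψ(Σ) generates G as a semigroup/monoid). Then the word problem L(G,K,ψ) = { w ∈ Σ* : ψ(w) ∈ K } is a regular language if and only if K has finite index in G. -/
/-- Let `G` be a finitely generated group, `K` a subgroup of `G`,
`α` a finite alphabet and `ψ : α → G` a semigroup presentation of `G` (the image of `ψ`
generates `G` as a semigroup, i.e. every element of `G` is a product of letters' images).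
Then the word problem `L(G,K,ψ) = { w | ψ(w) ∈ K }` is regular iff `[G:K] < ∞`. -/
theorem regular_word_problem_iff_finiteIndex
    {G : Type} [Group G] [Group.FG G] (K : Subgroup G)
    {α : Type} [Fintype α] (ψ : α → G)
    (hψ : ∀ g : G, ∃ w : List α, (w.map ψ).prod = g) :
    Language.IsRegular {w : List α | (w.map ψ).prod ∈ K} ↔ K.FiniteIndex := by
  constructor
  · rintro ⟨σ, _, M, hM⟩
    -- map each group element to the state reached by a chosen word representing it
    let wd : G → List α := fun g => (hψ g).choose
    have hwd : ∀ g, ((wd g).map ψ).prod = g := fun g => (hψ g).choose_spec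
    let F : G → σ := fun g => M.eval (wd g)
    have key : ∀ g g', F g = F g' → g' * g⁻¹ ∈ K := by
      intro g g' h
      have h2 : ∀ h : G, g * h ∈ K ↔ g' * h ∈ K := by
        intro h0
        obtain ⟨u, hu⟩ := hψ h0
        have e1 : (wd g ++ u) ∈ M.accepts ↔ g * h0 ∈ K := by
          rw [hM]
          show ((wd g ++ u).map ψ).prod ∈ K ↔ _
          rw [List.map_append, List.prod_append, hwd, hu]
        have e2 : (wd g' ++ u) ∈ M.accepts ↔ g' * h0 ∈ K := by
          rw [hM]
          show ((wd g' ++ u).map ψ).prod ∈ K ↔ _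
          rw [List.map_append, List.prod_append, hwd, hu]
        rw [← e1, ← e2, DFA.mem_accepts, DFA.mem_accepts]
        simp only [DFA.eval]
        rw [DFA.evalFrom_of_append, DFA.evalFrom_of_append]
        show M.evalFrom (F g) u ∈ M.accept ↔ M.evalFrom (F g') u ∈ M.accept
        rw [h]
      have := (h2 g⁻¹).mp (by simpa using K.one_mem)
      exact this
    have hinj : Function.Injective (fun q : G ⧸ K => F ((Quotient.out q)⁻¹)) := by
      intro q q' h
      have hk := key _ _ h
      rw [inv_inv] at hk
      rw [← QuotientGroup.out_eq' q, ← QuotientGroup.out_eq' q']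
      exact (QuotientGroup.eq).mpr (by simpa using K.inv_mem hk)
    have : Finite (G ⧸ K) := Finite.of_injective _ hinj
    exact K.finiteIndex_of_finite_quotient
  · intro hK
    have : Finite (G ⧸ K) := K.finite_quotient_of_finiteIndex
    have : Fintype (G ⧸ K) := Fintype.ofFinite _
    refine ⟨G ⧸ K, this, ⟨fun q a => (ψ a)⁻¹ • q, ((1 : G) : G ⧸ K), {((1 : G) : G ⧸ K)}⟩, ?_⟩
    set M : DFA α (G ⧸ K) :=
      ⟨fun q a => (ψ a)⁻¹ • q, ((1 : G) : G ⧸ K), {((1 : G) : G ⧸ K)}⟩ with hMdef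
    have ev : ∀ (w : List α) (g : G),
        M.evalFrom ((g : G ⧸ K)) w = ((((w.map ψ).prod)⁻¹ * g : G) : G ⧸ K) := by
      intro w
      induction w with
      | nil => intro g; simp
      | cons a w ih =>
        intro g
        show M.evalFrom (M.step (g : G ⧸ K) a) w = _
        have hstep : M.step (g : G ⧸ K) a = (((ψ a)⁻¹ * g : G) : G ⧸ K) := rfl
        rw [hstep, ih]
        congr 1
        simp [mul_assoc]
    ext w
    rw [DFA.mem_accepts]
    show M.evalFrom (((1 : G) : G ⧸ K)) w ∈ ({((1 : G) : G ⧸ K)} : Set (G ⧸ K)) ↔ _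
    rw [ev w 1]
    simp only [mul_one, Set.mem_singleton_iff, Set.mem_setOf_eq]
    rw [QuotientGroup.eq]
    simp only [mul_one, inv_inv, Set.mem_setOf_eq]
    exact ⟨fun h => h, fun h => h⟩
end

section
/- Let G be a finitely generated group with semigroup presentation ψ : Σ → G, and let K be a subgroup of G. Let H be a finitely generated subgroup of G with semigroup presentation ψ' : Σ' → H (so ψ'(Σ') generates H as a semigroup). If the language L(G,K,ψ) = { w ∈ Σ* : ψ(w) ∈ K } is context-free, then the language L(H, K ∩ H, ψ') = { w ∈ (Σ')* : ψ'(w) ∈ K ∩ H } is also context-free. -/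
open ContextFreeGrammar

namespace InvHomCF

variable {α β : Type}

/-- The monoid homomorphism `List β → List α` induced by `f`. -/
def hmap (f : β → List α) (w : List β) : List α := (w.map f).flatten

@[simp] lemma hmap_nil (f : β → List α) : hmap f [] = [] := rfl
@[simp] lemma hmap_cons (f : β → List α) (b : β) (w : List β) :
    hmap f (b :: w) = f b ++ hmap f w := rfl
@[simp] lemma hmap_append (f : β → List α) (w₁ w₂ : List β) :
    hmap f (w₁ ++ w₂) = hmap f w₁ ++ hmap f w₂ := by
  simp [hmap]

variable (f : β → List α)

/-- One consumption event: from buffer state `q`, possibly several emissions then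
consuming input letter `a`, emitting output `w`, ending in state `q'`. -/
inductive TStep : List α → α → List β → List α → Prop
  | base (a : α) (q : List α) : TStep (a :: q) a [] q
  | emit (b : β) {a : α} {w : List β} {q' : List α} :
      TStep (f b) a w q' → TStep [] a (b :: w) q'

/-- A run: a sequence of consumption events. -/
inductive TRun : List α → List α → List β → List α → Prop
  | nil (q : List α) : TRun q [] [] q
  | cons {q : List α} {a : α} {w₁ : List β} {q₁ : List α} {z : List α} {w₂ : List β}
      {q₂ : List α} :
      TStep f q a w₁ q₁ → TRun q₁ z w₂ q₂ → TRun q (a :: z) (w₁ ++ w₂) q₂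

lemma TStep.balance {q a w q'} (h : TStep f q a w q') : q ++ hmap f w = a :: q' := by
  induction h with
  | base a q => simp
  | emit b h ih => simpa using ih

lemma TRun.balance {q z w q'} (h : TRun f q z w q') : q ++ hmap f w = z ++ q' := by
  induction h with
  | nil q => simp
  | cons hs _ ih =>
    rw [hmap_append, ← List.append_assoc, hs.balance]
    simpa using ih

lemma TRun.append {q z w q' z' w' q''} (h : TRun f q z w q') (h' : TRun f q' z' w' q'') :
    TRun f q (z ++ z') (w ++ w') q'' := by
  induction h with
  | nil q => simpa using h'
  | cons hs _ ih =>
    rw [List.cons_append, List.append_assoc]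
    exact TRun.cons hs (ih h')

lemma TRun.consume_self (u : List α) : TRun f u u [] [] := by
  induction u with
  | nil => exact TRun.nil []
  | cons a u ih => simpa using TRun.cons (TStep.base a u) ih

lemma TRun.single {b : β} (hb : f b ≠ []) : TRun f [] (f b) [b] [] := by
  obtain ⟨a, rest, hr⟩ := List.exists_cons_of_ne_nil hb
  have h1 : TStep f [] a [b] rest := TStep.emit b (hr ▸ TStep.base a rest)
  have := TRun.cons h1 (TRun.consume_self f rest)
  simpa [hr] using this

lemma TRun.nil_inv {q w q'} (h : TRun f q [] w q') : w = [] ∧ q' = q := by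
  cases h; exact ⟨rfl, rfl⟩

lemma TRun.emit_junk {b : β} (hb : f b = []) {a z w q'} (h : TRun f [] (a :: z) w q') :
    TRun f [] (a :: z) (b :: w) q' := by
  cases h with
  | cons hs hr =>
    exact TRun.cons (TStep.emit b (hb ▸ hs)) hr

lemma hmap_eq_nil {w : List β} (hw : ∀ b ∈ w, f b = []) : hmap f w = [] := by
  induction w with
  | nil => rfl
  | cons b w ih => simp [hw b (by simp), ih fun b hb => hw b (by simp [hb])]

/-- Decoding: every word `w` splits into a run part and trailing junk. -/
lemma exists_run (w : List β) :
    ∃ w₁ w₂, w = w₁ ++ w₂ ∧ (∀ b ∈ w₂, f b = []) ∧ TRun f [] (hmap f w) w₁ [] := by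
  induction w with
  | nil => exact ⟨[], [], by simp, by simp, by simpa using TRun.nil []⟩
  | cons b w ih =>
    obtain ⟨w₁, w₂, hw, hjunk, hrun⟩ := ih
    by_cases hb : f b = []
    · rcases w₁ with _ | ⟨c, w₁⟩
      · refine ⟨[], b :: w₂, by simp [hw], ?_, ?_⟩
        · intro x hx
          rcases List.mem_cons.1 hx with rfl | hx
          · exact hb
          · exact hjunk x hx
        · have : hmap f (b :: w) = [] := by
            rw [hw] at *
            simp [hb, hmap_eq_nil f hjunk]
          rw [this]; exact TRun.nil []
      · -- w₁ nonempty, so hmap f w ≠ []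
        have hz : hmap f w ≠ [] := by
          intro h0
          rw [h0] at hrun
          have := (TRun.nil_inv f hrun).1
          simp at this
        obtain ⟨a, z, hz'⟩ := List.exists_cons_of_ne_nil hz
        refine ⟨b :: c :: w₁, w₂, by simp [hw], hjunk, ?_⟩
        have : hmap f (b :: w) = a :: z := by simp [hb, hz']
        rw [this]
        exact TRun.emit_junk f hb (hz' ▸ hrun)
    · refine ⟨b :: w₁, w₂, by simp [hw], hjunk, ?_⟩
      have := (TRun.single f hb).append f hrun
      simpa using this

section Grammar
set_option linter.unusedSectionVars false
variable [Fintype α] [Fintype β] [DecidableEq α] [DecidableEq β] (g : ContextFreeGrammar α)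

noncomputable local instance : DecidableEq (ContextFreeRule β ((List α × Symbol α g.NT × List α) ⊕ Bool)) :=
  Classical.decEq _
variable [Fintype α] [Fintype β] (f : β → List α) (g : ContextFreeGrammar α)

/-- States: suffixes of the images `f b`, plus `[]`. -/
noncomputable def SQ : Finset (List α) :=
  insert [] ((Finset.univ : Finset β).biUnion fun b => (f b).tails.toFinset)

lemma nil_mem_SQ : [] ∈ SQ f := Finset.mem_insert_self _ _

lemma image_mem_SQ (b : β) : f b ∈ SQ f := by
  classical
  refine Finset.mem_insert_of_mem (Finset.mem_biUnion.2 ⟨b, Finset.mem_univ b, ?_⟩)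
  simp [List.mem_tails]
lemma suffix_mem_SQ {q q' : List α} (h : q' <:+ q) (hq : q ∈ SQ f) : q' ∈ SQ f := by
  classical
  rcases Finset.mem_insert.1 hq with rfl | hq
  · rw [List.suffix_nil.1 h]; exact nil_mem_SQ f
  · obtain ⟨b, -, hb⟩ := Finset.mem_biUnion.1 hq
    rw [List.mem_toFinset, List.mem_tails] at hb
    refine Finset.mem_insert_of_mem (Finset.mem_biUnion.2 ⟨b, Finset.mem_univ b, ?_⟩)
    simp [List.mem_tails]
    exact h.trans hb

lemma TStep.mem_SQ {q a w q'} (h : TStep f q a w q') (hq : q ∈ SQ f) : q' ∈ SQ f := by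
  induction h with
  | base a q => exact suffix_mem_SQ f (List.suffix_cons a q) hq
  | emit b h ih => exact ih (image_mem_SQ f b)

lemma TRun.mem_SQ {q z w q'} (h : TRun f q z w q') (hq : q ∈ SQ f) : q' ∈ SQ f := by
  induction h with
  | nil q => exact hq
  | cons hs _ ih => exact ih (hs.mem_SQ f hq)

/-- Nonterminals of the new grammar. -/
abbrev NT' (α : Type) (g : ContextFreeGrammar α) : Type :=
  (List α × Symbol α g.NT × List α) ⊕ Bool

/-- the lifted string of triple nonterminals -/
def liftStr : List α → List (Symbol α g.NT) → List (List α) → List (Symbol β (NT' α g))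
  | q, s :: rest, q' :: qs => Symbol.nonterminal (Sum.inl (q, s, q')) :: liftStr q' rest qs
  | _, _, _ => []

def lastSt : List α → List (List α) → List α
  | q, [] => q
  | _, q' :: qs => lastSt q' qs

@[simp] lemma lastSt_nil (q : List α) : lastSt q [] = q := rfl
@[simp] lemma lastSt_cons (q q' : List α) (qs : List (List α)) :
    lastSt q (q' :: qs) = lastSt q' qs := rfl

lemma lastSt_append (q : List α) (qs₁ qs₂ : List (List α)) :
    lastSt q (qs₁ ++ qs₂) = lastSt (lastSt q qs₁) qs₂ := by
  induction qs₁ generalizing q with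
  | nil => simp
  | cons q' qs₁ ih => simp [ih]

lemma lastSt_mem {q : List α} {qs : List (List α)} (hq : q ∈ SQ f)
    (hqs : ∀ x ∈ qs, x ∈ SQ f) : lastSt q qs ∈ SQ f := by
  induction qs generalizing q with
  | nil => exact hq
  | cons q' qs ih => exact ih (hqs q' (by simp)) fun x hx => hqs x (by simp [hx])

@[simp] lemma liftStr_nil (q : List α) (qs : List (List α)) :
    liftStr (β := β) g q [] qs = [] := by cases qs <;> rfl

@[simp] lemma liftStr_cons (q q' : List α) (s : Symbol α g.NT) (rest : List (Symbol α g.NT))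
    (qs : List (List α)) :
    liftStr (β := β) g q (s :: rest) (q' :: qs)
      = Symbol.nonterminal (Sum.inl (q, s, q')) :: liftStr g q' rest qs := rfl

lemma liftStr_append (q : List α) (x y : List (Symbol α g.NT)) (qs₁ qs₂ : List (List α))
    (hlen : qs₁.length = x.length) :
    liftStr (β := β) g q (x ++ y) (qs₁ ++ qs₂)
      = liftStr g q x qs₁ ++ liftStr g (lastSt q qs₁) y qs₂ := by
  induction x generalizing q qs₁ with
  | nil => rw [List.length_nil, List.length_eq_zero_iff] at hlen; subst hlen; simp
  | cons s x ih =>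
    rcases qs₁ with _ | ⟨q', qs₁⟩
    · simp at hlen
    · simp only [List.cons_append, liftStr_cons, lastSt_cons]
      rw [ih q' qs₁ (by simpa using hlen)]

/-- lists of states of a given length with entries in SQ -/
noncomputable def stateLists : ℕ → Finset (List (List α))
  | 0 => {[]}
  | n + 1 => by classical exact (SQ f).biUnion fun q => (stateLists n).image (q :: ·)

lemma mem_stateLists {n : ℕ} {l : List (List α)} :
    l ∈ stateLists f n ↔ l.length = n ∧ ∀ x ∈ l, x ∈ SQ f := by
  classical
  induction n generalizing l with
  | zero =>
    simp only [stateLists, Finset.mem_singleton]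
    constructor
    · rintro rfl; simp
    · rintro ⟨hl, -⟩; exact List.length_eq_zero_iff.1 hl
  | succ n ih =>
    simp only [stateLists, Finset.mem_biUnion, Finset.mem_image]
    constructor
    · rintro ⟨q, hq, l', hl', rfl⟩
      obtain ⟨hlen, hmem⟩ := ih.1 hl'
      refine ⟨by simp [hlen], ?_⟩
      intro x hx
      rcases List.mem_cons.1 hx with rfl | hx
      · exact hq
      · exact hmem x hx
    · rintro ⟨hlen, hmem⟩
      rcases l with _ | ⟨q, l⟩
      · simp at hlen
      · exact ⟨q, hmem q (by simp), l, ih.2 ⟨by simpa using hlen, fun x hx => hmem x (by simp [hx])⟩, rfl⟩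

/-- main rules -/
def mkMain (r : ContextFreeRule α g.NT) (q : List α) (qs : List (List α)) :
    ContextFreeRule β (NT' α g) :=
  ⟨Sum.inl (q, Symbol.nonterminal r.input, lastSt q qs), liftStr g q r.output qs⟩

/-- The inverse-homomorphism grammar. -/
noncomputable def invGrammar : ContextFreeGrammar β :=
  ⟨NT' α g, Sum.inr true,
    -- A: start rule
    {⟨Sum.inr true, [Symbol.nonterminal (Sum.inl ([], Symbol.nonterminal g.initial, [])),
        Symbol.nonterminal (Sum.inr false)]⟩} ∪
    -- B: junk nil
    {⟨Sum.inr false, []⟩} ∪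
    -- C: junk cons
    ((Finset.univ : Finset β).filter (fun b => f b = []) |>.image fun b =>
      ⟨Sum.inr false, [Symbol.terminal b, Symbol.nonterminal (Sum.inr false)]⟩) ∪
    -- D: consume
    ((SQ f).attach.biUnion fun q =>
      match (q : List α) with
      | [] => ∅
      | a :: q' => {⟨Sum.inl (a :: q', Symbol.terminal a, q'), []⟩}) ∪
    -- E: emit
    (((Finset.univ : Finset β) ×ˢ (Finset.univ : Finset α) ×ˢ SQ f).image fun p =>
      ⟨Sum.inl ([], Symbol.terminal p.2.1, p.2.2),
        [Symbol.terminal p.1, Symbol.nonterminal (Sum.inl (f p.1, Symbol.terminal p.2.1, p.2.2))]⟩) ∪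
    -- F: main
    (g.rules.biUnion fun r => (SQ f).biUnion fun q =>
      (stateLists f r.output.length).image fun qs => mkMain g r q qs)⟩

attribute [reducible] invGrammar

/-! ### Soundness -/

lemma derives_terminal_eq {z : List α} {v : List (Symbol α g.NT)}
    (h : g.Derives (z.map Symbol.terminal) v) : v = z.map Symbol.terminal := by
  rcases Relation.ReflTransGen.cases_head h with rfl | ⟨c, hc, -⟩
  · rfl
  · exfalso
    obtain ⟨r, -, hr⟩ := hc
    obtain ⟨p, q, hu, -⟩ := hr.exists_parts
    have : Symbol.nonterminal r.input ∈ z.map (Symbol.terminal : α → Symbol α g.NT) := by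
      rw [hu]; simp
    obtain ⟨a, -, ha⟩ := List.mem_map.1 this
    cases ha

def Den : Symbol β (NT' α g) → List β → Prop
  | Symbol.terminal b, w => w = [b]
  | Symbol.nonterminal (Sum.inl (q, s, q')), w =>
      ∃ z, g.Derives [s] (z.map Symbol.terminal) ∧ TRun f q z w q'
  | Symbol.nonterminal (Sum.inr false), w => ∀ b ∈ w, f b = []
  | Symbol.nonterminal (Sum.inr true), w =>
      ∃ z, g.Derives [Symbol.nonterminal g.initial] (z.map Symbol.terminal) ∧
        ∃ w₁ w₂, w = w₁ ++ w₂ ∧ TRun f [] z w₁ [] ∧ ∀ b ∈ w₂, f b = []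

inductive DenL : List (Symbol β (NT' α g)) → List β → Prop
  | nil : DenL [] []
  | cons {s : Symbol β (NT' α g)} {w₁ : List β} {l : List (Symbol β (NT' α g))} {w₂ : List β} :
      Den f g s w₁ → DenL l w₂ → DenL (s :: l) (w₁ ++ w₂)

lemma DenL.append_exists {l₁ l₂ : List (Symbol β (NT' α g))} {w : List β}
    (h : DenL f g (l₁ ++ l₂) w) :
    ∃ w₁ w₂, w = w₁ ++ w₂ ∧ DenL f g l₁ w₁ ∧ DenL f g l₂ w₂ := by
  induction l₁ generalizing w with
  | nil => exact ⟨[], w, by simp, DenL.nil, by simpa using h⟩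
  | cons s l₁ ih =>
    rw [List.cons_append] at h
    cases h with
    | cons hs hrest =>
      obtain ⟨w₁, w₂, rfl, h₁, h₂⟩ := ih hrest
      exact ⟨_ ++ w₁, w₂, by simp, DenL.cons hs h₁, h₂⟩

lemma DenL.append {l₁ l₂ : List (Symbol β (NT' α g))} {w₁ w₂ : List β}
    (h₁ : DenL f g l₁ w₁) (h₂ : DenL f g l₂ w₂) : DenL f g (l₁ ++ l₂) (w₁ ++ w₂) := by
  induction h₁ with
  | nil => simpa using h₂
  | cons hs _ ih =>
    rw [List.cons_append, List.append_assoc]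
    exact DenL.cons hs ih

lemma DenL.singleton_iff {s : Symbol β (NT' α g)} {w : List β} :
    DenL f g [s] w ↔ Den f g s w := by
  constructor
  · intro h
    cases h with
    | cons hs hrest => cases hrest; simpa using hs
  · intro h
    simpa using DenL.cons h (DenL.nil)

lemma DenL.map_terminal (w : List β) :
    DenL f g (w.map Symbol.terminal) w := by
  induction w with
  | nil => exact DenL.nil
  | cons b w ih =>
    have : Den f g (Symbol.terminal b) [b] := rfl
    simpa using DenL.cons this ih

lemma DenL.nil_inv {w : List β} (h : DenL f g [] w) : w = [] := by cases h; rfl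

/-- Soundness of the lifted string: recover a derivation and a run. -/
lemma DenL.liftStr_sound (l : List (Symbol α g.NT)) (q : List α) (qs : List (List α))
    (hlen : qs.length = l.length) {w : List β}
    (h : DenL f g (liftStr g q l qs) w) :
    ∃ z, g.Derives l (z.map Symbol.terminal) ∧ TRun f q z w (lastSt q qs) := by
  induction l generalizing q qs w with
  | nil =>
    rw [List.length_nil, List.length_eq_zero_iff] at hlen; subst hlen
    rw [liftStr_nil] at h
    exact ⟨[], by simpa using Relation.ReflTransGen.refl, h.nil_inv f g ▸ TRun.nil q⟩
  | cons s l ih =>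
    rcases qs with _ | ⟨q', qs⟩
    · simp at hlen
    rw [liftStr_cons] at h
    cases h with
    | cons hs hrest =>
      obtain ⟨z₁, hd₁, hr₁⟩ := hs
      obtain ⟨z₂, hd₂, hr₂⟩ := ih q' qs (by simpa using hlen) hrest
      refine ⟨z₁ ++ z₂, ?_, by simpa using hr₁.append f hr₂⟩
      have h1 : g.Derives (s :: l) (z₁.map Symbol.terminal ++ l) := by
        simpa using hd₁.append_right l
      have h2 : g.Derives (z₁.map Symbol.terminal ++ l)
          (z₁.map Symbol.terminal ++ z₂.map Symbol.terminal) := hd₂.append_left _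
      simpa using h1.trans h2

set_option maxHeartbeats 1000000 in
/-- The key preservation step for soundness. -/
lemma DenL.of_produces {u v : List (Symbol β (NT' α g))} {w : List β}
    (huv : (invGrammar f g).Produces u v) (hv : DenL f g v w) : DenL f g u w := by
  obtain ⟨r', hr'mem, hr'⟩ := huv
  obtain ⟨p, t, rfl, rfl⟩ := hr'.exists_parts
  rw [List.append_assoc] at hv ⊢
  obtain ⟨wp, w', rfl, hdp, h'⟩ := hv.append_exists f g
  obtain ⟨wo, wt, rfl, hdo, hdt⟩ := h'.append_exists f g
  refine DenL.append f g hdp (DenL.append f g ((DenL.singleton_iff f g).2 ?_) hdt)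
  -- case analysis on which rule r' is
  have hmem := hr'mem
  simp only [invGrammar, Finset.mem_union, Finset.mem_singleton, Finset.mem_image,
    Finset.mem_filter, Finset.mem_biUnion, Finset.mem_attach, true_and, Finset.mem_univ,
    Finset.mem_product] at hmem
  rcases hmem with ((((hA | hB) | hC) | hD) | hE) | hF
  · -- start rule
    subst hA
    cases hdo with
    | cons h₁ hrest =>
    cases hrest with
    | cons h₂ hrest₂ =>
    have h₃ : _ = [] := hrest₂.nil_inv f g
    subst h₃
    obtain ⟨z, hd, hrun⟩ := h₁
    exact ⟨z, hd, _, _, by simp, hrun, h₂⟩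
  · -- junk nil
    subst hB
    have := hdo.nil_inv f g
    subst this
    intro b hb
    simp at hb
  · -- junk cons
    obtain ⟨b, hfb, rfl⟩ := hC
    cases hdo with
    | cons h₁ hrest =>
    cases hrest with
    | cons h₂ hrest₂ =>
    have h₃ : _ = [] := hrest₂.nil_inv f g
    subst h₃
    have h₁' : _ = [b] := h₁
    subst h₁'
    intro x hx
    simp at hx
    rcases hx with rfl | hx
    · exact hfb
    · exact h₂ x hx
  · -- consume
    obtain ⟨q, hr⟩ := hD
    rcases hq2 : (q : List α) with _ | ⟨a, q'⟩ <;> rw [hq2] at hr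
    · simp at hr
    · simp only [Finset.mem_singleton] at hr
      subst hr
      have := hdo.nil_inv f g
      subst this
      refine ⟨[a], by simp; exact Relation.ReflTransGen.refl, ?_⟩
      simpa using TRun.cons (TStep.base a q') (TRun.nil q')
  · -- emit
    obtain ⟨⟨b, a, q'⟩, -, rfl⟩ := hE
    cases hdo with
    | cons h₁ hrest =>
    cases hrest with
    | cons h₂ hrest₂ =>
    have h₃ : _ = [] := hrest₂.nil_inv f g
    subst h₃
    have h₁' : _ = [b] := h₁
    subst h₁'
    obtain ⟨z, hd, hrun⟩ := h₂
    have hz : z.map (Symbol.terminal : α → Symbol α g.NT)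
        = [a].map Symbol.terminal := by
      exact derives_terminal_eq g (z := [a]) (by simpa using hd)
    have hz' : z = [a] := by
      have : Function.Injective (Symbol.terminal : α → Symbol α g.NT) := by
        intro x y hxy; cases hxy; rfl
      exact List.map_injective_iff.2 this hz
    subst hz'
    cases hrun with
    | cons hs hrr =>
      obtain ⟨hw, hq⟩ := hrr.nil_inv f
      subst hw; subst hq
      refine ⟨[a], by simp; exact Relation.ReflTransGen.refl, ?_⟩
      simpa using TRun.cons (TStep.emit b hs) (TRun.nil _)
  · -- main
    obtain ⟨r, hrmem, q, hq, qs, hqs, rfl⟩ := hF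
    obtain ⟨hlen, -⟩ := (mem_stateLists f).1 hqs
    obtain ⟨z, hd, hrun⟩ := hdo.liftStr_sound f g r.output q qs hlen
    refine ⟨z, ?_, hrun⟩
    exact (Produces.single ⟨r, hrmem, ContextFreeRule.Rewrites.input_output⟩).trans hd

lemma DenL.of_derives {u v : List (Symbol β (NT' α g))} {w : List β}
    (huv : (invGrammar f g).Derives u v) (hv : DenL f g v w) : DenL f g u w := by
  induction huv using Relation.ReflTransGen.head_induction_on with
  | refl => exact hv
  | head hp _ ih => exact DenL.of_produces f g hp (ih)

lemma invGrammar_sound {w : List β} (hw : w ∈ (invGrammar f g).language) :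
    hmap f w ∈ g.language := by
  rw [mem_language_iff] at hw ⊢
  have hden : DenL f g [Symbol.nonterminal (Sum.inr true)] w :=
    DenL.of_derives f g hw (DenL.map_terminal f g w)
  have hden' := (DenL.singleton_iff f g).1 hden
  obtain ⟨z, hd, w₁, w₂, rfl, hrun, hjunk⟩ := hden'
  have hz : hmap f w₁ = z := by simpa using hrun.balance f
  have : hmap f (w₁ ++ w₂) = z := by
    rw [hmap_append, hmap_eq_nil f hjunk, hz, List.append_nil]
  rwa [this]

/-! ### Completeness -/

lemma ruleD_mem {a : α} {q' : List α} (h : a :: q' ∈ SQ f) :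
    (⟨Sum.inl (a :: q', Symbol.terminal a, q'), []⟩ : ContextFreeRule β (NT' α g))
      ∈ (invGrammar f g).rules := by
  simp only [invGrammar, Finset.mem_union]
  refine Or.inl (Or.inl (Or.inr ?_))
  refine Finset.mem_biUnion.2 ⟨⟨a :: q', h⟩, Finset.mem_attach _ _, ?_⟩
  simp

lemma ruleE_mem (b : β) (a : α) {q' : List α} (h : q' ∈ SQ f) :
    (⟨Sum.inl ([], Symbol.terminal a, q'),
      [Symbol.terminal b, Symbol.nonterminal (Sum.inl (f b, Symbol.terminal a, q'))]⟩ :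
        ContextFreeRule β (NT' α g)) ∈ (invGrammar f g).rules := by
  simp only [invGrammar, Finset.mem_union]
  refine Or.inl (Or.inr ?_)
  exact Finset.mem_image.2 ⟨(b, a, q'), by simp [h], rfl⟩

lemma ruleF_mem {r : ContextFreeRule α g.NT} (hr : r ∈ g.rules) {q : List α} (hq : q ∈ SQ f)
    {qs : List (List α)} (hqs : qs ∈ stateLists f r.output.length) :
    mkMain g r q qs ∈ (invGrammar f g).rules := by
  simp only [invGrammar, Finset.mem_union]
  refine Or.inr ?_
  exact Finset.mem_biUnion.2 ⟨r, hr, Finset.mem_biUnion.2 ⟨q, hq, Finset.mem_image.2 ⟨qs, hqs, rfl⟩⟩⟩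

lemma tstep_derives {q : List α} {a : α} {w : List β} {q₁ : List α}
    (h : TStep f q a w q₁) (hq : q ∈ SQ f) :
    (invGrammar f g).Derives [Symbol.nonterminal (Sum.inl (q, Symbol.terminal a, q₁))]
      (w.map Symbol.terminal) := by
  induction h with
  | base a q =>
    exact Produces.single ⟨_, ruleD_mem f g hq, ContextFreeRule.Rewrites.input_output⟩
  | @emit b a w q₁ h ih =>
    have h1 : (invGrammar f g).Produces
        [Symbol.nonterminal (Sum.inl ([], Symbol.terminal a, q₁))]
        [Symbol.terminal b, Symbol.nonterminal (Sum.inl (f b, Symbol.terminal a, q₁))] :=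
      ⟨_, ruleE_mem f g b a (h.mem_SQ f (image_mem_SQ f b)), ContextFreeRule.Rewrites.input_output⟩
    refine h1.trans_derives ?_
    have := (ih (image_mem_SQ f b)).append_left [Symbol.terminal b]
    simpa using this

lemma trun_liftStr_derives {z : List α} {q : List α} {w : List β} {q' : List α}
    (h : TRun f q z w q') (hq : q ∈ SQ f) :
    ∃ qs : List (List α), qs.length = z.length ∧ (∀ x ∈ qs, x ∈ SQ f) ∧ lastSt q qs = q' ∧
      (invGrammar f g).Derives (liftStr g q (z.map Symbol.terminal) qs)
        (w.map Symbol.terminal) := by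
  induction h with
  | nil q => exact ⟨[], rfl, by simp, rfl, by simpa using Relation.ReflTransGen.refl⟩
  | @cons q a w₁ q₁ z w₂ q₂ hs hr ih =>
    obtain ⟨qs, hlen, hmem, hlast, hder⟩ := ih (hs.mem_SQ f hq)
    refine ⟨q₁ :: qs, by simp [hlen], ?_, by simpa using hlast, ?_⟩
    · intro x hx
      rcases List.mem_cons.1 hx with rfl | hx
      · exact hs.mem_SQ f hq
      · exact hmem x hx
    · rw [List.map_cons, liftStr_cons, List.map_append]
      have h1 := (tstep_derives f g hs hq).append_right (liftStr g q₁ (z.map Symbol.terminal) qs)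
      have h2 := hder.append_left (w₁.map Symbol.terminal)
      simpa using (by simpa using h1 : (invGrammar f g).Derives _ _).trans h2

set_option maxHeartbeats 1000000 in
lemma complete_main {s : List (Symbol α g.NT)} {z : List α}
    (hd : g.Derives s (z.map Symbol.terminal)) :
    ∀ {q : List α} {w : List β} {q' : List α}, TRun f q z w q' → q ∈ SQ f →
    ∃ qs : List (List α), qs.length = s.length ∧ (∀ x ∈ qs, x ∈ SQ f) ∧ lastSt q qs = q' ∧
      (invGrammar f g).Derives (liftStr g q s qs) (w.map Symbol.terminal) := by
  induction hd using Relation.ReflTransGen.head_induction_on with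
  | refl => intro q w q' hr hq; simpa using trun_liftStr_derives f g hr hq
  | head hp hdc ih =>
    intro q w q' hr hq
    obtain ⟨r, hrmem, hrw⟩ := hp
    obtain ⟨p, t, hu, hv⟩ := hrw.exists_parts
    subst hu
    subst hv
    obtain ⟨qs, hlen, hmem, hlast, hder⟩ := ih hr hq
    set qsp := qs.take p.length with hqsp
    set qsrest := qs.drop p.length with hqsrest
    set qso := qsrest.take r.output.length with hqso
    set qst := qsrest.drop r.output.length with hqst
    have hlen' : qs.length = p.length + r.output.length + t.length := by
      simp at hlen; omega
    have hqs : qs = (qsp ++ qso) ++ qst := by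
      rw [hqsp, hqso, hqst, hqsrest, List.append_assoc, List.take_append_drop,
        List.take_append_drop]
    have hlenp : qsp.length = p.length := by
      rw [hqsp, List.length_take]; omega
    have hlenrest : qsrest.length = r.output.length + t.length := by
      rw [hqsrest, List.length_drop]; omega
    have hleno : qso.length = r.output.length := by
      rw [hqso, List.length_take]; omega
    have hmemp : ∀ x ∈ qsp, x ∈ SQ f := fun x hx => hmem x (hqs ▸ by simp [hx])
    have hmemo : ∀ x ∈ qso, x ∈ SQ f := fun x hx => hmem x (hqs ▸ by simp [hx])
    have hmemt : ∀ x ∈ qst, x ∈ SQ f := fun x hx => hmem x (hqs ▸ by simp [hx])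
    set qp := lastSt q qsp with hqp
    set qA := lastSt qp qso with hqA
    have hlent : qst.length = t.length := by
      rw [hqst, List.length_drop]; omega
    have hqpmem : qp ∈ SQ f := lastSt_mem f hq hmemp
    have hqAmem : qA ∈ SQ f := lastSt_mem f hqpmem hmemo
    refine ⟨(qsp ++ [qA]) ++ qst, by simp [hlenp, hlent], ?_, ?_, ?_⟩
    · intro x hx
      simp only [List.mem_append, List.mem_singleton] at hx
      rcases hx with (hx | rfl) | hx
      · exact hmemp x hx
      · exact hqAmem
      · exact hmemt x hx
    · rw [lastSt_append, lastSt_append]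
      rw [hqs, lastSt_append, lastSt_append] at hlast
      simpa using hlast
    · -- the derivation
      have hsplit1 : liftStr (β := β) g q ((p ++ [Symbol.nonterminal r.input]) ++ t)
          ((qsp ++ [qA]) ++ qst)
          = (liftStr g q p qsp ++ [Symbol.nonterminal (Sum.inl (qp, Symbol.nonterminal r.input, qA))])
            ++ liftStr g qA t qst := by
        rw [liftStr_append g q _ t _ qst (by simp [hlenp]),
          liftStr_append g q p _ qsp [qA] hlenp]
        simp [lastSt_append, hqp]
      have hsplit2 : liftStr (β := β) g q ((p ++ r.output) ++ t) ((qsp ++ qso) ++ qst)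
          = (liftStr g q p qsp ++ liftStr g qp r.output qso) ++ liftStr g qA t qst := by
        rw [liftStr_append g q _ t _ qst (by simp [hlenp, hleno]),
          liftStr_append g q p _ qsp qso hlenp]
        simp [lastSt_append, hqA, hqp]
      have hstep : (invGrammar f g).Produces
          (liftStr g q ((p ++ [Symbol.nonterminal r.input]) ++ t) ((qsp ++ [qA]) ++ qst))
          (liftStr g q ((p ++ r.output) ++ t) ((qsp ++ qso) ++ qst)) := by
        rw [hsplit1, hsplit2]
        refine ⟨mkMain g r qp qso,
          ruleF_mem f g hrmem hqpmem ((mem_stateLists f).2 ⟨hleno, hmemo⟩), ?_⟩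
        have := ContextFreeRule.rewrites_of_exists_parts (mkMain g r qp qso)
          (liftStr (β := β) g q p qsp) (liftStr (β := β) g qA t qst)
        simp only [mkMain] at this
        convert this using 2 <;> rfl
      rw [← hqs] at hstep
      exact hstep.trans_derives (hqs ▸ hder)

lemma ruleA_mem :
    (⟨Sum.inr true, [Symbol.nonterminal (Sum.inl ([], Symbol.nonterminal g.initial, [])),
        Symbol.nonterminal (Sum.inr false)]⟩ : ContextFreeRule β (NT' α g))
      ∈ (invGrammar f g).rules := by
  simp only [invGrammar, Finset.mem_union]
  exact Or.inl (Or.inl (Or.inl (Or.inl (Or.inl (Finset.mem_singleton_self _)))))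

lemma ruleB_mem :
    (⟨Sum.inr false, []⟩ : ContextFreeRule β (NT' α g)) ∈ (invGrammar f g).rules := by
  simp only [invGrammar, Finset.mem_union]
  exact Or.inl (Or.inl (Or.inl (Or.inl (Or.inr (Finset.mem_singleton_self _)))))

lemma ruleC_mem {b : β} (hb : f b = []) :
    (⟨Sum.inr false, [Symbol.terminal b, Symbol.nonterminal (Sum.inr false)]⟩ :
      ContextFreeRule β (NT' α g)) ∈ (invGrammar f g).rules := by
  simp only [invGrammar, Finset.mem_union]
  refine Or.inl (Or.inl (Or.inl (Or.inr ?_)))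
  exact Finset.mem_image.2 ⟨b, by simp [hb], rfl⟩

lemma junk_derives {w : List β} (hw : ∀ b ∈ w, f b = []) :
    (invGrammar f g).Derives [Symbol.nonterminal (Sum.inr false)] (w.map Symbol.terminal) := by
  induction w with
  | nil =>
    exact Produces.single ⟨_, ruleB_mem f g, ContextFreeRule.Rewrites.input_output⟩
  | cons b w ih =>
    have h1 : (invGrammar f g).Produces [Symbol.nonterminal (Sum.inr false)]
        [Symbol.terminal b, Symbol.nonterminal (Sum.inr false)] :=
      ⟨_, ruleC_mem f g (hw b (by simp)), ContextFreeRule.Rewrites.input_output⟩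
    refine h1.trans_derives ?_
    have := (ih fun x hx => hw x (by simp [hx])).append_left [Symbol.terminal b]
    simpa using this

lemma invGrammar_complete {w : List β} (hw : hmap f w ∈ g.language) :
    w ∈ (invGrammar f g).language := by
  rw [mem_language_iff] at hw ⊢
  obtain ⟨w₁, w₂, rfl, hjunk, hrun⟩ := exists_run f w
  obtain ⟨qs, hlen, hmem, hlast, hder⟩ :=
    complete_main f g (s := [Symbol.nonterminal g.initial]) hw hrun (nil_mem_SQ f)
  rcases qs with _ | ⟨q₁, qs⟩
  · simp at hlen
  rcases qs with _ | ⟨q₂, qs⟩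
  swap
  · simp at hlen
  have hq₁ : q₁ = [] := by simpa using hlast
  subst hq₁
  rw [liftStr_cons] at hder
  have hstart : (invGrammar f g).Produces [Symbol.nonterminal (Sum.inr true)]
      [Symbol.nonterminal (Sum.inl ([], Symbol.nonterminal g.initial, [])),
        Symbol.nonterminal (Sum.inr false)] :=
    ⟨_, ruleA_mem f g, ContextFreeRule.Rewrites.input_output⟩
  have h2 := (by simpa using hder : (invGrammar f g).Derives
      [Symbol.nonterminal (Sum.inl ([], Symbol.nonterminal g.initial, []))]
      (w₁.map Symbol.terminal)).append_right [Symbol.nonterminal (Sum.inr false)]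
  have h3 := (junk_derives f g hjunk).append_left (w₁.map Symbol.terminal)
  have := hstart.trans_derives ((by simpa using h2 : (invGrammar f g).Derives _ _).trans h3)
  simpa using this

lemma invGrammar_language :
    (invGrammar f g).language = {w : List β | hmap f w ∈ g.language} := by
  ext w
  exact ⟨fun h => invGrammar_sound f g h, fun h => invGrammar_complete f g h⟩

end Grammar

/-- **Closure of context-free languages under inverse homomorphisms.** -/
theorem isContextFree_invHom {α β : Type} [Fintype α] [Fintype β] (f : β → List α)
    {L : Language α} (hL : L.IsContextFree) :
    Language.IsContextFree {w : List β | hmap f w ∈ L} := by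
  classical
  obtain ⟨g, rfl⟩ := hL
  exact ⟨invGrammar f g, invGrammar_language f g⟩

end InvHomCF

/-- If `L(G,K,ψ)` is context-free and `H ≤ G` is a finitely generated
subgroup with semigroup presentation `ψ' : β → H`, then `L(H, K ⊓ H, ψ')` is context-free. -/
theorem contextFree_restrict_to_subgroup
    {G : Type} [Group G] [Group.FG G] (K : Subgroup G)
    {α : Type} [Fintype α] (ψ : α → G)
    (hψ : ∀ g : G, ∃ w : List α, (w.map ψ).prod = g)
    (hcf : Language.IsContextFree {w : List α | (w.map ψ).prod ∈ K})
    (H : Subgroup G) (hH : H.FG)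
    {β : Type} [Fintype β] (ψ' : β → H)
    (hψ' : ∀ h : H, ∃ w : List β, (w.map ψ').prod = h) :
    Language.IsContextFree {w : List β | ((w.map ψ').prod : G) ∈ K ⊓ H} := by
  classical
  choose fw hfw using hψ
  set f : β → List α := fun b => fw ((ψ' b : G)) with hf
  have key : ∀ w : List β, ((InvHomCF.hmap f w).map ψ).prod = ((w.map ψ').prod : G) := by
    intro w
    induction w with
    | nil => simp [InvHomCF.hmap]
    | cons b w ih =>
      rw [InvHomCF.hmap_cons, List.map_append, List.prod_append, List.map_cons,
        List.prod_cons, ih, hf]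
      push_cast
      rw [hfw]
  have hset : {w : List β | ((w.map ψ').prod : G) ∈ K ⊓ H}
      = {w : List β | InvHomCF.hmap f w ∈ {w : List α | (w.map ψ).prod ∈ K}} := by
    ext w
    simp only [Set.mem_setOf_eq, key, Subgroup.mem_inf, SetLike.coe_mem, and_true]
  rw [hset]
  exact InvHomCF.isContextFree_invHom f hcf
end

section
/- Let G be a finitely generated group and K a subgroup of G. If for some finite alphabet Σ and semigroup presentation ψ : Σ → G the word problem L(G,K,ψ) is a context-free language, then for every finite alphabet Σ' and every semigroup presentation ψ' : Σ' → G the word problem L(G,K,ψ') is also context-free. Hence being context-free is a property of the pair (G,K) that does not depend on the choice of alphabet Σ and map ψ : Σ → G whose image generates G as a semigroup. -/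
namespace CFIndep

open ContextFreeGrammar

/-- Concatenation of derivations. -/
lemma derives_append {T : Type} {g : ContextFreeGrammar.{0} T}
    {u₁ u₂ v₁ v₂ : List (Symbol T g.NT)}
    (h₁ : g.Derives u₁ v₁) (h₂ : g.Derives u₂ v₂) : g.Derives (u₁ ++ u₂) (v₁ ++ v₂) :=
  (h₁.append_right u₂).trans (h₂.append_left v₁)

/-- Generic "string satisfaction": a word `v` splits into blocks matching the symbols. -/
def SStr {S W : Type} (P : S → List W → Prop) : List S → List W → Prop
  | [], v => v = []
  | x :: xs, v => ∃ v₁ v₂, v = v₁ ++ v₂ ∧ P x v₁ ∧ SStr P xs v₂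

lemma SStr_append {S W : Type} {P : S → List W → Prop} :
    ∀ {u₁ u₂ : List S} {v : List W},
      SStr P (u₁ ++ u₂) v ↔ ∃ v₁ v₂, v = v₁ ++ v₂ ∧ SStr P u₁ v₁ ∧ SStr P u₂ v₂ := by
  intro u₁
  induction u₁ with
  | nil =>
    intro u₂ v
    constructor
    · intro h; exact ⟨[], v, rfl, rfl, h⟩
    · rintro ⟨v₁, v₂, rfl, h₁, h₂⟩
      cases h₁; simpa using h₂
  | cons x xs ih =>
    intro u₂ v
    constructor
    · rintro ⟨v₁, v₂, rfl, hx, hrest⟩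
      rcases ih.mp hrest with ⟨w₁, w₂, rfl, hw₁, hw₂⟩
      exact ⟨v₁ ++ w₁, w₂, by simp, ⟨v₁, w₁, rfl, hx, hw₁⟩, hw₂⟩
    · rintro ⟨v₁, v₂, rfl, ⟨w₁, w₂, rfl, hx, hw⟩, h₂⟩
      exact ⟨w₁, w₂ ++ v₂, by simp, hx, ih.mpr ⟨w₂, v₂, rfl, hw, h₂⟩⟩

lemma SStr_singleton {S W : Type} {P : S → List W → Prop} {x : S} {v : List W} :
    SStr P [x] v ↔ P x v := by
  constructor
  · rintro ⟨v₁, v₂, rfl, hx, hv₂⟩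
    cases hv₂; simpa using hx
  · intro h; exact ⟨v, [], by simp, h, rfl⟩

/-! ### Forward homomorphism (bind) image -/

section BindImage

variable {γ β : Type} (h : ContextFreeGrammar.{0} γ) (o : γ → List β)

/-- Map a symbol over `γ` to a string of symbols over `β`. -/
def mapSymB : Symbol γ h.NT → List (Symbol β h.NT)
  | .terminal t => (o t).map .terminal
  | .nonterminal n => [.nonterminal n]

/-- Map a symbol string over `γ` to one over `β`. -/
def phiB (s : List (Symbol γ h.NT)) : List (Symbol β h.NT) := s.flatMap (mapSymB h o)

lemma phiB_append (s₁ s₂ : List (Symbol γ h.NT)) :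
    phiB h o (s₁ ++ s₂) = phiB h o s₁ ++ phiB h o s₂ := by
  simp [phiB]

open Classical in
/-- The grammar for the image of `h.language` under the monoid hom induced by `o`. -/
noncomputable def gB : ContextFreeGrammar.{0} β :=
  ⟨h.NT, h.initial, h.rules.image fun r => ⟨r.input, phiB h o r.output⟩⟩

lemma gB_produces {u v : List (Symbol γ h.NT)} (huv : h.Produces u v) :
    (gB h o).Produces (phiB h o u) (phiB h o v) := by
  obtain ⟨r, hr, hrw⟩ := huv
  rcases hrw.exists_parts with ⟨p, q, rfl, rfl⟩
  classical
  refine ⟨⟨r.input, phiB h o r.output⟩, Finset.mem_image_of_mem _ hr, ?_⟩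
  rw [phiB_append, phiB_append, phiB_append, phiB_append]
  have h1 : phiB h o [Symbol.nonterminal r.input] = [Symbol.nonterminal r.input] := by
    simp [phiB, mapSymB]
  rw [h1]
  exact ContextFreeRule.rewrites_of_exists_parts _ (phiB h o p) (phiB h o q)

lemma gB_derives {u v : List (Symbol γ h.NT)} (huv : h.Derives u v) :
    (gB h o).Derives (phiB h o u) (phiB h o v) := by
  induction huv with
  | refl => rfl
  | tail _ last ih => exact ih.trans_produces (gB_produces h o last)

/-- Splitting a flatMap at a distinguished element of the target. -/
lemma flatMap_eq_append_singleton_append {S W : Type} {f : S → List W} {l : List S}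
    {p q : List W} {x : W} (hx : l.flatMap f = p ++ [x] ++ q) :
    ∃ (l₁ : List S) (a : S) (l₂ : List S) (p' q' : List W),
      l = l₁ ++ a :: l₂ ∧ f a = p' ++ [x] ++ q' ∧
      p = l₁.flatMap f ++ p' ∧ q = q' ++ l₂.flatMap f := by
  induction l generalizing p with
  | nil => simp at hx
  | cons a l ih =>
    rw [List.flatMap_cons, List.append_assoc] at hx
    rcases List.append_eq_append_iff.mp hx with ⟨a', ha1, ha2⟩ | ⟨c', hc1, hc2⟩
    · -- p = f a ++ a' and l.flatMap f = a' ++ ([x] ++ q)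
      rcases ih (by rw [ha2, List.append_assoc]) with ⟨l₁, b, l₂, p', q', h1, h2, h3, h4⟩
      exact ⟨a :: l₁, b, l₂, p', q', by simp [h1], h2, by simp [ha1, h3], h4⟩
    · -- f a = p ++ c' and [x] ++ q = c' ++ l.flatMap f
      cases c' with
      | nil =>
        simp only [List.nil_append] at hc2
        rcases ih (p := []) (by simpa using hc2.symm) with
          ⟨l₁, b, l₂, p', q', h1, h2, h3, h4⟩
        have hp' : p' = [] := by
          rcases List.append_eq_nil_iff.mp h3.symm with ⟨-, h⟩; exact h
        have hl₁ : l₁.flatMap f = [] := by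
          rcases List.append_eq_nil_iff.mp h3.symm with ⟨h, -⟩; exact h
        refine ⟨a :: l₁, b, l₂, p', q', by simp [h1], h2, ?_, h4⟩
        have hfa : f a = p := by simpa using hc1
        simp [List.flatMap_cons, hl₁, hp', hfa]
      | cons y c'' =>
        have hy : y = x ∧ q = c'' ++ l.flatMap f := by
          have := hc2
          simp only [List.cons_append, List.singleton_append] at this
          exact ⟨(List.cons_eq_cons.mp this).1.symm, (List.cons_eq_cons.mp this).2⟩
        refine ⟨[], a, l, p, c'', by simp, ?_, by simp, hy.2⟩
        rw [hc1, hy.1]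
        simp

lemma gB_produces_rev {u : List (Symbol γ h.NT)} {s' : List (Symbol β h.NT)}
    (hp : (gB h o).Produces (phiB h o u) s') :
    ∃ u', h.Produces u u' ∧ s' = phiB h o u' := by
  classical
  obtain ⟨r', hr', hrw⟩ := hp
  obtain ⟨r, hr, rfl⟩ := Finset.mem_image.mp hr'
  rcases hrw.exists_parts with ⟨p, q, hu, rfl⟩
  simp only [phiB] at hu
  rcases flatMap_eq_append_singleton_append hu with
    ⟨l₁, a, l₂, p', q', rfl, h2, rfl, rfl⟩
  cases a with
  | terminal t =>
    exfalso
    have : (Symbol.nonterminal r.input : Symbol β h.NT) ∈ (o t).map Symbol.terminal := by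
      rw [show ((o t).map Symbol.terminal : List (Symbol β h.NT))
            = mapSymB h o (.terminal t) from rfl, h2]
      exact List.mem_append_left _ (List.mem_append_right _ (List.mem_singleton_self _))
    simp at this
  | nonterminal n =>
    have h2' : ([Symbol.nonterminal n] : List (Symbol β h.NT))
        = p' ++ [Symbol.nonterminal r.input] ++ q' := by
      exact h2
    rcases p' with _ | ⟨y, p'⟩
    · rcases q' with _ | ⟨z, q'⟩
      · have hn : n = r.input := by simpa using h2'
        subst hn
        refine ⟨l₁ ++ r.output ++ l₂, ⟨r, hr, ?_⟩, ?_⟩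
        · simpa using ContextFreeRule.rewrites_of_exists_parts r l₁ l₂
        · simp [phiB]
          exact List.append_assoc _ _ _
      · exfalso
        have := congrArg List.length h2'
        simp at this
    · exfalso
      have := congrArg List.length h2'
      simp at this

lemma gB_derives_rev {u₀ : List (Symbol γ h.NT)} {s : List (Symbol β h.NT)}
    (hd : (gB h o).Derives (phiB h o u₀) s) :
    ∃ u, h.Derives u₀ u ∧ s = phiB h o u := by
  induction hd with
  | refl => exact ⟨u₀, Derives.refl _, rfl⟩
  | tail _ last ih =>
    rcases ih with ⟨u, hu, rfl⟩
    rcases gB_produces_rev h o last with ⟨u', hu', rfl⟩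
    exact ⟨u', hu.trans_produces hu', rfl⟩

lemma phiB_terminal_eq {u : List (Symbol γ h.NT)} {w : List β}
    (hw : phiB h o u = w.map Symbol.terminal) :
    ∃ v : List γ, u = v.map Symbol.terminal ∧ w = v.flatMap o := by
  induction u generalizing w with
  | nil =>
    have : w = [] := by
      cases w with
      | nil => rfl
      | cons _ _ => exact absurd hw (by simp [phiB])
    exact ⟨[], rfl, by simp [this]⟩
  | cons x u ih =>
    cases x with
    | nonterminal n =>
      exfalso
      have : (Symbol.nonterminal n : Symbol β h.NT) ∈ w.map Symbol.terminal := by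
        rw [← hw]; simp [phiB, mapSymB]
      simp at this
    | terminal t =>
      have hw' : (o t).map Symbol.terminal ++ phiB h o u = w.map Symbol.terminal := by
        simpa [phiB, mapSymB] using hw
      rcases List.map_eq_append_iff.mp hw'.symm with ⟨w₁, w₂, rfl, hw₁, hw₂⟩
      have hw₁' : w₁ = o t :=
        List.map_injective_iff.mpr (fun a b hab => Symbol.terminal.inj hab) hw₁
      rcases ih hw₂.symm with ⟨v, rfl, rfl⟩
      exact ⟨t :: v, rfl, by simp [hw₁']⟩

/-- The language of `gB` is the image of `h.language` under the hom induced by `o`. -/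
lemma gB_language : (gB h o).language = {x | ∃ v ∈ h.language, x = v.flatMap o} := by
  ext w
  constructor
  · intro hw
    have hd : (gB h o).Derives (phiB h o [Symbol.nonterminal h.initial])
        (w.map Symbol.terminal) := by
      exact hw
    rcases gB_derives_rev h o hd with ⟨u, hu, hs⟩
    rcases phiB_terminal_eq h o hs.symm with ⟨v, rfl, rfl⟩
    exact ⟨v, hu, rfl⟩
  · rintro ⟨v, hv, rfl⟩
    have hd := gB_derives h o hv
    have h1 : phiB h o [Symbol.nonterminal h.initial] = [Symbol.nonterminal (gB h o).initial] := by
      simp [phiB, mapSymB]; rfl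
    have h2 : phiB h o (v.map Symbol.terminal) = (v.flatMap o).map Symbol.terminal := by
      simp [phiB, mapSymB, List.flatMap_map, List.map_flatMap]
    rw [h1, h2] at hd
    exact hd

end BindImage


/-! ### Product of a grammar with a deterministic automaton, with letter relabeling -/

section Product

variable {α γ Q : Type}

/-- Nonterminals of the product grammar. -/
abbrev PNT (Q N α : Type) : Type := (Q × N × Q) ⊕ (Q × α × Q) ⊕ Unit

/-- Lift a symbol to the product grammar, with entry and exit states. -/
def liftSym {N : Type} : Symbol α N → Q → Q → Symbol γ (PNT Q N α)
  | .terminal a, q, q' => .nonterminal (.inr (.inl (q, a, q')))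
  | .nonterminal n, q, q' => .nonterminal (.inl (q, n, q'))

/-- Last state of a chain starting at `q`. -/
def chainLast : Q → List Q → Q
  | q, [] => q
  | _, p :: ps => chainLast p ps

lemma chainLast_append (q : Q) (l₁ l₂ : List Q) :
    chainLast q (l₁ ++ l₂) = chainLast (chainLast q l₁) l₂ := by
  induction l₁ generalizing q with
  | nil => rfl
  | cons p ps ih => simp [chainLast, ih]

/-- Lift a string of symbols, interleaving the given states. -/
def liftOut {N : Type} : Q → List (Symbol α N) → List Q → List (Symbol γ (PNT Q N α))
  | _, [], _ => []
  | _, _ :: _, [] => []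
  | q, x :: xs, p :: ps => liftSym x q p :: liftOut p xs ps

lemma liftOut_length {N : Type} :
    ∀ (q : Q) (xs : List (Symbol α N)) (ps : List Q), ps.length = xs.length →
      (liftOut (γ := γ) q xs ps).length = xs.length
  | _, [], _, _ => rfl
  | _, _ :: _, [], h => by simp at h
  | q, x :: xs, p :: ps, h => by
      simp only [liftOut, List.length_cons]
      rw [liftOut_length p xs ps (by simpa using h)]

lemma liftOut_append {N : Type} (ys : List (Symbol α N)) (rs : List Q) :
    ∀ (xs : List (Symbol α N)) (ps : List Q) (q : Q), ps.length = xs.length →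
    liftOut (γ := γ) q (xs ++ ys) (ps ++ rs)
      = liftOut q xs ps ++ liftOut (chainLast q ps) ys rs := by
  intro xs
  induction xs with
  | nil =>
    intro ps q hlen
    rw [List.length_nil, List.length_eq_zero_iff] at hlen
    subst hlen
    rfl
  | cons x xs ih =>
    intro ps q hlen
    cases ps with
    | nil => simp at hlen
    | cons p ps =>
      simp only [List.cons_append, liftOut, chainLast]
      exact congrArg (liftSym x q p :: ·) (ih ps p (by simpa using hlen))

variable [Fintype Q] [Fintype γ]

open Classical in
/-- The product grammar: generates words `v` over `γ` whose relabeling `v.map σ` is in the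
language of `g` and whose run in the automaton from `q₀` ends in `F`. -/
noncomputable def gP (g : ContextFreeGrammar.{0} α)
    (step : Q → γ → Q) (q₀ : Q) (F : Finset Q) (σ : γ → α) : ContextFreeGrammar.{0} γ :=
  ⟨PNT Q g.NT α, .inr (.inr ()),
    (F.image fun qf =>
        ⟨.inr (.inr ()), [.nonterminal (.inl (q₀, g.initial, qf))]⟩)
    ∪ (g.rules.biUnion fun r =>
        (Finset.univ : Finset (Q × (Fin r.output.length → Q))).image fun p =>
          ⟨.inl (p.1, r.input, chainLast p.1 (List.ofFn p.2)),
            liftOut p.1 r.output (List.ofFn p.2)⟩)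
    ∪ ((Finset.univ : Finset (Q × γ)).image fun p =>
        ⟨.inr (.inl (p.1, σ p.2, step p.1 p.2)), [.terminal p.2]⟩)⟩

variable (g : ContextFreeGrammar.{0} α) (step : Q → γ → Q) (q₀ : Q) (F : Finset Q) (σ : γ → α)

lemma mem_gP_rules {r' : ContextFreeRule γ (PNT Q g.NT α)} :
    r' ∈ (gP g step q₀ F σ).rules ↔
      (∃ qf ∈ F, r' = ⟨.inr (.inr ()), [.nonterminal (.inl (q₀, g.initial, qf))]⟩)
      ∨ (∃ r ∈ g.rules, ∃ (q : Q) (qs : List Q), qs.length = r.output.length ∧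
          r' = ⟨.inl (q, r.input, chainLast q qs), liftOut q r.output qs⟩)
      ∨ (∃ (q : Q) (t : γ), r' = ⟨.inr (.inl (q, σ t, step q t)), [.terminal t]⟩) := by
  classical
  constructor
  · intro hr'
    unfold gP at hr'
    simp only [Finset.mem_union, Finset.mem_image, Finset.mem_biUnion,
      Finset.mem_univ, true_and] at hr'
    rcases hr' with (⟨qf, hqf, rfl⟩ | ⟨r, hr, ⟨q, f⟩, rfl⟩) | ⟨⟨q, t⟩, rfl⟩
    · exact Or.inl ⟨qf, hqf, rfl⟩
    · exact Or.inr (Or.inl ⟨r, hr, q, List.ofFn f, by simp, rfl⟩)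
    · exact Or.inr (Or.inr ⟨q, t, rfl⟩)
  · intro hr'
    unfold gP
    simp only [Finset.mem_union, Finset.mem_image, Finset.mem_biUnion,
      Finset.mem_univ, true_and]
    rcases hr' with ⟨qf, hqf, rfl⟩ | ⟨r, hr, q, qs, hlen, rfl⟩ | ⟨q, t, rfl⟩
    · exact Or.inl (Or.inl ⟨qf, hqf, rfl⟩)
    · refine Or.inl (Or.inr ⟨r, hr, ⟨q, fun i => qs.get (Fin.cast hlen.symm i)⟩, ?_⟩)
      have hofn : List.ofFn (fun i => qs.get (Fin.cast hlen.symm i)) = qs := by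
        apply List.ext_getElem
        · simp [hlen]
        · intro i h1 h2
          simp [List.getElem_ofFn]
      rw [hofn]
    · exact Or.inr ⟨⟨q, t⟩, rfl⟩

/-- Semantics of nonterminals of the product grammar. -/
def satP : PNT Q g.NT α → List γ → Prop
  | .inl (q, n, q'), v =>
      g.Derives [.nonterminal n] (v.map fun t => .terminal (σ t)) ∧ v.foldl step q = q'
  | .inr (.inl (q, a, q')), v => ∃ t, v = [t] ∧ σ t = a ∧ step q t = q'
  | .inr (.inr _), v =>
      g.Derives [.nonterminal g.initial] (v.map fun t => .terminal (σ t)) ∧ v.foldl step q₀ ∈ F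

/-- Semantics of symbols of the product grammar. -/
def satSymP : Symbol γ (PNT Q g.NT α) → List γ → Prop
  | .terminal t, v => v = [t]
  | .nonterminal n', v => satP g step q₀ F σ n' v

lemma liftSound :
    ∀ (xs : List (Symbol α g.NT)) (qs : List Q) (q : Q) (v : List γ),
      qs.length = xs.length →
      SStr (satSymP g step q₀ F σ) (liftOut q xs qs) v →
      g.Derives xs (v.map fun t => Symbol.terminal (σ t)) ∧ v.foldl step q = chainLast q qs := by
  intro xs
  induction xs with
  | nil =>
    intro qs q v hlen hv
    rw [List.length_nil, List.length_eq_zero_iff] at hlen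
    subst hlen
    have : v = [] := hv
    subst this
    exact ⟨Derives.refl _, rfl⟩
  | cons x xs ih =>
    intro qs q v hlen hv
    cases qs with
    | nil => simp at hlen
    | cons p ps =>
      obtain ⟨v₁, v₂, rfl, hx, hrest⟩ := hv
      obtain ⟨hd2, hf2⟩ := ih ps p v₂ (by simpa using hlen) hrest
      have hx' : g.Derives [x] (v₁.map fun t => Symbol.terminal (σ t)) ∧ v₁.foldl step q = p := by
        cases x with
        | terminal a =>
          obtain ⟨t, rfl, hσ, hstep⟩ := hx
          exact ⟨by rw [show ([t].map fun t => Symbol.terminal (σ t))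
              = [Symbol.terminal a] by simp [hσ]], by simpa using hstep⟩
        | nonterminal n => exact hx
      constructor
      · rw [List.map_append]
        exact derives_append (g := g) (u₁ := [x]) (u₂ := xs) hx'.1 hd2
      · rw [List.foldl_append, hx'.2, hf2]
        rfl

lemma ruleSound {r' : ContextFreeRule γ (PNT Q g.NT α)}
    (hr' : r' ∈ (gP g step q₀ F σ).rules) {v : List γ}
    (hv : SStr (satSymP g step q₀ F σ) r'.output v) :
    satP g step q₀ F σ r'.input v := by
  rcases (mem_gP_rules g step q₀ F σ).mp hr' with
    ⟨qf, hqf, rfl⟩ | ⟨r, hr, q, qs, hlen, rfl⟩ | ⟨q, t, rfl⟩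
  · have hv' := SStr_singleton.mp hv
    obtain ⟨hd, hf⟩ := hv'
    exact ⟨hd, hf ▸ hqf⟩
  · obtain ⟨hd, hf⟩ := liftSound g step q₀ F σ r.output qs q v hlen hv
    refine ⟨?_, hf⟩
    exact (Produces.single ⟨r, hr, ContextFreeRule.Rewrites.input_output⟩).trans hd
  · have hv' := SStr_singleton.mp hv
    subst hv'
    exact ⟨t, rfl, rfl, rfl⟩

lemma SStr_map_terminal (v : List γ) :
    SStr (satSymP g step q₀ F σ) (v.map Symbol.terminal) v := by
  induction v with
  | nil => rfl
  | cons t v ih => exact ⟨[t], v, rfl, rfl, ih⟩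

lemma soundP {u : List (Symbol γ (PNT Q g.NT α))} {v : List γ}
    (h : (gP g step q₀ F σ).Derives u (v.map Symbol.terminal)) :
    SStr (satSymP g step q₀ F σ) u v := by
  induction h using Relation.ReflTransGen.head_induction_on with
  | refl => exact SStr_map_terminal g step q₀ F σ v
  | head hp _ ih =>
    obtain ⟨r', hr', hrw⟩ := hp
    rcases hrw.exists_parts with ⟨p, q, rfl, rfl⟩
    rcases SStr_append.mp ih with ⟨v₁₂, v₃, rfl, h12, hv₃⟩
    rcases SStr_append.mp h12 with ⟨v₁, v₂, rfl, hv₁, hv₂⟩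
    refine SStr_append.mpr ⟨v₁ ++ v₂, v₃, rfl, ?_, hv₃⟩
    refine SStr_append.mpr ⟨v₁, v₂, rfl, hv₁, ?_⟩
    exact SStr_singleton.mpr (ruleSound g step q₀ F σ hr' hv₂)

/-- The states visited along a word. -/
def stateList (step : Q → γ → Q) : Q → List γ → List Q
  | _, [] => []
  | q, t :: v => step q t :: stateList step (step q t) v

lemma stateList_length (q : Q) (v : List γ) : (stateList step q v).length = v.length := by
  induction v generalizing q with
  | nil => rfl
  | cons t v ih => simp [stateList, ih]

lemma chainLast_stateList (q : Q) (v : List γ) :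
    chainLast q (stateList step q v) = v.foldl step q := by
  induction v generalizing q with
  | nil => rfl
  | cons t v ih => simp [stateList, chainLast, List.foldl_cons, ih]

lemma baseDerives (v : List γ) (q : Q) :
    (gP g step q₀ F σ).Derives
      (liftOut q (v.map fun t => Symbol.terminal (σ t)) (stateList step q v))
      (v.map Symbol.terminal) := by
  induction v generalizing q with
  | nil => exact Derives.refl _
  | cons t v ih =>
    simp only [List.map_cons, stateList, liftOut, liftSym]
    have hrule : (⟨.inr (.inl (q, σ t, step q t)), [.terminal t]⟩ :
        ContextFreeRule γ (PNT Q g.NT α)) ∈ (gP g step q₀ F σ).rules :=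
      (mem_gP_rules g step q₀ F σ).mpr (Or.inr (Or.inr ⟨q, t, rfl⟩))
    have h1 : (gP g step q₀ F σ).Derives
        [Symbol.nonterminal (.inr (.inl (q, σ t, step q t)))] [Symbol.terminal t] :=
      Produces.single ⟨_, hrule, ContextFreeRule.Rewrites.input_output⟩
    exact derives_append (u₁ := [_]) h1 (ih (step q t))

lemma keyC {us w : List (Symbol α g.NT)} (h : g.Derives us w) :
    ∀ (q : Q) (v : List γ), w = v.map (fun t => Symbol.terminal (σ t)) →
      ∃ qs : List Q, qs.length = us.length ∧ chainLast q qs = v.foldl step q ∧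
        (gP g step q₀ F σ).Derives (liftOut q us qs) (v.map Symbol.terminal) := by
  induction h using Relation.ReflTransGen.head_induction_on with
  | refl =>
    intro q v hw
    subst hw
    exact ⟨stateList step q v, by simp [stateList_length],
      chainLast_stateList step q v, baseDerives g step q₀ F σ v q⟩
  | head hp _ ih =>
    intro q v hw
    obtain ⟨r, hr, hrw⟩ := hp
    rcases hrw.exists_parts with ⟨p, qq, rfl, rfl⟩
    obtain ⟨qs₁, hlen, hcl, hder⟩ := ih q v hw
    set A := qs₁.take p.length with hA
    set B := (qs₁.drop p.length).take r.output.length with hB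
    set C := (qs₁.drop p.length).drop r.output.length with hC
    have hqs₁ : qs₁ = A ++ B ++ C := by
      rw [hA, hB, hC, List.append_assoc, List.take_append_drop, List.take_append_drop]
    have hlenA : A.length = p.length := by
      rw [hA, List.length_take]
      simp only [List.length_append] at hlen
      omega
    have hlenB : B.length = r.output.length := by
      rw [hB, List.length_take, List.length_drop]
      simp only [List.length_append, List.length_cons] at hlen
      omega
    set qA := chainLast q A with hqA
    set qB := chainLast qA B with hqB
    refine ⟨A ++ [qB] ++ C, ?_, ?_, ?_⟩
    · simp only [List.length_append, List.length_cons, List.length_nil, hlenA]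
      simp only [List.length_append, List.length_cons] at hlen
      rw [hqs₁] at hlen
      simp only [List.length_append, hlenA, hlenB] at hlen
      omega
    · rw [← hcl, hqs₁]
      rw [chainLast_append, chainLast_append, chainLast_append, chainLast_append]
      rfl
    · have hsplit1 : liftOut (γ := γ) q (p ++ [Symbol.nonterminal r.input] ++ qq) (A ++ [qB] ++ C)
          = liftOut q p A ++ [Symbol.nonterminal (.inl (qA, r.input, qB))] ++ liftOut qB qq C := by
        rw [liftOut_append _ _ (p ++ [Symbol.nonterminal r.input]) (A ++ [qB]) q
          (by simp [hlenA]), liftOut_append _ _ p A q hlenA]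
        simp [liftOut, liftSym, chainLast_append, chainLast]
        rfl
      have hsplit2 : liftOut (γ := γ) q (p ++ r.output ++ qq) (A ++ B ++ C)
          = liftOut q p A ++ liftOut qA r.output B ++ liftOut qB qq C := by
        rw [liftOut_append _ _ (p ++ r.output) (A ++ B) q (by simp [hlenA, hlenB]),
          liftOut_append _ _ p A q hlenA]
        simp [chainLast_append]
        rfl
      have hrule : (⟨.inl (qA, r.input, qB), liftOut qA r.output B⟩ :
          ContextFreeRule γ (PNT Q g.NT α)) ∈ (gP g step q₀ F σ).rules := by
        refine (mem_gP_rules g step q₀ F σ).mpr (Or.inr (Or.inl ⟨r, hr, qA, B, hlenB, ?_⟩))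
        rw [hqB]
      have hprod : (gP g step q₀ F σ).Produces
          (liftOut q (p ++ [Symbol.nonterminal r.input] ++ qq) (A ++ [qB] ++ C))
          (liftOut q (p ++ r.output ++ qq) (A ++ B ++ C)) := by
        rw [hsplit1, hsplit2]
        exact ⟨_, hrule, ContextFreeRule.rewrites_of_exists_parts _ _ _⟩
      rw [hqs₁] at hder
      exact hprod.trans_derives hder

/-- The language of the product grammar. -/
lemma gP_language :
    (gP g step q₀ F σ).language
      = {v : List γ | v.map σ ∈ g.language ∧ v.foldl step q₀ ∈ F} := by
  ext v
  constructor
  · intro hv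
    have hs := soundP g step q₀ F σ hv
    have hsat : satP g step q₀ F σ (.inr (.inr ())) v := SStr_singleton.mp hs
    obtain ⟨hd, hf⟩ := hsat
    refine ⟨?_, hf⟩
    show g.Derives _ _
    rw [List.map_map]
    exact hd
  · rintro ⟨hd, hf⟩
    have hd' : g.Derives [Symbol.nonterminal g.initial]
        (v.map fun t => Symbol.terminal (σ t)) := by
      have h0 := (ContextFreeGrammar.mem_language_iff g (v.map σ)).mp hd
      simpa [List.map_map, Function.comp_def] using h0
    obtain ⟨qs, hlen, hcl, hder⟩ := keyC g step q₀ F σ hd' q₀ v rfl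
    cases qs with
    | nil => simp at hlen
    | cons qf qs' =>
      cases qs' with
      | cons _ _ => simp at hlen
      | nil =>
        have hqf : qf = v.foldl step q₀ := hcl
        have hrule : (⟨.inr (.inr ()), [.nonterminal (.inl (q₀, g.initial, qf))]⟩ :
            ContextFreeRule γ (PNT Q g.NT α)) ∈ (gP g step q₀ F σ).rules :=
          (mem_gP_rules g step q₀ F σ).mpr (Or.inl ⟨qf, hqf ▸ hf, rfl⟩)
        have hstart : (gP g step q₀ F σ).Produces
            [Symbol.nonterminal (gP g step q₀ F σ).initial]
            [Symbol.nonterminal (.inl (q₀, g.initial, qf))] :=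
          ⟨_, hrule, ContextFreeRule.Rewrites.input_output⟩
        have : liftOut (γ := γ) q₀ ([Symbol.nonterminal g.initial] : List (Symbol α g.NT)) [qf]
            = [Symbol.nonterminal (Sum.inl (q₀, g.initial, qf))] := rfl
        rw [this] at hder
        exact hstart.trans_derives hder

end Product


/-! ### Block encoding of words over `β` as words over a marked alphabet -/

section Blocks

variable {α β : Type} (c : β → List α)

/-- The marked alphabet: positions inside the blocks `c b`. -/
abbrev BlockLetter : Type := (b : β) × Fin (c b).length

/-- Relabeling a marked letter to the underlying letter of `α`. -/
def blockSigma : BlockLetter c → α := fun x => (c x.1).get x.2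

/-- The block of marked letters corresponding to `b`. -/
def blocks (b : β) : List (BlockLetter c) :=
  (List.finRange (c b).length).map fun i => ⟨b, i⟩

/-- Decoding of marked letters. -/
def bout : BlockLetter c → List β := fun x => if x.2.val = 0 then [x.1] else []

/-- Tail of the block of `b` starting at position `i`. -/
def restBlock (b : β) (i : ℕ) : List (BlockLetter c) :=
  ((List.finRange (c b).length).drop i).map fun j => ⟨b, j⟩

/-- State after consuming a marked letter. -/
noncomputable def bnext (x : BlockLetter c) : Option (Option (BlockLetter c)) := by
  classical
  exact if h : x.2.val + 1 < (c x.1).length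
    then some (some ⟨x.1, ⟨x.2.val + 1, h⟩⟩) else some none

/-- Transition function checking that a word is a concatenation of blocks. -/
noncomputable def bstep : Option (Option (BlockLetter c)) → BlockLetter c →
    Option (Option (BlockLetter c)) := by
  classical
  exact fun q t =>
    match q with
    | none => none
    | some none => if t.2.val = 0 then bnext c t else none
    | some (some e) => if t = e then bnext c t else none

lemma blocks_map_sigma (b : β) : (blocks c b).map (blockSigma c) = c b := by
  show ((List.finRange (c b).length).map fun i => (⟨b, i⟩ : BlockLetter c)).map (blockSigma c)
      = c b
  rw [List.map_map]
  exact List.map_get_finRange (c b)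

lemma restBlock_zero (b : β) : restBlock c b 0 = blocks c b := rfl

lemma restBlock_succ (b : β) (i : ℕ) (h : i < (c b).length) :
    restBlock c b i = ⟨b, ⟨i, h⟩⟩ :: restBlock c b (i + 1) := by
  unfold restBlock
  rw [List.drop_eq_getElem_cons (by simpa using h), List.map_cons]
  congr 1
  simp

lemma restBlock_nil (b : β) (i : ℕ) (h : ¬ i < (c b).length) :
    restBlock c b i = [] := by
  unfold restBlock
  rw [List.drop_eq_nil_of_le (by simpa using Nat.le_of_not_lt h)]
  rfl

lemma foldl_bstep_none (v : List (BlockLetter c)) :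
    v.foldl (bstep c) none = none := by
  induction v with
  | nil => rfl
  | cons t v ih => simpa [bstep] using ih

lemma consume (b : β) : ∀ (k i : ℕ) (h : i < (c b).length), (c b).length - (i + 1) = k →
    (restBlock c b (i + 1)).foldl (bstep c) (bnext c ⟨b, ⟨i, h⟩⟩) = some none := by
  intro k
  induction k with
  | zero =>
    intro i h hk
    have h1 : ¬ i + 1 < (c b).length := by omega
    rw [restBlock_nil c b (i + 1) h1]
    show bnext c ⟨b, ⟨i, h⟩⟩ = some none
    unfold bnext
    simp only []
    rw [dif_neg (by simpa using h1)]
  | succ k ih =>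
    intro i h hk
    have h1 : i + 1 < (c b).length := by omega
    rw [restBlock_succ c b (i + 1) h1]
    have hb : bnext c ⟨b, ⟨i, h⟩⟩ = some (some ⟨b, ⟨i + 1, h1⟩⟩) := by
      unfold bnext
      simp only []
      rw [dif_pos (by simpa using h1)]
    rw [List.foldl_cons, hb]
    have hstep : bstep c (some (some ⟨b, ⟨i + 1, h1⟩⟩)) ⟨b, ⟨i + 1, h1⟩⟩
        = bnext c ⟨b, ⟨i + 1, h1⟩⟩ := by
      unfold bstep
      simp
    rw [hstep]
    exact ih (i + 1) h1 (by omega)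

lemma blocks_cons (b : β) (h : 0 < (c b).length) :
    blocks c b = ⟨b, ⟨0, h⟩⟩ :: restBlock c b 1 := by
  rw [← restBlock_zero, restBlock_succ c b 0 h]

lemma foldl_blocks (b : β) (h : 0 < (c b).length) (v : List (BlockLetter c)) :
    (blocks c b ++ v).foldl (bstep c) (some none) = v.foldl (bstep c) (some none) := by
  rw [blocks_cons c b h, List.foldl_append]
  have h1 : bstep c (some none) ⟨b, ⟨0, h⟩⟩ = bnext c ⟨b, ⟨0, h⟩⟩ := by
    unfold bstep
    simp
  rw [List.foldl_cons, h1, consume c b ((c b).length - 1) 0 h (by omega)]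

lemma foldl_flatMap_blocks (hc : ∀ b, c b ≠ []) (w : List β) :
    (w.flatMap (blocks c)).foldl (bstep c) (some none) = some none := by
  induction w with
  | nil => rfl
  | cons b w ih =>
    rw [List.flatMap_cons, foldl_blocks c b (List.length_pos_iff.mpr (hc b))]
    exact ih

lemma restBlock_flatMap_bout (b : β) : ∀ (k i : ℕ), 1 ≤ i → (c b).length - i = k →
    (restBlock c b i).flatMap (bout c) = [] := by
  intro k
  induction k with
  | zero =>
    intro i hi hk
    rw [restBlock_nil c b i (by omega)]
    rfl
  | succ k ih =>
    intro i hi hk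
    have h1 : i < (c b).length := by omega
    rw [restBlock_succ c b i h1, List.flatMap_cons]
    have : bout c ⟨b, ⟨i, h1⟩⟩ = [] := by
      unfold bout
      rw [if_neg (by simp; omega)]
    rw [this, List.nil_append]
    exact ih (i + 1) (by omega) (by omega)

lemma blocks_flatMap_bout (b : β) (h : 0 < (c b).length) :
    (blocks c b).flatMap (bout c) = [b] := by
  rw [blocks_cons c b h, List.flatMap_cons]
  have h1 : bout c ⟨b, ⟨0, h⟩⟩ = [b] := by unfold bout; rw [if_pos rfl]
  rw [h1, restBlock_flatMap_bout c b ((c b).length - 1) 1 le_rfl rfl]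
  rfl

lemma flatMap_blocks_bout (hc : ∀ b, c b ≠ []) (w : List β) :
    (w.flatMap (blocks c)).flatMap (bout c) = w := by
  induction w with
  | nil => rfl
  | cons b w ih =>
    rw [List.flatMap_cons, List.flatMap_append,
      blocks_flatMap_bout c b (List.length_pos_iff.mpr (hc b)), ih]
    rfl

/-- Words accepted by the block automaton decode-encode to themselves. -/
lemma decode (v : List (BlockLetter c)) :
    ∀ q, v.foldl (bstep c) q = some none →
      (q = some none → v = (v.flatMap (bout c)).flatMap (blocks c)) ∧
      (∀ e : BlockLetter c, q = some (some e) → 1 ≤ e.2.val →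
        ∃ v', v = restBlock c e.1 e.2.val ++ v'
          ∧ v' = (v'.flatMap (bout c)).flatMap (blocks c)
          ∧ v.flatMap (bout c) = v'.flatMap (bout c)) := by
  induction v with
  | nil =>
    intro q hq
    rw [List.foldl_nil] at hq
    constructor
    · intro h; rfl
    · intro e he hi
      rw [he] at hq
      exact absurd hq (by simp)
  | cons t v ih =>
    intro q hq
    rw [List.foldl_cons] at hq
    constructor
    · rintro rfl
      by_cases h0 : t.2.val = 0
      · have hstep : bstep c (some none) t = bnext c t := by
          unfold bstep
          rw [if_pos h0]
        rw [hstep] at hq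
        have hT : t = ⟨t.1, ⟨0, t.2.pos⟩⟩ := by
          obtain ⟨b, i⟩ := t
          simp only at h0 ⊢
          congr 1
          exact Fin.ext h0
        have hblocks : blocks c t.1 = ⟨t.1, ⟨0, t.2.pos⟩⟩ :: restBlock c t.1 1 :=
          blocks_cons c t.1 t.2.pos
        have hboutt : bout c t = [t.1] := by unfold bout; rw [if_pos h0]
        by_cases h1 : t.2.val + 1 < (c t.1).length
        · have hb : bnext c t = some (some ⟨t.1, ⟨t.2.val + 1, h1⟩⟩) := by
            unfold bnext; rw [dif_pos h1]
          rw [hb] at hq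
          obtain ⟨v', hv1, hv2, hv3⟩ :=
            (ih _ hq).2 ⟨t.1, ⟨t.2.val + 1, h1⟩⟩ rfl (by simp)
          simp only at hv1 hv3
          rw [List.flatMap_cons, hboutt, hv3, List.singleton_append, List.flatMap_cons,
            ← hv2, hblocks]
          rw [hv1, h0]
          simp [hT.symm]
        · have hb : bnext c t = some none := by
            unfold bnext; rw [dif_neg h1]
          rw [hb] at hq
          have hv := (ih _ hq).1 rfl
          have hrb : restBlock c t.1 1 = [] := restBlock_nil c t.1 1 (by omega)
          rw [List.flatMap_cons, hboutt, List.singleton_append, List.flatMap_cons,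
            ← hv, hblocks, hrb]
          rw [List.cons_append, List.nil_append]
          exact congrArg (· :: v) hT
      · have hstep : bstep c (some none) t = none := by
          unfold bstep
          rw [if_neg h0]
        rw [hstep, foldl_bstep_none] at hq
        exact absurd hq (by simp)
    · rintro e rfl hi
      by_cases hte : t = e
      · subst hte
        have hstep : bstep c (some (some t)) t = bnext c t := by
          unfold bstep
          simp
        rw [hstep] at hq
        have hT : t = ⟨t.1, ⟨t.2.val, t.2.isLt⟩⟩ := by
          obtain ⟨b, i⟩ := t
          rfl
        have hrb : restBlock c t.1 t.2.val = ⟨t.1, ⟨t.2.val, t.2.isLt⟩⟩ :: restBlock c t.1 (t.2.val + 1) :=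
          restBlock_succ c t.1 t.2.val t.2.isLt
        have hboutt : bout c t = [] := by
          unfold bout; rw [if_neg (by omega)]
        by_cases h1 : t.2.val + 1 < (c t.1).length
        · have hb : bnext c t = some (some ⟨t.1, ⟨t.2.val + 1, h1⟩⟩) := by
            unfold bnext; rw [dif_pos h1]
          rw [hb] at hq
          obtain ⟨v', hv1, hv2, hv3⟩ :=
            (ih _ hq).2 ⟨t.1, ⟨t.2.val + 1, h1⟩⟩ rfl (by simp)
          simp only at hv1 hv3
          refine ⟨v', ?_, hv2, ?_⟩
          · rw [hrb, hv1]
            rw [List.cons_append]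
          · rw [List.flatMap_cons, hboutt, List.nil_append, hv3]
        · have hb : bnext c t = some none := by
            unfold bnext; rw [dif_neg h1]
          rw [hb] at hq
          have hv := (ih _ hq).1 rfl
          have hrb2 : restBlock c t.1 (t.2.val + 1) = [] := restBlock_nil c t.1 _ (by omega)
          refine ⟨v, ?_, hv, ?_⟩
          · rw [hrb, hrb2]
            rw [List.singleton_append]
          · rw [List.flatMap_cons, hboutt, List.nil_append]
      · have hstep : bstep c (some (some e)) t = none := by
          unfold bstep
          simp [hte]
        rw [hstep, foldl_bstep_none] at hq
        exact absurd hq (by simp)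

end Blocks


/-! ### Grammar for the full language -/

open Classical in
/-- A grammar generating all words over `β`. -/
noncomputable def gAll (β : Type) [Fintype β] : ContextFreeGrammar.{0} β :=
  ⟨Unit, (), insert ⟨(), []⟩
    ((Finset.univ : Finset β).image fun b => ⟨(), [.terminal b, .nonterminal ()]⟩)⟩

lemma gAll_mem (β : Type) [Fintype β] (w : List β) : w ∈ (gAll β).language := by
  classical
  rw [ContextFreeGrammar.mem_language_iff]
  induction w with
  | nil =>
    refine Produces.single ⟨⟨(), []⟩, ?_, ContextFreeRule.Rewrites.input_output⟩
    show (⟨(), []⟩ : ContextFreeRule β Unit) ∈ (gAll β).rules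
    exact Finset.mem_insert_self _ _
  | cons b w ih =>
    have h1 : (gAll β).Produces [Symbol.nonterminal (gAll β).initial]
        [Symbol.terminal b, Symbol.nonterminal ()] := by
      refine ⟨⟨(), [Symbol.terminal b, Symbol.nonterminal ()]⟩, ?_,
        ContextFreeRule.Rewrites.input_output⟩
      show (⟨(), [Symbol.terminal b, Symbol.nonterminal ()]⟩ : ContextFreeRule β Unit)
        ∈ (gAll β).rules
      exact Finset.mem_insert_of_mem (Finset.mem_image_of_mem _ (Finset.mem_univ _))
    refine h1.trans_derives ?_
    have h2 := ih.append_left [Symbol.terminal b]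
    exact h2

end CFIndep

/-- Context-freeness of the word problem of a pair `(G,K)` does not depend
on the chosen semigroup presentation. -/
theorem contextFree_word_problem_independent_of_presentation
    {G : Type} [Group G] [Group.FG G] (K : Subgroup G)
    {α : Type} [Fintype α] (ψ : α → G)
    (hψ : ∀ g : G, ∃ w : List α, (w.map ψ).prod = g)
    (hcf : Language.IsContextFree {w : List α | (w.map ψ).prod ∈ K})
    {β : Type} [Fintype β] (ψ' : β → G)
    (hψ' : ∀ g : G, ∃ w : List β, (w.map ψ').prod = g) :
    Language.IsContextFree {w : List β | (w.map ψ').prod ∈ K} := by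
  classical
  rcases isEmpty_or_nonempty α with hα | hα
  · -- `G` is trivial, so the word problem is the full language
    have htriv : ∀ x : G, x = 1 := by
      intro x
      obtain ⟨w, hw⟩ := hψ x
      cases w with
      | nil => simpa using hw.symm
      | cons a _ => exact (IsEmpty.false a).elim
    have hset : {w : List β | (w.map ψ').prod ∈ K} = Set.univ := by
      ext w
      simp only [Set.mem_setOf_eq, Set.mem_univ, iff_true]
      rw [htriv ((w.map ψ').prod)]
      exact K.one_mem
    rw [hset]
    exact ⟨CFIndep.gAll β, Set.eq_univ_of_forall (CFIndep.gAll_mem β)⟩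
  · obtain ⟨a₀⟩ := hα
    obtain ⟨r₀, hr₀⟩ := hψ (ψ a₀)⁻¹
    have hc : ∀ b : β, ∃ l : List α, l ≠ [] ∧ (l.map ψ).prod = ψ' b := by
      intro b
      obtain ⟨w, hw⟩ := hψ (ψ' b)
      refine ⟨a₀ :: (r₀ ++ w), by simp, ?_⟩
      rw [List.map_cons, List.prod_cons, List.map_append, List.prod_append, hr₀, hw,
        ← mul_assoc, mul_inv_cancel, one_mul]
    choose c hcne hcval using hc
    obtain ⟨g, hg⟩ := hcf
    haveI : Fintype (CFIndep.BlockLetter c) :=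
      inferInstanceAs (Fintype ((b : β) × Fin (c b).length))
    refine ⟨CFIndep.gB (CFIndep.gP g (CFIndep.bstep c) (some none) {some none}
      (CFIndep.blockSigma c)) (CFIndep.bout c), ?_⟩
    rw [CFIndep.gB_language, CFIndep.gP_language, hg]
    have hval : ∀ w : List β, ((w.flatMap c).map ψ).prod = (w.map ψ').prod := by
      intro w
      induction w with
      | nil => rfl
      | cons b w ih =>
        rw [List.flatMap_cons, List.map_append, List.prod_append, ih, List.map_cons,
          List.prod_cons, hcval]
    have hmap : ∀ x : List β,
        (x.flatMap (CFIndep.blocks c)).map (CFIndep.blockSigma c) = x.flatMap c := by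
      intro x
      rw [List.map_flatMap]
      simp only [CFIndep.blocks_map_sigma]
    ext w
    simp only [Set.mem_setOf_eq, Finset.mem_singleton]
    constructor
    · rintro ⟨v, ⟨hσ, hacc⟩, rfl⟩
      have hdec := (CFIndep.decode c v _ hacc).1 rfl
      have hσ' : (((v.flatMap (CFIndep.bout c)).flatMap c).map ψ).prod ∈ K := by
        have h2 : v.map (CFIndep.blockSigma c)
            = (v.flatMap (CFIndep.bout c)).flatMap c := by
          conv_lhs => rw [hdec]
          exact hmap _
        rw [← h2]
        exact hσ
      rw [hval] at hσ'
      exact hσ'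
    · intro hw
      refine ⟨w.flatMap (CFIndep.blocks c), ⟨?_, ?_⟩, ?_⟩
      · show _ ∈ {u : List α | (u.map ψ).prod ∈ K}
        rw [Set.mem_setOf_eq, hmap, hval]
        exact hw
      · exact CFIndep.foldl_flatMap_blocks c hcne w
      · exact (CFIndep.flatMap_blocks_bout c hcne w).symm
end

section
/- Let G be a finitely generated group with semigroup presentation ψ : Σ → G, and let K ≤ H be subgroups of G with K of finite index in H. If the language L(G,K,ψ) = { w ∈ Σ* : ψ(w) ∈ K } is context-free, then the language L(G,H,ψ) = { w ∈ Σ* : ψ(w) ∈ H } is also context-free. -/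
open ContextFreeGrammar

namespace CFGAux

variable {T : Type}

/-! ### Single-step split -/

lemma rewrites_append_split {N : Type*} {r : ContextFreeRule T N}
    {x y v : List (Symbol T N)} (h : r.Rewrites (x ++ y) v) :
    (∃ x', v = x' ++ y ∧ r.Rewrites x x') ∨ (∃ y', v = x ++ y' ∧ r.Rewrites y y') := by
  obtain ⟨p, q, hpq, hv⟩ := h.exists_parts
  rw [List.append_assoc] at hpq
  rcases List.append_eq_append_iff.mp hpq with ⟨a, rfl, ha⟩ | ⟨c, rfl, hc⟩
  · -- p = x ++ a : rewrite happens in y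
    right
    refine ⟨a ++ r.output ++ q, by simp [hv], ?_⟩
    rw [ha, ← List.append_assoc]
    exact r.rewrites_of_exists_parts a q
  · rcases c with _ | ⟨s, c⟩
    · right
      simp only [List.nil_append, List.append_nil] at hc hv ⊢
      refine ⟨r.output ++ q, by simp [hv], ?_⟩
      rw [← hc]
      simpa using r.rewrites_of_exists_parts [] q
    · left
      simp only [List.cons_append, List.cons.injEq, List.nil_append] at hc
      obtain ⟨hs, hq⟩ := hc
      refine ⟨p ++ r.output ++ c, ?_, ?_⟩
      · rw [hv, hq]; simp
      · rw [← hs]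
        simpa using r.rewrites_of_exists_parts p c

/-! ### Step-counted derivations -/

inductive DerivesIn (g : ContextFreeGrammar T) :
    List (Symbol T g.NT) → List (Symbol T g.NT) → ℕ → Prop
  | refl (u : List (Symbol T g.NT)) : DerivesIn g u u 0
  | head {u v w : List (Symbol T g.NT)} {n : ℕ} :
      g.Produces u v → DerivesIn g v w n → DerivesIn g u w (n + 1)

lemma DerivesIn.toDerives {g : ContextFreeGrammar T} {u v : List (Symbol T g.NT)} {n : ℕ}
    (h : DerivesIn g u v n) : g.Derives u v := by
  induction h with
  | refl => rfl
  | head hp _ ih => exact hp.trans_derives ih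

lemma derives_iff_derivesIn {g : ContextFreeGrammar T} {u v : List (Symbol T g.NT)} :
    g.Derives u v ↔ ∃ n, DerivesIn g u v n := by
  constructor
  · intro h
    induction h using Relation.ReflTransGen.head_induction_on with
    | refl => exact ⟨0, .refl v⟩
    | head hp _ ih => obtain ⟨n, hn⟩ := ih; exact ⟨n + 1, .head hp hn⟩
  · rintro ⟨n, hn⟩; exact hn.toDerives

lemma DerivesIn.append_left {g : ContextFreeGrammar T} {u v : List (Symbol T g.NT)} {n : ℕ}
    (h : DerivesIn g u v n) (p : List (Symbol T g.NT)) :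
    DerivesIn g (p ++ u) (p ++ v) n := by
  induction h with
  | refl => exact .refl _
  | head hp _ ih => exact .head (hp.append_left p) ih

lemma DerivesIn.append_right {g : ContextFreeGrammar T} {u v : List (Symbol T g.NT)} {n : ℕ}
    (h : DerivesIn g u v n) (p : List (Symbol T g.NT)) :
    DerivesIn g (u ++ p) (v ++ p) n := by
  induction h with
  | refl => exact .refl _
  | head hp _ ih => exact .head (hp.append_right p) ih

/-- Decomposition of a step-counted derivation of a concatenation. -/
lemma DerivesIn.append_split {g : ContextFreeGrammar T} {x y w : List (Symbol T g.NT)} {n : ℕ}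
    (h : DerivesIn g (x ++ y) w n) :
    ∃ w₁ w₂ n₁ n₂, w = w₁ ++ w₂ ∧ n₁ + n₂ = n ∧ DerivesIn g x w₁ n₁ ∧ DerivesIn g y w₂ n₂ := by
  induction n generalizing x y with
  | zero =>
    cases h
    exact ⟨x, y, 0, 0, rfl, rfl, .refl x, .refl y⟩
  | succ n ih =>
    cases h with
    | head hp hd =>
      obtain ⟨r, hr, hrw⟩ := hp
      rcases rewrites_append_split hrw with ⟨x', rfl, hx⟩ | ⟨y', rfl, hy⟩
      · obtain ⟨w₁, w₂, n₁, n₂, rfl, hn, h₁, h₂⟩ := ih hd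
        exact ⟨w₁, w₂, n₁ + 1, n₂, rfl, by omega, .head ⟨r, hr, hx⟩ h₁, h₂⟩
      · obtain ⟨w₁, w₂, n₁, n₂, rfl, hn, h₁, h₂⟩ := ih hd
        exact ⟨w₁, w₂, n₁, n₂ + 1, rfl, by omega, h₁, .head ⟨r, hr, hy⟩ h₂⟩

lemma Derives.append_split {g : ContextFreeGrammar T} {x y w : List (Symbol T g.NT)}
    (h : g.Derives (x ++ y) w) :
    ∃ w₁ w₂, w = w₁ ++ w₂ ∧ g.Derives x w₁ ∧ g.Derives y w₂ := by
  obtain ⟨n, hn⟩ := derives_iff_derivesIn.mp h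
  obtain ⟨w₁, w₂, _, _, rfl, _, h₁, h₂⟩ := hn.append_split
  exact ⟨w₁, w₂, rfl, h₁.toDerives, h₂.toDerives⟩

/-- A string of terminals derives only itself. -/
lemma derives_terminal {g : ContextFreeGrammar T} {xs : List T} {z : List (Symbol T g.NT)}
    (h : g.Derives (xs.map Symbol.terminal) z) : z = xs.map Symbol.terminal := by
  rcases Relation.ReflTransGen.cases_head h with rfl | ⟨v, hp, -⟩
  · rfl
  · exfalso
    obtain ⟨r, -, hrw⟩ := hp
    obtain ⟨p, q, hpq, -⟩ := hrw.exists_parts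
    have : Symbol.nonterminal r.input ∈ xs.map (Symbol.terminal (N := g.NT)) := by
      rw [hpq]; simp
    simp at this


/-! ### Lifting grammars along a map of nonterminals -/

section Lift

variable {N N' : Type*}

def liftSym (f : N → N') : Symbol T N → Symbol T N'
  | .terminal t => .terminal t
  | .nonterminal B => .nonterminal (f B)

def liftStr (f : N → N') (x : List (Symbol T N)) : List (Symbol T N') :=
  x.map (liftSym f)

def liftRule (f : N → N') (r : ContextFreeRule T N) : ContextFreeRule T N' :=
  ⟨f r.input, liftStr f r.output⟩

lemma liftStr_append (f : N → N') (x y : List (Symbol T N)) :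
    liftStr f (x ++ y) = liftStr f x ++ liftStr f y := List.map_append

lemma liftStr_terminal (f : N → N') (w : List T) :
    liftStr f (w.map Symbol.terminal) = w.map Symbol.terminal := by
  simp [liftStr, Function.comp, liftSym]

lemma liftSym_injective {f : N → N'} (hf : Function.Injective f) :
    Function.Injective (liftSym (T := T) f) := by
  intro s₁ s₂ h
  cases s₁ <;> cases s₂ <;>
      simp only [liftSym, Symbol.terminal.injEq, Symbol.nonterminal.injEq] at h <;>
      first | (exact absurd h (by simp)) | (exact congrArg _ (hf h)) | simp [h]

lemma liftStr_terminal_inv {f : N → N'} {x : List (Symbol T N)} {w : List T}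
    (h : liftStr f x = w.map Symbol.terminal) : x = w.map Symbol.terminal := by
  induction x generalizing w with
  | nil => cases w with
    | nil => rfl
    | cons a w => simp [liftStr] at h
  | cons s x ih =>
    cases w with
    | nil => simp [liftStr] at h
    | cons a w =>
      simp only [liftStr, List.map_cons, List.cons.injEq] at h ⊢
      obtain ⟨h1, h2⟩ := h
      cases s with
      | terminal t => simp [liftSym] at h1; exact ⟨by simp [h1], ih h2⟩
      | nonterminal B => simp [liftSym] at h1

lemma rewrites_lift {f : N → N'} {r : ContextFreeRule T N} {u v : List (Symbol T N)}
    (h : r.Rewrites u v) : (liftRule f r).Rewrites (liftStr f u) (liftStr f v) := by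
  induction h with
  | head s =>
    have := ContextFreeRule.Rewrites.head (r := liftRule f r) (liftStr f s)
    simpa [liftStr, liftSym, liftRule] using this
  | cons x _ ih => exact ContextFreeRule.Rewrites.cons _ ih

lemma rewrites_nil {r : ContextFreeRule T N} {v : List (Symbol T N)} : ¬ r.Rewrites [] v := by
  intro h; cases h

lemma rewrites_singleton {r : ContextFreeRule T N} {A : N} {v : List (Symbol T N)}
    (h : r.Rewrites [Symbol.nonterminal A] v) : r.input = A ∧ v = r.output := by
  cases h with
  | head s => simp
  | cons x hr => exact absurd hr rewrites_nil

/-- If a rule rewrites a lifted string, its input is in the range of `f`. -/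
lemma rewrites_liftStr_input {f : N → N'} {r' : ContextFreeRule T N'}
    {x : List (Symbol T N)} {v : List (Symbol T N')} (h : r'.Rewrites (liftStr f x) v) :
    ∃ B, r'.input = f B := by
  obtain ⟨p, q, hpq, -⟩ := h.exists_parts
  have : Symbol.nonterminal r'.input ∈ liftStr f x := by rw [hpq]; simp
  obtain ⟨s, -, hs⟩ := List.mem_map.mp this
  cases s with
  | terminal t => simp [liftSym] at hs
  | nonterminal B => exact ⟨B, by simp [liftSym] at hs; exact hs.symm⟩

/-- Rewriting a lifted string by a lifted rule comes from a rewrite downstairs. -/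
lemma rewrites_liftStr_inv {f : N → N'} (hf : Function.Injective f)
    {r : ContextFreeRule T N} {x : List (Symbol T N)} {v : List (Symbol T N')}
    (h : (liftRule f r).Rewrites (liftStr f x) v) :
    ∃ x', v = liftStr f x' ∧ r.Rewrites x x' := by
  obtain ⟨p, q, hpq, hv⟩ := h.exists_parts
  rw [List.append_assoc] at hpq
  obtain ⟨x₁, x₂, rfl, hp, hx₂⟩ := List.map_eq_append_iff.mp hpq
  cases x₂ with
  | nil => simp at hx₂
  | cons s x₄ =>
    simp only [List.map_cons, List.cons_append, List.nil_append, List.cons.injEq] at hx₂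
    obtain ⟨hs, hq⟩ := hx₂
    cases s with
    | terminal t => simp [liftSym, liftRule] at hs
    | nonterminal B =>
      simp only [liftSym, liftRule, Symbol.nonterminal.injEq] at hs
      have hB : B = r.input := hf hs
      refine ⟨x₁ ++ r.output ++ x₄, ?_, ?_⟩
      · rw [hv, ← hp, ← hq]
        simp [liftStr, liftRule]
      · rw [hB]
        simpa using r.rewrites_of_exists_parts x₁ x₄

end Lift


/-! ### Grammar-level lifting -/

section GrammarLift

variable {g g' : ContextFreeGrammar T} {f : g.NT → g'.NT}

lemma derives_liftGrammar (hsub : ∀ r ∈ g.rules, liftRule f r ∈ g'.rules)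
    {u v : List (Symbol T g.NT)} (h : g.Derives u v) :
    g'.Derives (liftStr f u) (liftStr f v) := by
  induction h with
  | refl => rfl
  | tail _ hp ih =>
    obtain ⟨r, hr, hrw⟩ := hp
    exact ih.trans_produces ⟨liftRule f r, hsub r hr, rewrites_lift hrw⟩

lemma produces_liftStr_inv (hf : Function.Injective f)
    (hrules : ∀ r' ∈ g'.rules, (∃ B, r'.input = f B) → ∃ r ∈ g.rules, r' = liftRule f r)
    {x : List (Symbol T g.NT)} {v : List (Symbol T g'.NT)}
    (h : g'.Produces (liftStr f x) v) :
    ∃ x', v = liftStr f x' ∧ g.Produces x x' := by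
  obtain ⟨r', hr', hrw⟩ := h
  obtain ⟨r, hr, rfl⟩ := hrules r' hr' (rewrites_liftStr_input hrw)
  obtain ⟨x', rfl, hx⟩ := rewrites_liftStr_inv hf hrw
  exact ⟨x', rfl, r, hr, hx⟩

lemma derives_liftStr_inv (hf : Function.Injective f)
    (hrules : ∀ r' ∈ g'.rules, (∃ B, r'.input = f B) → ∃ r ∈ g.rules, r' = liftRule f r)
    {x : List (Symbol T g.NT)} {v : List (Symbol T g'.NT)}
    (h : g'.Derives (liftStr f x) v) :
    ∃ y, v = liftStr f y ∧ g.Derives x y := by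
  induction h with
  | refl => exact ⟨x, rfl, by rfl⟩
  | tail _ hp ih =>
    obtain ⟨y, rfl, hxy⟩ := ih
    obtain ⟨y', rfl, hp'⟩ := produces_liftStr_inv hf hrules hp
    exact ⟨y', rfl, hxy.trans_produces hp'⟩

end GrammarLift

/-! ### The empty language is context-free -/

lemma singleton_nonterminal_ne_terminal {N : Type*} (A : N) (w : List T) :
    [Symbol.nonterminal A] ≠ w.map Symbol.terminal := by
  cases w with
  | nil => simp
  | cons a w => simp

lemma isCF_empty : Language.IsContextFree (0 : Language T) := by
  refine ⟨⟨Unit, (), ∅⟩, ?_⟩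
  ext w
  simp only [ContextFreeGrammar.mem_language_iff]
  constructor
  · intro h
    rcases Relation.ReflTransGen.cases_head h with heq | ⟨v, hp, -⟩
    · exact absurd heq (singleton_nonterminal_ne_terminal _ _)
    · obtain ⟨r, hr, -⟩ := hp
      simp at hr
  · intro h
    exact absurd h (Language.notMem_zero w)

/-! ### Union of two context-free languages -/

lemma isCF_union {L₁ L₂ : Language T} (h₁ : L₁.IsContextFree) (h₂ : L₂.IsContextFree) :
    Language.IsContextFree (L₁ + L₂) := by
  classical
  obtain ⟨g₁, rfl⟩ := h₁
  obtain ⟨g₂, rfl⟩ := h₂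
  set f₁ : g₁.NT → Option (g₁.NT ⊕ g₂.NT) := fun B => some (Sum.inl B) with hf₁
  set f₂ : g₂.NT → Option (g₁.NT ⊕ g₂.NT) := fun B => some (Sum.inr B) with hf₂
  have hf₁inj : Function.Injective f₁ := fun a b h => by simpa [hf₁] using h
  have hf₂inj : Function.Injective f₂ := fun a b h => by simpa [hf₂] using h
  set st₁ : ContextFreeRule T (Option (g₁.NT ⊕ g₂.NT)) :=
    ⟨none, [Symbol.nonterminal (f₁ g₁.initial)]⟩ with hst₁
  set st₂ : ContextFreeRule T (Option (g₁.NT ⊕ g₂.NT)) :=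
    ⟨none, [Symbol.nonterminal (f₂ g₂.initial)]⟩ with hst₂
  set g : ContextFreeGrammar T :=
    ⟨Option (g₁.NT ⊕ g₂.NT), none,
      (g₁.rules.image (liftRule f₁) ∪ g₂.rules.image (liftRule f₂)) ∪ {st₁, st₂}⟩ with hg
  have hmem : ∀ r' : ContextFreeRule T g.NT, r' ∈ g.rules ↔
      (∃ r ∈ g₁.rules, liftRule f₁ r = r') ∨ (∃ r ∈ g₂.rules, liftRule f₂ r = r') ∨
      r' = st₁ ∨ r' = st₂ := by
    intro r'
    show r' ∈ (g₁.rules.image (liftRule f₁) ∪ g₂.rules.image (liftRule f₂)) ∪ {st₁, st₂} ↔ _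
    simp only [Finset.mem_union, Finset.mem_image, Finset.mem_insert, Finset.mem_singleton]
    aesop
  refine ⟨g, ?_⟩
  ext w
  simp only [ContextFreeGrammar.mem_language_iff, Language.mem_add, Set.mem_union]
  constructor
  · intro h
    rcases Relation.ReflTransGen.cases_head h with heq | ⟨v, hp, hd⟩
    · exact absurd heq (singleton_nonterminal_ne_terminal _ _)
    obtain ⟨r, hr, hrw⟩ := hp
    obtain ⟨hinput, rfl⟩ := rewrites_singleton hrw
    have hnone : r = st₁ ∨ r = st₂ := by
      rcases (hmem r).mp hr with ⟨r₀, -, rfl⟩ | ⟨r₀, -, rfl⟩ | h | h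
      · simp [liftRule, hf₁] at hinput
      · simp [liftRule, hf₂] at hinput
      · exact Or.inl h
      · exact Or.inr h
    have key : ∀ (g₀ : ContextFreeGrammar T) (f : g₀.NT → g.NT),
        Function.Injective f →
        (∀ r' ∈ g.rules, (∃ B, r'.input = f B) → ∃ r ∈ g₀.rules, r' = liftRule f r) →
        g.Derives [Symbol.nonterminal (f g₀.initial)] (w.map Symbol.terminal) →
        w ∈ g₀.language := by
      intro g₀ f hf hr hd
      have : liftStr (T := T) f [Symbol.nonterminal g₀.initial] =
          [Symbol.nonterminal (f g₀.initial)] := by simp [liftStr, liftSym]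
      rw [← this] at hd
      obtain ⟨y, hy, hder⟩ := derives_liftStr_inv hf hr hd
      rw [liftStr_terminal_inv hy.symm] at hder
      exact (ContextFreeGrammar.mem_language_iff g₀ w).mpr hder
    have hr₁ : ∀ r' ∈ g.rules, (∃ B, r'.input = f₁ B) → ∃ r ∈ g₁.rules, r' = liftRule f₁ r := by
      intro r' hr' ⟨B, hB⟩
      rcases (hmem r').mp hr' with ⟨r₀, hr₀, rfl⟩ | ⟨r₀, -, rfl⟩ | rfl | rfl
      · exact ⟨r₀, hr₀, rfl⟩
      · simp [liftRule, hf₁, hf₂] at hB; cases hB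
      · simp [hst₁, hf₁] at hB
      · simp [hst₂, hf₁] at hB
    have hr₂ : ∀ r' ∈ g.rules, (∃ B, r'.input = f₂ B) → ∃ r ∈ g₂.rules, r' = liftRule f₂ r := by
      intro r' hr' ⟨B, hB⟩
      rcases (hmem r').mp hr' with ⟨r₀, -, rfl⟩ | ⟨r₀, hr₀, rfl⟩ | rfl | rfl
      · simp [liftRule, hf₁, hf₂] at hB; cases hB
      · exact ⟨r₀, hr₀, rfl⟩
      · simp [hst₁, hf₂] at hB
      · simp [hst₂, hf₂] at hB
    rcases hnone with rfl | rfl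
    · left
      exact key g₁ f₁ hf₁inj hr₁ (by simpa [hst₁] using hd)
    · right
      exact key g₂ f₂ hf₂inj hr₂ (by simpa [hst₂] using hd)
  · intro h
    have start : ∀ st ∈ g.rules, ∀ A, st = (⟨none, [Symbol.nonterminal A]⟩ :
        ContextFreeRule T g.NT) →
        g.Derives [Symbol.nonterminal A] (w.map Symbol.terminal) →
        g.Derives [Symbol.nonterminal g.initial] (w.map Symbol.terminal) := by
      intro st hst A hA hd
      refine Relation.ReflTransGen.head ⟨st, hst, ?_⟩ hd
      rw [hA]
      simpa using ContextFreeRule.Rewrites.head (r := (⟨none, [Symbol.nonterminal A]⟩ :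
        ContextFreeRule T g.NT)) []
    rcases h with h | h
    · have hd := derives_liftGrammar (g' := g) (f := f₁)
        (fun r hr => (hmem _).mpr (Or.inl ⟨r, hr, rfl⟩)) h
      rw [liftStr_terminal] at hd
      refine start st₁ ((hmem st₁).mpr (by tauto)) (f₁ g₁.initial) rfl ?_
      simpa [liftStr, liftSym] using hd
    · have hd := derives_liftGrammar (g' := g) (f := f₂)
        (fun r hr => (hmem _).mpr (Or.inr (Or.inl ⟨r, hr, rfl⟩))) h
      rw [liftStr_terminal] at hd
      refine start st₂ ((hmem st₂).mpr (by tauto)) (f₂ g₂.initial) rfl ?_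
      simpa [liftStr, liftSym] using hd

/-! ### Finite unions -/

lemma isCF_biUnion {ι : Type} (s : Finset ι) (L : ι → Language T)
    (h : ∀ i, Language.IsContextFree (L i)) :
    Language.IsContextFree (⋃ i ∈ s, (L i : Set (List T))) := by
  classical
  induction s using Finset.induction_on with
  | empty =>
    rw [show (⋃ i ∈ (∅ : Finset ι), (L i : Set (List T))) = (∅ : Set (List T)) from by ext x; simp; intro i hx; obtain ⟨h, -⟩ := Set.mem_iUnion.mp hx; exact Finset.notMem_empty i h]
    exact isCF_empty
  | insert a s hni ih =>
    rw [show (⋃ i ∈ insert a s, (L i : Set (List T))) = (show Set (List T) from L a) ∪ ⋃ i ∈ s, (L i : Set (List T)) from Finset.set_biUnion_insert _ _ _]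
    exact isCF_union (h _) ih


/-! ### Right quotient by a single terminal -/

section Quotient

/-- All ways to split a list as `p ++ s :: q`. -/
def splits {S : Type*} : List S → List (List S × S × List S)
  | [] => []
  | s :: l => ([], s, l) :: (splits l).map (fun pq => (s :: pq.1, pq.2.1, pq.2.2))

lemma mem_splits {S : Type*} {o p : List S} {s : S} {q : List S} :
    (p, s, q) ∈ splits o ↔ o = p ++ s :: q := by
  induction o generalizing p with
  | nil => simp [splits]
  | cons t l ih =>
    simp only [splits, List.mem_cons, List.mem_map]
    constructor
    · rintro (h | ⟨⟨p', s', q'⟩, hm, h⟩)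
      · obtain ⟨h1, h2, h3⟩ : p = [] ∧ s = t ∧ q = l := by simpa [Prod.ext_iff] using h
        subst h1; subst h3; simp [h2]
      · obtain ⟨h1, h2, h3⟩ : t :: p' = p ∧ s' = s ∧ q' = q := by simpa [Prod.ext_iff] using h
        subst h1; subst h2; subst h3; simp [ih.mp hm]
    · intro h
      cases p with
      | nil =>
        left
        injection h with h1 h2
        subst h1 h2
        rfl
      | cons u p' =>
        right
        injection h with h1 h2
        subst h1
        exact ⟨(p', s, q), ih.mpr h2, rfl⟩

variable (g : ContextFreeGrammar T) (a : T)

open Classical in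
/-- Extra rules for the right quotient grammar. -/
noncomputable def quotRules : Finset (ContextFreeRule T (g.NT ⊕ g.NT)) :=
  g.rules.biUnion (fun r =>
    ((splits r.output).filterMap (fun pq =>
      if g.Derives pq.2.2 [] then
        match pq.2.1 with
        | .terminal t =>
            if t = a then some ⟨Sum.inr r.input, liftStr Sum.inl pq.1⟩ else none
        | .nonterminal B =>
            some ⟨Sum.inr r.input,
              liftStr Sum.inl pq.1 ++ [Symbol.nonterminal (Sum.inr B)]⟩
      else none)).toFinset)

lemma mem_quotRules {r' : ContextFreeRule T (g.NT ⊕ g.NT)} :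
    r' ∈ quotRules g a ↔ ∃ r ∈ g.rules, ∃ p q, g.Derives q [] ∧
      ((r.output = p ++ Symbol.terminal a :: q ∧
          r' = ⟨Sum.inr r.input, liftStr Sum.inl p⟩) ∨
        (∃ B, r.output = p ++ Symbol.nonterminal B :: q ∧
          r' = ⟨Sum.inr r.input,
            liftStr Sum.inl p ++ [Symbol.nonterminal (Sum.inr B)]⟩)) := by
  classical
  simp only [quotRules, Finset.mem_biUnion, List.mem_toFinset, List.mem_filterMap]
  constructor
  · rintro ⟨r, hr, ⟨p, s, q⟩, hmem, hval⟩
    rw [mem_splits] at hmem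
    split_ifs at hval with hq
    · cases s with
      | terminal t =>
        simp only at hval
        split_ifs at hval with ht
        · subst ht
          refine ⟨r, hr, p, q, hq, Or.inl ⟨hmem, ?_⟩⟩
          injection hval with h; exact h.symm
      | nonterminal B =>
        simp only at hval
        refine ⟨r, hr, p, q, hq, Or.inr ⟨B, hmem, ?_⟩⟩
        injection hval with h; exact h.symm
  · rintro ⟨r, hr, p, q, hq, ⟨hout, rfl⟩ | ⟨B, hout, rfl⟩⟩
    · exact ⟨r, hr, (p, Symbol.terminal a, q), mem_splits.mpr hout, by simp [hq]⟩
    · exact ⟨r, hr, (p, Symbol.nonterminal B, q), mem_splits.mpr hout, by simp [hq]⟩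

open Classical in
/-- The right quotient grammar. -/
noncomputable def quotGrammar : ContextFreeGrammar T :=
  ⟨g.NT ⊕ g.NT, Sum.inr g.initial,
    g.rules.image (liftRule Sum.inl) ∪ quotRules g a⟩

lemma quotGrammar_mem_rules {r' : ContextFreeRule T (g.NT ⊕ g.NT)} :
    r' ∈ (quotGrammar g a).rules ↔
      (∃ r ∈ g.rules, r' = liftRule Sum.inl r) ∨ r' ∈ quotRules g a := by
  classical
  show r' ∈ g.rules.image (liftRule Sum.inl) ∪ quotRules g a ↔ _
  simp only [Finset.mem_union, Finset.mem_image]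
  constructor
  · rintro (⟨r, hr, rfl⟩ | h)
    · exact Or.inl ⟨r, hr, rfl⟩
    · exact Or.inr h
  · rintro (⟨r, hr, rfl⟩ | h)
    · exact Or.inl ⟨r, hr, rfl⟩
    · exact Or.inr h

lemma quotGrammar_inl_rules :
    ∀ r' ∈ (quotGrammar g a).rules, (∃ B, r'.input = Sum.inl B) →
      ∃ r ∈ g.rules, r' = liftRule Sum.inl r := by
  rintro r' hr' ⟨B, hB⟩
  rcases (quotGrammar_mem_rules g a).mp hr' with h | h
  · exact h
  · exfalso
    rcases (mem_quotRules g a).mp h with ⟨r, -, p, q, -, ⟨-, rfl⟩ | ⟨C, -, rfl⟩⟩ <;>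
      simp at hB

lemma derives_nil {g : ContextFreeGrammar T} {z : List (Symbol T g.NT)}
    (h : g.Derives [] z) : z = [] := by
  rcases Relation.ReflTransGen.cases_head h with rfl | ⟨v, hp, -⟩
  · rfl
  · obtain ⟨r, -, hrw⟩ := hp
    exact absurd hrw rewrites_nil

/-- Replace a trailing nonterminal using a rule and erase the nullable tail. -/
lemma derives_snoc_nt {g : ContextFreeGrammar T} {A B : g.NT} {x : List (Symbol T g.NT)}
    (hder : g.Derives [Symbol.nonterminal A] (x ++ [Symbol.nonterminal B]))
    {r : ContextFreeRule T g.NT} (hr : r ∈ g.rules) (hrB : r.input = B)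
    {p : List (Symbol T g.NT)} {s : Symbol T g.NT} {q : List (Symbol T g.NT)}
    (hout : r.output = p ++ s :: q) (hq : g.Derives q []) :
    g.Derives [Symbol.nonterminal A] (x ++ p ++ [s]) := by
  have h1 : r.Rewrites [Symbol.nonterminal B] r.output :=
    hrB ▸ ContextFreeRule.Rewrites.input_output
  have h2 := hder.trans_produces ⟨r, hr, h1.append_left x⟩
  have h3 := hq.append_left (x ++ p ++ [s])
  have hx : x ++ r.output = (x ++ p ++ [s]) ++ q := by simp [hout]
  rw [hx] at h2
  simpa using h2.trans h3

/-- Soundness invariant for the quotient grammar. -/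
lemma quot_sound_aux {A : g.NT} {v : List (Symbol T (g.NT ⊕ g.NT))}
    (h : (quotGrammar g a).Derives [Symbol.nonterminal (Sum.inr A)] v) :
    (∃ x B, v = liftStr Sum.inl x ++ [Symbol.nonterminal (Sum.inr B)] ∧
      g.Derives [Symbol.nonterminal A] (x ++ [Symbol.nonterminal B])) ∨
    (∃ x, v = liftStr Sum.inl x ∧
      g.Derives [Symbol.nonterminal A] (x ++ [Symbol.terminal a])) := by
  have hinj : Function.Injective (Sum.inl : g.NT → g.NT ⊕ g.NT) := Sum.inl_injective
  induction h with
  | refl =>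
    left
    exact ⟨[], A, by simp [liftStr]; rfl, by simpa using Relation.ReflTransGen.refl⟩
  | tail _ hp ih =>
    obtain ⟨r', hr', hrw⟩ := hp
    rcases ih with ⟨x, B, rfl, hder⟩ | ⟨x, rfl, hder⟩
    · rcases rewrites_append_split hrw with ⟨x₁, rfl, hx⟩ | ⟨y', rfl, hy⟩
      · -- rewrite inside the lifted prefix
        obtain ⟨C, hC⟩ := rewrites_liftStr_input hx
        obtain ⟨r, hr, rfl⟩ := quotGrammar_inl_rules g a r' hr' ⟨C, hC⟩
        obtain ⟨x', rfl, hx'⟩ := rewrites_liftStr_inv hinj hx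
        left
        refine ⟨x', B, rfl, ?_⟩
        refine hder.trans_produces ⟨r, hr, ?_⟩
        exact hx'.append_right [Symbol.nonterminal B]
      · -- rewrite at the distinguished nonterminal
        obtain ⟨hin, rfl⟩ := rewrites_singleton hy
        have hr'q : r' ∈ quotRules g a := by
          rcases (quotGrammar_mem_rules g a).mp hr' with ⟨r, -, rfl⟩ | h
          · exact absurd hin (by simp [liftRule])
          · exact h
        rcases (mem_quotRules g a).mp hr'q with
          ⟨r, hr, p, q, hq, ⟨hout, rfl⟩ | ⟨C, hout, rfl⟩⟩
        · -- terminal case : we are done with the marked symbol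
          right
          have hrB : r.input = B := Sum.inr_injective hin
          exact ⟨x ++ p, (by rw [liftStr_append]; rfl),
            derives_snoc_nt hder hr hrB hout hq⟩
        · -- nonterminal case : the marker moves
          left
          have hrB : r.input = B := Sum.inr_injective hin
          refine ⟨x ++ p, C, ?_, derives_snoc_nt hder hr hrB hout hq⟩
          simp [liftStr_append]; rfl
    · -- all-lifted sentential form
      obtain ⟨x', rfl, hx'⟩ := produces_liftStr_inv hinj (quotGrammar_inl_rules g a)
        ⟨r', hr', hrw⟩
      right
      refine ⟨x', rfl, hder.trans_produces ?_⟩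
      obtain ⟨r, hr, hrw'⟩ := hx'
      exact ⟨r, hr, hrw'.append_right [Symbol.terminal a]⟩


lemma derivesIn_zero {g : ContextFreeGrammar T} {u v : List (Symbol T g.NT)}
    (h : DerivesIn g u v 0) : u = v := by cases h; rfl

lemma derivesIn_succ {g : ContextFreeGrammar T} {u w : List (Symbol T g.NT)} {n : ℕ}
    (h : DerivesIn g u w (n + 1)) : ∃ v, g.Produces u v ∧ DerivesIn g v w n := by
  cases h with
  | head hp hd => exact ⟨_, hp, hd⟩

/-- Locating the production of the final letter in a derivation. -/
lemma find_last {g : ContextFreeGrammar T} {a : T} :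
    ∀ (o : List (Symbol T g.NT)) {n : ℕ} {w : List T},
      DerivesIn g o (w.map Symbol.terminal ++ [Symbol.terminal a]) n →
      ∃ p s q w₁ w₂, o = p ++ s :: q ∧ w = w₁ ++ w₂ ∧ g.Derives q [] ∧
        g.Derives p (w₁.map Symbol.terminal) ∧
        ((s = Symbol.terminal a ∧ w₂ = []) ∨
          (∃ B m, s = Symbol.nonterminal B ∧ m ≤ n ∧
            DerivesIn g [Symbol.nonterminal B]
              (w₂.map Symbol.terminal ++ [Symbol.terminal a]) m)) := by
  intro o
  induction o using List.reverseRecOn with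
  | nil =>
    intro n w h
    exfalso
    have := derives_nil h.toDerives
    simp at this
  | append_singleton o' s ih =>
    intro n w h
    obtain ⟨z₁, z₂, n₁, n₂, hz, hn, h₁, h₂⟩ := h.append_split
    by_cases hz₂ : z₂ = []
    · subst hz₂
      rw [List.append_nil] at hz
      rw [← hz] at h₁
      obtain ⟨p, s', q, w₁, w₂, ho, hw, hq, hp, hdisj⟩ := ih h₁
      have hqs : g.Derives (q ++ [s]) [] := by
        have h2d : g.Derives [s] [] := h₂.toDerives
        have := (hq.append_right [s]).trans (by simpa using h2d)
        simpa using this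
      refine ⟨p, s', q ++ [s], w₁, w₂, by simp [ho], hw, hqs, hp, ?_⟩
      rcases hdisj with hleft | ⟨B, m, hs, hm, hD⟩
      · exact Or.inl hleft
      · exact Or.inr ⟨B, m, hs, by omega, hD⟩
    · -- the last symbol of `o` produces the final letter
      have hsplit : ∃ z₂', z₂ = z₂' ++ [Symbol.terminal a] ∧
          w.map Symbol.terminal = z₁ ++ z₂' := by
        rcases List.append_eq_append_iff.mp hz with ⟨a', ha1, ha2⟩ | ⟨c', hc1, hc2⟩
        · -- ha1 : z₁ = mapT w ++ a', ha2 : [Ta] = a' ++ z₂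
          cases a' with
          | nil => exact ⟨[], by simpa using ha2.symm, by simpa using ha1.symm⟩
          | cons x a'' =>
            exfalso
            apply hz₂
            have htl : a'' ++ z₂ = [] := by
              have := congrArg List.tail ha2
              simpa [eq_comm] using this
            exact (List.append_eq_nil_iff.mp htl).2
        · exact ⟨c', hc2, hc1⟩
      obtain ⟨z₂', hz₂eq, hmap⟩ := hsplit
      obtain ⟨w₁, w₂, hw, hw₁, hw₂⟩ := List.map_eq_append_iff.mp hmap
      subst hz₂eq
      cases s with
      | terminal t =>
        have hterm := derives_terminal (xs := [t]) (by simpa using h₂.toDerives)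
        rw [← hw₂] at hterm
        have hw₂nil : w₂ = [] ∧ t = a := by
          cases w₂ with
          | nil =>
            have : a = t := by simpa using hterm
            exact ⟨rfl, this.symm⟩
          | cons b w₂' =>
            exfalso
            have := congrArg List.length hterm
            simp at this
        obtain ⟨rfl, hta⟩ := hw₂nil
        refine ⟨o', Symbol.terminal t, [], w₁, [], by simp, by simp [hw], by rfl, ?_,
          Or.inl ⟨by rw [hta], rfl⟩⟩
        rw [hw₁]
        exact h₁.toDerives
      | nonterminal B =>
        refine ⟨o', Symbol.nonterminal B, [], w₁, w₂, by simp, hw, by rfl, ?_, ?_⟩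
        · rw [hw₁]; exact h₁.toDerives
        · refine Or.inr ⟨B, n₂, rfl, by omega, ?_⟩
          rw [hw₂]
          exact h₂

/-- Completeness of the quotient grammar. -/
lemma quot_complete {g : ContextFreeGrammar T} {a : T} :
    ∀ (n : ℕ) (A : g.NT) (w : List T),
      DerivesIn g [Symbol.nonterminal A] (w.map Symbol.terminal ++ [Symbol.terminal a]) n →
      (quotGrammar g a).Derives [Symbol.nonterminal (Sum.inr A)] (w.map Symbol.terminal) := by
  intro n
  induction n using Nat.strong_induction_on with
  | _ n ih =>
    intro A w h
    have hsub : ∀ r ∈ g.rules, liftRule Sum.inl r ∈ (quotGrammar g a).rules :=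
      fun r hr => (quotGrammar_mem_rules g a).mpr (Or.inl ⟨r, hr, rfl⟩)
    cases n with
    | zero =>
      exfalso
      have heq := derivesIn_zero h
      have : Symbol.terminal a ∈ ([Symbol.nonterminal A] : List (Symbol T g.NT)) := by
        rw [heq]; simp
      simp at this
    | succ n' =>
      obtain ⟨v, hp, hd⟩ := derivesIn_succ h
      obtain ⟨r, hr, hrw⟩ := hp
      obtain ⟨hrin, rfl⟩ := rewrites_singleton hrw
      obtain ⟨p, s, q, w₁, w₂, hout, hw, hq, hp', hdisj⟩ := find_last r.output hd
      have liftp : (quotGrammar g a).Derives (liftStr Sum.inl p)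
          (w₁.map Symbol.terminal) := by
        have := derives_liftGrammar hsub hp'
        convert this using 2
        exact (liftStr_terminal _ _).symm
      rcases hdisj with ⟨hs, hw₂⟩ | ⟨B, m, hs, hm, hD⟩
      · subst hs hw₂
        set r' : ContextFreeRule T (quotGrammar g a).NT :=
          ⟨Sum.inr r.input, liftStr Sum.inl p⟩ with hr'
        have hmem : r' ∈ (quotGrammar g a).rules :=
          (quotGrammar_mem_rules g a).mpr (Or.inr ((mem_quotRules g a).mpr
            ⟨r, hr, p, q, hq, Or.inl ⟨hout, rfl⟩⟩))
        have step1 : (quotGrammar g a).Produces [Symbol.nonterminal (Sum.inr A)] r'.output :=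
          ⟨r', hmem, by
            have := ContextFreeRule.Rewrites.input_output (r := r')
            simpa [hr', hrin] using this⟩
        rw [List.append_nil] at hw
        subst hw
        exact step1.trans_derives liftp
      · subst hs
        set r' : ContextFreeRule T (quotGrammar g a).NT :=
          ⟨Sum.inr r.input, liftStr Sum.inl p ++ [Symbol.nonterminal (Sum.inr B)]⟩ with hr'
        have hmem : r' ∈ (quotGrammar g a).rules :=
          (quotGrammar_mem_rules g a).mpr (Or.inr ((mem_quotRules g a).mpr
            ⟨r, hr, p, q, hq, Or.inr ⟨B, hout, rfl⟩⟩))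
        have step1 : (quotGrammar g a).Produces [Symbol.nonterminal (Sum.inr A)] r'.output :=
          ⟨r', hmem, by
            have := ContextFreeRule.Rewrites.input_output (r := r')
            simpa [hr', hrin] using this⟩
        have step2 : (quotGrammar g a).Derives r'.output
            (w₁.map Symbol.terminal ++ [Symbol.nonterminal (Sum.inr B)]) := by
          exact liftp.append_right [Symbol.nonterminal (Sum.inr B)]
        have step3 : (quotGrammar g a).Derives
            (w₁.map Symbol.terminal ++ [Symbol.nonterminal (Sum.inr B)])
            (w₁.map Symbol.terminal ++ w₂.map Symbol.terminal) :=
          (ih m (by omega) B w₂ hD).append_left _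
        have : (quotGrammar g a).Derives [Symbol.nonterminal (Sum.inr A)]
            (w₁.map Symbol.terminal ++ w₂.map Symbol.terminal) :=
          step1.trans_derives (step2.trans step3)
        simpa [hw] using this

/-- Context-free languages are closed under right quotient by a single terminal. -/
lemma isCF_quot_letter {L : Language T} (h : L.IsContextFree) (a : T) :
    Language.IsContextFree {w : List T | w ++ [a] ∈ L} := by
  obtain ⟨g, rfl⟩ := h
  refine ⟨quotGrammar g a, ?_⟩
  ext w
  simp only [ContextFreeGrammar.mem_language_iff, Set.mem_setOf_eq]
  constructor
  · intro hd
    rcases quot_sound_aux g a hd with ⟨x, B, hv, -⟩ | ⟨x, hv, hder⟩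
    · exfalso
      have : Symbol.nonterminal (N := (quotGrammar g a).NT) (Sum.inr B) ∈ w.map (Symbol.terminal (N := (quotGrammar g a).NT)) := by
        rw [hv]; exact List.mem_append_right _ (List.mem_singleton_self _)
      simp at this
    · rw [liftStr_terminal_inv hv.symm] at hder
      show g.Derives _ _
      simpa using hder
  · intro hd
    obtain ⟨n, hn⟩ := derives_iff_derivesIn.mp (show g.Derives _ _ from hd)
    have hn' : DerivesIn g [Symbol.nonterminal g.initial]
        (w.map Symbol.terminal ++ [Symbol.terminal a]) n := by
      simpa using hn
    exact quot_complete n g.initial w hn'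

/-- Context-free languages are closed under right quotient by a word. -/
lemma isCF_quot_word (u : List T) :
    ∀ {L : Language T}, L.IsContextFree → Language.IsContextFree {w : List T | w ++ u ∈ L} := by
  induction u using List.reverseRecOn with
  | nil =>
    intro L h
    refine (congrArg Language.IsContextFree ?_).mpr h
    ext w
    show w ++ [] ∈ L ↔ w ∈ L
    rw [List.append_nil]
  | append_singleton u' b ih =>
    intro L h
    have h1 := isCF_quot_letter h b
    have h2 := ih h1
    refine (congrArg Language.IsContextFree ?_).mpr h2
    ext w
    show w ++ (u' ++ [b]) ∈ L ↔ (w ++ u') ++ [b] ∈ L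
    rw [List.append_assoc]

end Quotient

end CFGAux

/-- If `K ≤ H ≤ G` with `[H:K] < ∞` and `L(G,K,ψ)` is context-free,
then `L(G,H,ψ)` is context-free. -/
theorem contextFree_of_finiteIndex_enlargement
    {G : Type} [Group G] [Group.FG G] (K H : Subgroup G) (hKH : K ≤ H)
    (hfin : K.relIndex H ≠ 0)
    {α : Type} [Fintype α] (ψ : α → G)
    (hψ : ∀ g : G, ∃ w : List α, (w.map ψ).prod = g)
    (hcf : Language.IsContextFree {w : List α | (w.map ψ).prod ∈ K}) :
    Language.IsContextFree {w : List α | (w.map ψ).prod ∈ H} := by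
  classical
  have hfin2 : Nat.card (H ⧸ K.subgroupOf H) ≠ 0 := hfin
  have hfin' : Finite (H ⧸ K.subgroupOf H) := Nat.finite_of_card_ne_zero hfin2
  have : Fintype (H ⧸ K.subgroupOf H) := Fintype.ofFinite _
  have hrep : ∀ q : H ⧸ K.subgroupOf H,
      ∃ u : List α, (u.map ψ).prod = ((Quotient.out q : H) : G) := fun q => hψ _
  choose u hu using hrep
  have hcover : ∀ x : G, x ∈ H ↔
      ∃ q : H ⧸ K.subgroupOf H, x * ((Quotient.out q : H) : G) ∈ K := by
    intro x
    constructor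
    · intro hx
      refine ⟨QuotientGroup.mk ((⟨x, hx⟩ : H)⁻¹), ?_⟩
      obtain ⟨k, hk⟩ := QuotientGroup.mk_out_eq_mul (K.subgroupOf H) ((⟨x, hx⟩ : H)⁻¹)
      rw [hk]
      have hkK : ((k : H) : G) ∈ K := Subgroup.mem_subgroupOf.mp k.2
      simpa using hkK
    · rintro ⟨q, hq⟩
      have h1 : x * ((Quotient.out q : H) : G) ∈ H := hKH hq
      have h2 : ((Quotient.out q : H) : G) ∈ H := (Quotient.out q).2
      simpa using mul_mem h1 (inv_mem h2)
  have heq : {w : List α | (w.map ψ).prod ∈ H} =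
      ⋃ q ∈ (Finset.univ : Finset (H ⧸ K.subgroupOf H)),
        {w : List α | w ++ u q ∈ {v : List α | (v.map ψ).prod ∈ K}} := by
    ext w
    rw [Set.mem_setOf_eq, hcover]
    simp only [Set.mem_iUnion, Finset.mem_univ, exists_prop, true_and, Set.mem_setOf_eq,
      List.map_append, List.prod_append, hu]
  rw [heq]
  exact CFGAux.isCF_biUnion Finset.univ _
    (fun q => CFGAux.isCF_quot_word (u q) hcf)
end

section
/- Let G be a finitely generated group with semigroup presentation ψ : Σ → G, and let K be a subgroup of G. If the language L(G,K,ψ) = { w ∈ Σ* : ψ(w) ∈ K } is context-free, then for every g ∈ G the language L(G, g⁻¹Kg, ψ) = { w ∈ Σ* : ψ(w) ∈ g⁻¹Kg } is also context-free. -/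
open ContextFreeGrammar

namespace CFAux

universe uT uN
variable {T : Type uT}

section basic
variable {N : Type uN}

lemma rewrites_append_split {r : ContextFreeRule T N} {x y z : List (Symbol T N)}
    (h : r.Rewrites (x ++ y) z) :
    (∃ x', r.Rewrites x x' ∧ z = x' ++ y) ∨ (∃ y', r.Rewrites y y' ∧ z = x ++ y') := by
  obtain ⟨p, q, hpq, rfl⟩ := h.exists_parts
  rw [List.append_eq_append_iff] at hpq
  rcases hpq with ⟨a', ha1, ha2⟩ | ⟨c', hc1, hc2⟩
  · rcases a'.eq_nil_or_concat with rfl | ⟨a'', s, rfl⟩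
    · simp only [List.append_nil] at ha1
      left
      subst ha1
      simp only [List.nil_append] at ha2
      subst ha2
      refine ⟨p ++ r.output, ?_, by simp⟩
      simpa using r.rewrites_of_exists_parts p []
    · have h2 : (x ++ a'') ++ [s] = p ++ [Symbol.nonterminal r.input] := by
        simpa [List.concat_eq_append] using ha1.symm
      obtain ⟨hp, hs⟩ := List.append_inj' h2 rfl
      have hs' : s = Symbol.nonterminal r.input := by simpa using hs
      right
      subst hs' ha2
      refine ⟨a'' ++ r.output ++ q, ?_, by rw [← hp]; simp⟩
      simpa [List.concat_eq_append] using r.rewrites_of_exists_parts a'' q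
  · left
    subst hc1 hc2
    exact ⟨p ++ r.output ++ c', r.rewrites_of_exists_parts p c', by simp⟩

end basic

variable {g : ContextFreeGrammar T}

/-- Step-counted derivations. -/
inductive DerivesIn (g : ContextFreeGrammar T) :
    List (Symbol T g.NT) → List (Symbol T g.NT) → ℕ → Prop
  | refl (w : List (Symbol T g.NT)) : DerivesIn g w w 0
  | head {u v w : List (Symbol T g.NT)} {n : ℕ} :
      g.Produces u v → DerivesIn g v w n → DerivesIn g u w (n + 1)

lemma DerivesIn.derives {u v : List (Symbol T g.NT)} {n : ℕ}
    (h : DerivesIn g u v n) : g.Derives u v := by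
  induction h with
  | refl => rfl
  | head h _ ih => exact h.trans_derives ih


lemma DerivesIn.cases' {u v : List (Symbol T g.NT)} {n : ℕ} (h : DerivesIn g u v n) :
    (n = 0 ∧ u = v) ∨ ∃ w n0, n = n0 + 1 ∧ g.Produces u w ∧ DerivesIn g w v n0 := by
  cases h with
  | refl => exact Or.inl ⟨rfl, rfl⟩
  | head hp hd => exact Or.inr ⟨_, _, rfl, hp, hd⟩

lemma derives_iff_derivesIn {u v : List (Symbol T g.NT)} :
    g.Derives u v ↔ ∃ n, DerivesIn g u v n := by
  constructor
  · intro h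
    induction h using Relation.ReflTransGen.head_induction_on with
    | refl => exact ⟨0, DerivesIn.refl v⟩
    | head hp _ ih => exact ⟨ih.choose + 1, DerivesIn.head hp ih.choose_spec⟩
  · rintro ⟨n, h⟩
    exact h.derives

/-- No rewriting is possible on a string of terminals. -/
lemma derivesIn_terminals (w : List T) {v : List (Symbol T g.NT)} {n : ℕ}
    (h : DerivesIn g (w.map Symbol.terminal) v n) : v = w.map Symbol.terminal := by
  cases h with
  | refl => rfl
  | head hp _ =>
    exfalso
    obtain ⟨r, _, hr⟩ := hp
    obtain ⟨p, q, hpq, -⟩ := hr.exists_parts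
    have : Symbol.nonterminal r.input ∈ w.map (Symbol.terminal (N := g.NT)) := by
      rw [hpq]; simp
    simp at this

lemma DerivesIn.append_split {x y z : List (Symbol T g.NT)} {n : ℕ}
    (h : DerivesIn g (x ++ y) z n) :
    ∃ x' y' n₁ n₂, z = x' ++ y' ∧ n₁ ≤ n ∧ n₂ ≤ n ∧
      DerivesIn g x x' n₁ ∧ DerivesIn g y y' n₂ := by
  induction n generalizing x y with
  | zero =>
    cases h
    exact ⟨x, y, 0, 0, rfl, le_refl _, le_refl _, DerivesIn.refl x, DerivesIn.refl y⟩
  | succ n ih =>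
    cases h with
    | head hp hd =>
      obtain ⟨r, hr, hrw⟩ := hp
      rcases rewrites_append_split hrw with ⟨x', hx', rfl⟩ | ⟨y', hy', rfl⟩
      · obtain ⟨x'', y'', n₁, n₂, rfl, h1, h2, hd1, hd2⟩ := ih hd
        exact ⟨x'', y'', n₁ + 1, n₂, rfl, by omega, by omega,
          DerivesIn.head ⟨r, hr, hx'⟩ hd1, hd2⟩
      · obtain ⟨x'', y'', n₁, n₂, rfl, h1, h2, hd1, hd2⟩ := ih hd
        exact ⟨x'', y'', n₁, n₂ + 1, rfl, by omega, by omega,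
          hd1, DerivesIn.head ⟨r, hr, hy'⟩ hd2⟩

/-- If a string of symbols derives a string of terminals, the result splits accordingly. -/
lemma DerivesIn.append_split_terminals {x y : List (Symbol T g.NT)} {w : List T} {n : ℕ}
    (h : DerivesIn g (x ++ y) (w.map Symbol.terminal) n) :
    ∃ w₁ w₂ n₁ n₂, w = w₁ ++ w₂ ∧ n₁ ≤ n ∧ n₂ ≤ n ∧
      DerivesIn g x (w₁.map Symbol.terminal) n₁ ∧ DerivesIn g y (w₂.map Symbol.terminal) n₂ := by
  obtain ⟨x', y', n₁, n₂, hz, h1, h2, hd1, hd2⟩ := h.append_split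
  obtain ⟨w₁, w₂, rfl, hx', hy'⟩ := List.map_eq_append_iff.mp hz
  exact ⟨w₁, w₂, n₁, n₂, rfl, h1, h2, hx' ▸ hd1, hy' ▸ hd2⟩


attribute [local instance] Classical.propDecidable

section lifting
variable {N : Type}

/-- Embed symbols over `N` into symbols over `N ⊕ N` (the `inl` copy). -/
def liftSym : Symbol T N → Symbol T (N ⊕ N)
  | .terminal t => .terminal t
  | .nonterminal B => .nonterminal (Sum.inl B)

lemma liftSym_injective : Function.Injective (liftSym (T := T) (N := N)) := by
  intro x y h
  cases x <;> cases y <;> simp [liftSym] at h <;> simp [h]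

@[simp] lemma liftSym_map_terminal (w : List T) :
    (w.map Symbol.terminal).map (liftSym (N := N)) = w.map Symbol.terminal := by
  induction w with
  | nil => rfl
  | cons x xs ih => simp [liftSym, ih]

/-- Lift a rule to the `inl` copy. -/
def liftRule (r : ContextFreeRule T N) : ContextFreeRule T (N ⊕ N) :=
  ⟨Sum.inl r.input, r.output.map liftSym⟩

lemma lift_eq_append_nt {α : List (Symbol T N)} {x : N ⊕ N}
    {p' q' : List (Symbol T (N ⊕ N))}
    (h : α.map liftSym = p' ++ [Symbol.nonterminal x] ++ q') :
    ∃ A p q, x = Sum.inl A ∧ α = p ++ [Symbol.nonterminal A] ++ q ∧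
      p' = p.map liftSym ∧ q' = q.map liftSym := by
  rw [List.append_assoc] at h
  obtain ⟨p, rest, rfl, hp, hrest⟩ := List.map_eq_append_iff.mp h
  obtain ⟨m, q, rfl, hm, hq⟩ := List.map_eq_append_iff.mp hrest
  match m, hm with
  | [Symbol.nonterminal A], hm =>
    simp [liftSym] at hm
    exact ⟨A, p, q, hm.symm, by simp, hp.symm, hq.symm⟩
  | [Symbol.terminal t], hm => simp [liftSym] at hm
  | [], hm => simp at hm
  | _ :: _ :: _, hm => simp at hm

end lifting

variable (g : ContextFreeGrammar.{uT} T) (a : T)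

local notation "N'" => g.NT ⊕ g.NT

/-- Rules obtained from a decomposition of a rule output. -/
noncomputable def splitRules (A : g.NT) : List (Symbol T g.NT) → Finset (ContextFreeRule T N')
  | [] => ∅
  | .terminal b :: post =>
      if b = a then {⟨Sum.inr A, post.map liftSym⟩} else ∅
  | .nonterminal B :: post =>
      {⟨Sum.inr A, Symbol.nonterminal (Sum.inr B) :: post.map liftSym⟩}

noncomputable def quotRulesOf (r : ContextFreeRule T g.NT) : Finset (ContextFreeRule T N') :=
  (Finset.range r.output.length).biUnion fun i =>
    if (∀ x ∈ r.output.take i, g.Derives [x] []) then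
      splitRules g a r.input (r.output.drop i)
    else ∅

/-- The grammar for the left quotient of `g.language` by the letter `a`. -/
@[reducible] noncomputable def derivGrammar : ContextFreeGrammar.{uT} T :=
  ⟨N', Sum.inr g.initial,
    g.rules.image liftRule ∪ g.rules.biUnion (quotRulesOf g a)⟩

lemma mem_splitRules {A : g.NT} {ss : List (Symbol T g.NT)} {r' : ContextFreeRule T N'}
    (h : r' ∈ splitRules g a A ss) :
    ∃ post, (ss = Symbol.terminal a :: post ∧ r' = ⟨Sum.inr A, post.map liftSym⟩) ∨
      (∃ B, ss = Symbol.nonterminal B :: post ∧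
        r' = ⟨Sum.inr A, Symbol.nonterminal (Sum.inr B) :: post.map liftSym⟩) := by
  match ss with
  | [] => simp [splitRules] at h
  | .terminal b :: post =>
    rw [splitRules] at h
    split at h
    · next hb => subst hb; simp at h; exact ⟨post, Or.inl ⟨rfl, h⟩⟩
    · simp at h
  | .nonterminal B :: post =>
    rw [splitRules] at h
    simp at h
    exact ⟨post, Or.inr ⟨B, rfl, h⟩⟩

lemma mem_quotRulesOf {r : ContextFreeRule T g.NT} {r' : ContextFreeRule T N'}
    (h : r' ∈ quotRulesOf g a r) :
    ∃ pre rest, r.output = pre ++ rest ∧ (∀ x ∈ pre, g.Derives [x] []) ∧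
      r' ∈ splitRules g a r.input rest := by
  rw [quotRulesOf, Finset.mem_biUnion] at h
  obtain ⟨i, hi, h⟩ := h
  split at h
  · next hnull => exact ⟨r.output.take i, r.output.drop i, (List.take_append_drop i _).symm,
      hnull, h⟩
  · simp at h

lemma splitRules_mem_quotRulesOf {r : ContextFreeRule T g.NT} {r' : ContextFreeRule T N'}
    {pre s : _} {post : List (Symbol T g.NT)}
    (hout : r.output = pre ++ s :: post) (hnull : ∀ x ∈ pre, g.Derives [x] [])
    (h : r' ∈ splitRules g a r.input (s :: post)) :
    r' ∈ quotRulesOf g a r := by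
  rw [quotRulesOf, Finset.mem_biUnion]
  refine ⟨pre.length, ?_, ?_⟩
  · rw [Finset.mem_range, hout]
    simp
  · rw [hout]
    rw [if_pos]
    · simpa [List.drop_left] using h
    · intro x hx
      rw [List.take_left] at hx
      exact hnull x hx

section part4

lemma mem_derivRules {r' : ContextFreeRule T N'}
    (h : r' ∈ (derivGrammar g a).rules) :
    (∃ r ∈ g.rules, r' = liftRule r) ∨ ∃ r ∈ g.rules, r' ∈ quotRulesOf g a r := by
  unfold derivGrammar at h
  simp only [Finset.mem_union, Finset.mem_image, Finset.mem_biUnion] at h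
  rcases h with ⟨r, hr, rfl⟩ | ⟨r, hr, h⟩
  · exact Or.inl ⟨r, hr, rfl⟩
  · exact Or.inr ⟨r, hr, h⟩

lemma rules_inl {A : g.NT} {r' : ContextFreeRule T N'}
    (h : r' ∈ (derivGrammar g a).rules) (hin : r'.input = Sum.inl A) :
    ∃ r ∈ g.rules, r.input = A ∧ r'.output = r.output.map liftSym := by
  rcases mem_derivRules g a h with ⟨r, hr, rfl⟩ | ⟨r, hr, h⟩
  · rw [liftRule] at hin ⊢
    simp at hin ⊢
    exact ⟨r, hr, hin, rfl⟩
  · exfalso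
    obtain ⟨pre, rest, -, -, hsp⟩ := mem_quotRulesOf g a h
    obtain ⟨post, hc⟩ := mem_splitRules g a hsp
    rcases hc with ⟨-, rfl⟩ | ⟨B, -, rfl⟩ <;> simp at hin

lemma rules_inr {A : g.NT} {r' : ContextFreeRule T N'}
    (h : r' ∈ (derivGrammar g a).rules) (hin : r'.input = Sum.inr A) :
    ∃ r ∈ g.rules, r.input = A ∧ ∃ pre s post, r.output = pre ++ s :: post ∧
      (∀ x ∈ pre, g.Derives [x] []) ∧
      ((s = Symbol.terminal a ∧ r'.output = post.map liftSym) ∨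
        ∃ B, s = Symbol.nonterminal B ∧
          r'.output = Symbol.nonterminal (Sum.inr B) :: post.map liftSym) := by
  rcases mem_derivRules g a h with ⟨r, hr, rfl⟩ | ⟨r, hr, h⟩
  · exfalso; rw [liftRule] at hin; simp at hin
  · obtain ⟨pre, rest, hout, hnull, hsp⟩ := mem_quotRulesOf g a h
    obtain ⟨post, hc⟩ := mem_splitRules g a hsp
    rcases hc with ⟨hrest, rfl⟩ | ⟨B, hrest, rfl⟩
    · simp at hin
      exact ⟨r, hr, hin, pre, Symbol.terminal a, post, by rw [hout, hrest],
        hnull, Or.inl ⟨rfl, rfl⟩⟩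
    · simp at hin
      exact ⟨r, hr, hin, pre, Symbol.nonterminal B, post, by rw [hout, hrest],
        hnull, Or.inr ⟨B, rfl, rfl⟩⟩

lemma produces_lift {α β : List (Symbol T g.NT)} (h : g.Produces α β) :
    (derivGrammar g a).Produces (α.map liftSym) (β.map liftSym) := by
  obtain ⟨r, hr, hrw⟩ := h
  obtain ⟨p, q, rfl, rfl⟩ := hrw.exists_parts
  refine ⟨liftRule r, ?_, ?_⟩
  · unfold derivGrammar
    simp only [Finset.mem_union, Finset.mem_image]
    exact Or.inl ⟨r, hr, rfl⟩
  · have := (liftRule r).rewrites_of_exists_parts (p.map liftSym) (q.map liftSym)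
    simpa [liftRule, liftSym] using this

lemma derives_lift {α β : List (Symbol T g.NT)} (h : g.Derives α β) :
    (derivGrammar g a).Derives (α.map liftSym) (β.map liftSym) := by
  induction h with
  | refl => rfl
  | tail _ hp ih => exact ih.trans_produces (produces_lift g a hp)

lemma derives_lift_terminals {α : List (Symbol T g.NT)} {w : List T}
    (h : g.Derives α (w.map Symbol.terminal)) :
    (derivGrammar g a).Derives (α.map liftSym) (w.map Symbol.terminal) := by
  have := derives_lift g a h
  rwa [liftSym_map_terminal] at this

lemma derives_nil_of_null {pre : List (Symbol T g.NT)}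
    (h : ∀ x ∈ pre, g.Derives [x] []) : g.Derives pre [] := by
  induction pre with
  | nil => rfl
  | cons x xs ih =>
    have h1 : g.Derives ([x] ++ xs) ([] ++ xs) := (h x (by simp)).append_right xs
    simp at h1
    exact h1.trans (ih fun y hy => h y (by simp [hy]))

lemma derives_drop_null {pre rest : List (Symbol T g.NT)}
    (h : ∀ x ∈ pre, g.Derives [x] []) : g.Derives (pre ++ rest) rest := by
  have := (derives_nil_of_null g h).append_right rest
  simpa using this

end part4

section part5

lemma quot_split (n : ℕ)
    (IH : ∀ m, m ≤ n → ∀ (A : g.NT) (w : List T),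
      DerivesIn g [Symbol.nonterminal A] ((a :: w).map Symbol.terminal) m →
      (derivGrammar g a).Derives [Symbol.nonterminal (Sum.inr A)] (w.map Symbol.terminal)) :
    ∀ (α : List (Symbol T g.NT)) (w : List T) (m : ℕ), m ≤ n →
    DerivesIn g α ((a :: w).map Symbol.terminal) m →
    ∃ pre s post w₁ w₂, α = pre ++ s :: post ∧ w = w₁ ++ w₂ ∧
      (∀ x ∈ pre, g.Derives [x] []) ∧
      (derivGrammar g a).Derives (post.map liftSym) (w₂.map Symbol.terminal) ∧
      ((s = Symbol.terminal a ∧ w₁ = []) ∨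
        ∃ B, s = Symbol.nonterminal B ∧
          (derivGrammar g a).Derives [Symbol.nonterminal (Sum.inr B)]
            (w₁.map Symbol.terminal)) := by
  intro α
  induction α with
  | nil =>
    intro w m hm h
    have h0 : DerivesIn g (([] : List T).map Symbol.terminal) ((a :: w).map Symbol.terminal) m :=
      by simpa using h
    have := derivesIn_terminals ([] : List T) h0
    simp at this
  | cons s α' ihα =>
    intro w m hm h
    have h' : DerivesIn g ([s] ++ α') ((a :: w).map Symbol.terminal) m := by simpa using h
    obtain ⟨w₁', w₂', m₁, m₂, hw, hm₁, hm₂, hd1, hd2⟩ := h'.append_split_terminals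
    cases w₁' with
    | nil =>
      simp at hw
      subst hw
      obtain ⟨pre, s', post, w₁, w₂, hα, hwsplit, hnull, hpost, hcase⟩ :=
        ihα w m₂ (le_trans hm₂ hm) hd2
      refine ⟨s :: pre, s', post, w₁, w₂, by rw [hα]; rfl, hwsplit, ?_, hpost, hcase⟩
      intro x hx
      rcases List.mem_cons.mp hx with rfl | hx'
      · simpa using hd1.derives
      · exact hnull x hx'
    | cons b w₁'' =>
      simp at hw
      obtain ⟨rfl, hw⟩ := hw
      subst hw
      cases s with
      | terminal c =>
        have h1 : DerivesIn g ([c].map Symbol.terminal)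
            ((a :: w₁'').map Symbol.terminal) m₁ := by simpa using hd1
        have := derivesIn_terminals [c] h1
        simp at this
        obtain ⟨rfl, rfl⟩ := this
        exact ⟨[], Symbol.terminal a, α', [], w₂', by simp, by simp, by simp,
          derives_lift_terminals g a hd2.derives, Or.inl ⟨rfl, rfl⟩⟩
      | nonterminal B =>
        have hB := IH m₁ (le_trans hm₁ hm) B w₁'' hd1
        exact ⟨[], Symbol.nonterminal B, α', w₁'', w₂', by simp, rfl, by simp,
          derives_lift_terminals g a hd2.derives, Or.inr ⟨B, rfl, hB⟩⟩

lemma quot_complete (n : ℕ) :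
    ∀ (A : g.NT) (w : List T),
      DerivesIn g [Symbol.nonterminal A] ((a :: w).map Symbol.terminal) n →
      (derivGrammar g a).Derives [Symbol.nonterminal (Sum.inr A)] (w.map Symbol.terminal) := by
  induction n using Nat.strong_induction_on with
  | _ n ih =>
  intro A w h
  cases h with
  | head hp hd =>
    rename_i v n'
    obtain ⟨r, hr, hrw⟩ := hp
    obtain ⟨p, q, hpq, rfl⟩ := hrw.exists_parts
    rcases p with _ | ⟨x, xs⟩
    · simp at hpq
      obtain ⟨hA, hq⟩ := hpq
      subst hq
      simp only [List.append_nil] at hd ⊢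
      -- hd : DerivesIn g r.output ((a :: w).map terminal) n'
      have IH' : ∀ m, m ≤ n' → ∀ (A : g.NT) (w : List T),
          DerivesIn g [Symbol.nonterminal A] ((a :: w).map Symbol.terminal) m →
          (derivGrammar g a).Derives [Symbol.nonterminal (Sum.inr A)]
            (w.map Symbol.terminal) :=
        fun m hm => ih m (by omega)
      obtain ⟨pre, s, post, w₁, w₂, hout, hwsplit, hnull, hpost, hcase⟩ :=
        quot_split g a n' IH' r.output w n' (le_refl _) hd
      rcases hcase with ⟨rfl, rfl⟩ | ⟨B, rfl, hB⟩
      · -- terminal case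
        have hmem : (⟨Sum.inr r.input, post.map liftSym⟩ : ContextFreeRule T N') ∈
            splitRules g a r.input (Symbol.terminal a :: post) := by
          simp [splitRules]
        have hq := splitRules_mem_quotRulesOf g a hout hnull hmem
        have hrules : (⟨Sum.inr r.input, post.map liftSym⟩ : ContextFreeRule T N') ∈
            (derivGrammar g a).rules := by
          unfold derivGrammar
          simp only [Finset.mem_union, Finset.mem_biUnion]
          exact Or.inr ⟨r, hr, hq⟩
        have hstep : (derivGrammar g a).Produces [Symbol.nonterminal (Sum.inr r.input)]
            (post.map liftSym) :=
          ⟨_, hrules, ContextFreeRule.Rewrites.input_output⟩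
        rw [hA]
        simp only [List.nil_append] at hwsplit
        subst hwsplit
        exact hstep.trans_derives hpost
      · -- nonterminal case
        have hmem : (⟨Sum.inr r.input, Symbol.nonterminal (Sum.inr B) :: post.map liftSym⟩ :
            ContextFreeRule T N') ∈ splitRules g a r.input (Symbol.nonterminal B :: post) := by
          simp [splitRules]
        have hq := splitRules_mem_quotRulesOf g a hout hnull hmem
        have hrules : (⟨Sum.inr r.input, Symbol.nonterminal (Sum.inr B) :: post.map liftSym⟩ :
            ContextFreeRule T N') ∈ (derivGrammar g a).rules := by
          unfold derivGrammar
          simp only [Finset.mem_union, Finset.mem_biUnion]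
          exact Or.inr ⟨r, hr, hq⟩
        have hstep : (derivGrammar g a).Produces [Symbol.nonterminal (Sum.inr r.input)]
            (Symbol.nonterminal (Sum.inr B) :: post.map liftSym) :=
          ⟨_, hrules, ContextFreeRule.Rewrites.input_output⟩
        rw [hA]
        refine hstep.trans_derives ?_
        have d1 : (derivGrammar g a).Derives
            ([Symbol.nonterminal (Sum.inr B)] ++ post.map liftSym)
            (w₁.map Symbol.terminal ++ post.map liftSym) := hB.append_right _
        have d2 : (derivGrammar g a).Derives
            (w₁.map Symbol.terminal ++ post.map liftSym)
            (w₁.map Symbol.terminal ++ w₂.map Symbol.terminal) := hpost.append_left _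
        have := d1.trans d2
        rw [hwsplit]
        simpa using this
    · simp at hpq

end part5

section part6

lemma lift_eq_terminals {α : List (Symbol T g.NT)} {w : List T}
    (h : α.map liftSym = w.map Symbol.terminal) : α = w.map Symbol.terminal := by
  apply List.map_injective_iff.mpr liftSym_injective
  rw [h, liftSym_map_terminal]

lemma quot_sound (n : ℕ) :
    (∀ (α : List (Symbol T g.NT)) (w : List T),
      DerivesIn (derivGrammar g a) (α.map liftSym) (w.map Symbol.terminal) n →
      g.Derives α (w.map Symbol.terminal)) ∧
    (∀ (A : g.NT) (α : List (Symbol T g.NT)) (w : List T),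
      DerivesIn (derivGrammar g a)
        (Symbol.nonterminal (Sum.inr A) :: α.map liftSym) (w.map Symbol.terminal) n →
      g.Derives (Symbol.nonterminal A :: α) ((a :: w).map Symbol.terminal)) := by
  induction n using Nat.strong_induction_on with
  | _ n ih =>
  constructor
  · intro α w h
    rcases h.cases' with ⟨rfl, heq⟩ | ⟨v, n0, rfl, hp, hd⟩
    · rw [lift_eq_terminals g heq]
    · obtain ⟨r', hr', hrw⟩ := hp
      obtain ⟨p', q', hpq, rfl⟩ := hrw.exists_parts
      obtain ⟨A, p₀, q₀, hin, rfl, rfl, rfl⟩ := lift_eq_append_nt hpq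
      obtain ⟨r, hr, hrin, hrout⟩ := rules_inl g a hr' hin
      have hv : p₀.map liftSym ++ r'.output ++ q₀.map liftSym =
          (p₀ ++ r.output ++ q₀).map liftSym := by simp [hrout]
      rw [hv] at hd
      have step : g.Produces (p₀ ++ [Symbol.nonterminal A] ++ q₀) (p₀ ++ r.output ++ q₀) := by
        refine ⟨r, hr, ?_⟩
        rw [← hrin]
        exact r.rewrites_of_exists_parts p₀ q₀
      exact step.trans_derives ((ih n0 (by omega)).1 _ w hd)
  · intro A α w h
    rcases h.cases' with ⟨rfl, heq⟩ | ⟨v, n0, rfl, hp, hd⟩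
    · exfalso; cases w <;> simp at heq
    · obtain ⟨r', hr', hrw⟩ := hp
      obtain ⟨p', q', hpq, rfl⟩ := hrw.exists_parts
      rcases p' with _ | ⟨x, p''⟩
      · simp only [List.nil_append, List.cons_append, List.cons.injEq] at hpq
        obtain ⟨hin, hq'⟩ := hpq
        have hin' : r'.input = Sum.inr A := by
          cases hx : r'.input <;> simp [hx] at hin <;> simp [hin]
        subst hq'
        obtain ⟨r, hr, hrin, pre, s, post, hout, hnull, hshape⟩ := rules_inr g a hr' hin'
        have step : g.Produces (Symbol.nonterminal A :: α) (r.output ++ α) := by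
          refine ⟨r, hr, ?_⟩
          have := r.rewrites_of_exists_parts [] α
          rw [hrin] at this
          simpa using this
        rcases hshape with ⟨rfl, hro⟩ | ⟨B, rfl, hro⟩
        · -- s = terminal a
          have hv : r'.output ++ α.map liftSym = (post ++ α).map liftSym := by simp [hro]
          rw [List.nil_append, hv] at hd
          have hder := (ih n0 (by omega)).1 _ w hd
          refine step.trans_derives ?_
          have h1 : g.Derives (r.output ++ α)
              (Symbol.terminal a :: (post ++ α)) := by
            rw [hout]
            have := derives_drop_null g hnull (rest := Symbol.terminal a :: post)
            have h2 := this.append_right α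
            simpa using h2
          refine h1.trans ?_
          have := hder.append_left [Symbol.terminal a]
          simpa using this
        · -- s = nonterminal B
          have hv : r'.output ++ α.map liftSym =
              Symbol.nonterminal (Sum.inr B) :: (post ++ α).map liftSym := by simp [hro]
          rw [List.nil_append, hv] at hd
          have hder := (ih n0 (by omega)).2 B _ w hd
          refine step.trans_derives ?_
          have h1 : g.Derives (r.output ++ α)
              (Symbol.nonterminal B :: (post ++ α)) := by
            rw [hout]
            have := derives_drop_null g hnull (rest := Symbol.nonterminal B :: post)
            have h2 := this.append_right α
            simpa using h2
          exact h1.trans hder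
      · simp only [List.cons_append, List.cons.injEq] at hpq
        obtain ⟨rfl, hpq⟩ := hpq
        obtain ⟨A', p₀, q₀, hin, rfl, rfl, rfl⟩ := lift_eq_append_nt hpq
        obtain ⟨r, hr, hrin, hrout⟩ := rules_inl g a hr' hin
        have hv : (Symbol.nonterminal (Sum.inr A) :: p₀.map liftSym) ++ r'.output ++
            q₀.map liftSym =
            Symbol.nonterminal (Sum.inr A) :: (p₀ ++ r.output ++ q₀).map liftSym := by
          simp [hrout]
        rw [hv] at hd
        have hder := (ih n0 (by omega)).2 A _ w hd
        have step : g.Produces (Symbol.nonterminal A :: (p₀ ++ [Symbol.nonterminal A'] ++ q₀))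
            (Symbol.nonterminal A :: (p₀ ++ r.output ++ q₀)) := by
          have : g.Produces (p₀ ++ [Symbol.nonterminal A'] ++ q₀) (p₀ ++ r.output ++ q₀) := by
            refine ⟨r, hr, ?_⟩
            rw [← hrin]
            exact r.rewrites_of_exists_parts p₀ q₀
          have h2 := this.append_left [Symbol.nonterminal A]
          simpa using h2
        exact step.trans_derives hder

end part6

section part7

lemma derivGrammar_language :
    (derivGrammar g a).language = {w : List T | a :: w ∈ g.language} := by
  ext w
  change w ∈ _ ↔ a :: w ∈ g.language
  rw [mem_language_iff, mem_language_iff]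
  constructor
  · intro h
    obtain ⟨n, hn⟩ := derives_iff_derivesIn.mp h
    have h2 : DerivesIn (derivGrammar g a)
        (Symbol.nonterminal (Sum.inr g.initial) :: ([] : List (Symbol T g.NT)).map liftSym)
        (w.map Symbol.terminal) n := by simpa using hn
    have := (quot_sound g a n).2 g.initial [] w h2
    simpa using this
  · intro h
    obtain ⟨n, hn⟩ := derives_iff_derivesIn.mp h
    exact quot_complete g a n g.initial w hn

end part7

section closure

lemma isContextFree_cons_quot {L : Language T} (h : L.IsContextFree) (a : T) :
    Language.IsContextFree {w : List T | a :: w ∈ L} := by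
  obtain ⟨g, rfl⟩ := h
  exact ⟨derivGrammar g a, derivGrammar_language g a⟩

lemma isContextFree_prepend_quot (u : List T) {L : Language T} (h : L.IsContextFree) :
    Language.IsContextFree {w : List T | u ++ w ∈ L} := by
  induction u generalizing L with
  | nil => exact h
  | cons x u' ih =>
    exact ih (isContextFree_cons_quot h x)

lemma isContextFree_append_quot (v : List T) {L : Language T} (h : L.IsContextFree) :
    Language.IsContextFree {w : List T | w ++ v ∈ L} := by
  have h2 := isContextFree_prepend_quot v.reverse (h.reverse)
  have h3 := h2.reverse
  refine (congrArg Language.IsContextFree ?_).mpr h3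
  ext w
  show w ++ v ∈ L ↔ (v.reverse ++ w.reverse).reverse ∈ L
  rw [List.reverse_append, List.reverse_reverse, List.reverse_reverse]

end closure

end CFAux

/-- If `L(G,K,ψ)` is context-free then for every `g ∈ G` the word problem
of the conjugate subgroup `g⁻¹Kg` is context-free; note `ψ(w) ∈ g⁻¹Kg ↔ g·ψ(w)·g⁻¹ ∈ K`. -/
theorem contextFree_conjugate_pair
    {G : Type} [Group G] [Group.FG G] (K : Subgroup G)
    {α : Type} [Fintype α] (ψ : α → G)
    (hψ : ∀ g : G, ∃ w : List α, (w.map ψ).prod = g)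
    (hcf : Language.IsContextFree {w : List α | (w.map ψ).prod ∈ K}) :
    ∀ g : G, Language.IsContextFree
      {w : List α | g * (w.map ψ).prod * g⁻¹ ∈ K} := by
  intro g
  obtain ⟨u, hu⟩ := hψ g
  obtain ⟨v, hv⟩ := hψ g⁻¹
  have h1 := CFAux.isContextFree_prepend_quot u hcf
  have h2 := CFAux.isContextFree_append_quot v h1
  refine (congrArg Language.IsContextFree ?_).mpr h2
  ext w
  have key : ((u ++ (w ++ v)).map ψ).prod = g * (w.map ψ).prod * g⁻¹ := by
    simp [List.map_append, List.prod_append, hu, hv, mul_assoc]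
  show g * (w.map ψ).prod * g⁻¹ ∈ K ↔ ((u ++ (w ++ v)).map ψ).prod ∈ K
  rw [key]
end

section
/- Let G be a virtually free finitely generated group (i.e., G contains a free subgroup of finite index) and let K be a finitely generated subgroup of G. Then for every semigroup presentation ψ : Σ → G, the language L(G,K,ψ) = { w ∈ Σ* : ψ(w) ∈ K } is context-free; that is, the pair (G,K) is context-free. -/
namespace CFPair

open FreeGroup

lemma step_exists {B : Type} {L M : List (B × Bool)} (h : FreeGroup.Red.Step L M) :
    ∃ (l₁ l₂ : List (B × Bool)) (b : B) (c : Bool),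
      L = l₁ ++ (b, c) :: (b, !c) :: l₂ ∧ M = l₁ ++ l₂ := by
  cases h; exact ⟨_, _, _, _, rfl, rfl⟩

lemma mk_singleton_ne_one {B : Type} (x : B × Bool) : FreeGroup.mk [x] ≠ 1 := by
  intro h
  have := (FreeGroup.Red.exact (L₂ := [])).mp (by simpa [FreeGroup.one_eq_mk] using h)
  obtain ⟨c, h1, h2⟩ := this
  rw [FreeGroup.Red.nil_iff] at h2
  subst h2
  rw [FreeGroup.Red.singleton_iff] at h1
  exact List.cons_ne_nil _ _ h1.symm

lemma red_nil_of_mk_eq_one {B : Type} {L : List (B × Bool)} (h : FreeGroup.mk L = 1) :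
    FreeGroup.Red L [] := by
  have := (FreeGroup.Red.exact (L₂ := [])).mp (by simpa [FreeGroup.one_eq_mk] using h)
  obtain ⟨c, h1, h2⟩ := this
  rw [FreeGroup.Red.nil_iff] at h2
  subst h2; exact h1

/-- Key combinatorial lemma: if `x :: L` reduces to `1` in the free group, then `L` splits as
`L₁ ++ x⁻¹ :: L₂` with both parts reducing to `1`. -/
lemma key_split {B : Type} {x : B × Bool} {L : List (B × Bool)}
    (h : FreeGroup.mk (x :: L) = 1) :
    ∃ L₁ L₂, L = L₁ ++ (x.1, !x.2) :: L₂ ∧ FreeGroup.mk L₁ = 1 ∧ FreeGroup.mk L₂ = 1 := by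
  suffices H : ∀ n (x : B × Bool) (L : List (B × Bool)), L.length ≤ n →
      FreeGroup.mk (x :: L) = 1 →
      ∃ L₁ L₂, L = L₁ ++ (x.1, !x.2) :: L₂ ∧ FreeGroup.mk L₁ = 1 ∧ FreeGroup.mk L₂ = 1 by
    exact H L.length x L le_rfl h
  clear h L x
  intro n
  induction n with
  | zero =>
    intro x L hL h
    have : L = [] := List.length_eq_zero_iff.mp (Nat.le_zero.mp hL)
    subst this
    exact absurd h (mk_singleton_ne_one x)
  | succ n ih =>
    intro x L hL h
    rcases Relation.ReflTransGen.cases_head (red_nil_of_mk_eq_one h) with heq | ⟨M, hstep, hM⟩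
    · exact absurd heq (List.cons_ne_nil _ _)
    obtain ⟨l₁, l₂, b, c, hL1, hM1⟩ := step_exists hstep
    have hmkM : FreeGroup.mk M = 1 := by
      rw [← h]; exact (Quot.sound hstep).symm
    match l₁, hL1 with
    | [], hL1 =>
      -- x = (b,c), L = (b,!c) :: l₂
      simp only [List.nil_append, List.cons.injEq] at hL1
      obtain ⟨hx, hLl⟩ := hL1
      refine ⟨[], l₂, ?_, by simp [FreeGroup.one_eq_mk], ?_⟩
      · simpa [hx] using hLl
      · subst hM1; simpa using hmkM
    | y :: l₁', hL1 =>
      simp only [List.cons_append, List.cons.injEq] at hL1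
      obtain ⟨hxy, hLl⟩ := hL1
      subst hxy
      -- L = l₁' ++ (b,c)::(b,!c)::l₂,  M = x :: (l₁' ++ l₂)
      have hMx : M = x :: (l₁' ++ l₂) := hM1
      have hlen : (l₁' ++ l₂).length ≤ n := by
        have : L.length ≤ n + 1 := hL
        rw [hLl] at this
        simp only [List.length_append, List.length_cons] at this ⊢
        omega
      have := ih x (l₁' ++ l₂) hlen (by rw [← hMx]; exact hmkM)
      obtain ⟨A, C, hsplit, hA, hC⟩ := this
      rcases List.append_eq_append_iff.mp hsplit with ⟨a', ha1, ha2⟩ | ⟨c', hc1, hc2⟩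
      · -- A = l₁' ++ a', l₂ = a' ++ (x.1,!x.2) :: C  : marked letter inside l₂
        refine ⟨l₁' ++ (b, c) :: (b, !c) :: a', C, ?_, ?_, hC⟩
        · rw [hLl, ha2]; simp
        · rw [← hA, ha1]
          change FreeGroup.mk (l₁' ++ ((b, c) :: (b, !c) :: a')) = FreeGroup.mk (l₁' ++ a')
          exact Quot.sound (FreeGroup.Red.Step.not)
      · -- l₁' = A ++ c',  (x.1,!x.2) :: C = c' ++ l₂
        match c', hc2 with
        | [], hc2 =>
          -- l₂ = (x.1,!x.2) :: C : marked letter at head of l₂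
          simp only [List.nil_append] at hc2
          refine ⟨A ++ [(b, c), (b, !c)], C, ?_, ?_, hC⟩
          · rw [hLl, hc1, ← hc2]; simp
          · have : FreeGroup.mk (A ++ (b, c) :: (b, !c) :: []) = FreeGroup.mk (A ++ []) :=
              Quot.sound (FreeGroup.Red.Step.not)
            simpa [hA] using this
        | z :: c'', hc2 =>
          simp only [List.cons_append, List.cons.injEq] at hc2
          obtain ⟨hz, hc2⟩ := hc2
          -- marked letter is z at head of c', inside l₁'
          refine ⟨A, c'' ++ (b, c) :: (b, !c) :: l₂, ?_, hA, ?_⟩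
          · rw [hLl, hc1, ← hz]; simp
          · have : FreeGroup.mk (c'' ++ (b, c) :: (b, !c) :: l₂) = FreeGroup.mk (c'' ++ l₂) :=
              Quot.sound (FreeGroup.Red.Step.not)
            rw [this, ← hc2, hC]


section Machine

variable {A Q B : Type}

/-- A walk of a "pushdown machine": transitions `(q, oa, ox, q')` read the optional
letter `oa` and emit the optional stack letter `ox`. The walk records the number of steps,
the word read, and the full sequence of emitted stack letters. -/
inductive PWalk (Δ : Finset (Q × Option A × Option (B × Bool) × Q)) :
    ℕ → Q → List A → List (B × Bool) → Q → Prop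
  | nil (q : Q) : PWalk Δ 0 q [] [] q
  | cons {n : ℕ} {q q' q'' : Q} (oa : Option A) (ox : Option (B × Bool))
      {w : List A} {s : List (B × Bool)}
      (hd : (q, oa, ox, q') ∈ Δ) (hw : PWalk Δ n q' w s q'') :
      PWalk Δ (n + 1) q (oa.toList ++ w) (ox.toList ++ s) q''

variable {Δ : Finset (Q × Option A × Option (B × Bool) × Q)}

lemma PWalk.append {n m : ℕ} {q q' q'' : Q} {w w' : List A} {s s' : List (B × Bool)}
    (h1 : PWalk Δ n q w s q') (h2 : PWalk Δ m q' w' s' q'') :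
    PWalk Δ (n + m) q (w ++ w') (s ++ s') q'' := by
  induction h1 with
  | nil q => simpa using h2
  | cons oa ox hd hw ih =>
    have := PWalk.cons oa ox hd (ih h2)
    simpa [List.append_assoc, Nat.add_right_comm] using this


/-- Cancellation of an adjacent inverse pair. -/
lemma mk_pair_cancel (x : B × Bool) : FreeGroup.mk [x, (x.1, !x.2)] = 1 := by
  have h : FreeGroup.Red.Step ([] ++ (x.1, x.2) :: (x.1, !x.2) :: ([] : List (B × Bool)))
      ([] ++ ([] : List (B × Bool))) := FreeGroup.Red.Step.not
  have : (FreeGroup.mk ([] ++ (x.1, x.2) :: (x.1, !x.2) :: ([] : List (B × Bool))) : FreeGroup B)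
      = FreeGroup.mk ([] ++ []) := Quot.sound h
  simpa [FreeGroup.one_eq_mk] using this

lemma statesSet_finite (Δ : Finset (Q × Option A × Option (B × Bool) × Q)) (q₀ qf : Q) :
    {q : Q | (∃ d ∈ Δ, d.1 = q) ∨ (∃ d ∈ Δ, d.2.2.2 = q) ∨ q = q₀ ∨ q = qf}.Finite := by
  apply Set.Finite.subset (Set.Finite.union (Set.Finite.union
    (Set.Finite.image (·.1) Δ.finite_toSet)
    (Set.Finite.image (·.2.2.2) Δ.finite_toSet))
    ((Set.finite_singleton qf).insert q₀))
  rintro q (⟨d, hd, rfl⟩ | ⟨d, hd, rfl⟩ | rfl | rfl)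
  · exact Or.inl (Or.inl ⟨d, hd, rfl⟩)
  · exact Or.inl (Or.inr ⟨d, hd, rfl⟩)
  · exact Or.inr (Set.mem_insert _ _)
  · exact Or.inr (Set.mem_insert_of_mem _ rfl)

/-- All states appearing in the machine, plus the initial and final states. -/
noncomputable def states (Δ : Finset (Q × Option A × Option (B × Bool) × Q)) (q₀ qf : Q) :
    Finset Q := (statesSet_finite Δ q₀ qf).toFinset

lemma mem_states {q : Q} {q₀ qf : Q} :
    q ∈ states Δ q₀ qf ↔ (∃ d ∈ Δ, d.1 = q) ∨ (∃ d ∈ Δ, d.2.2.2 = q) ∨ q = q₀ ∨ q = qf :=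
  Set.Finite.mem_toFinset _

lemma source_mem_states {d : Q × Option A × Option (B × Bool) × Q} (hd : d ∈ Δ) (q₀ qf : Q) :
    d.1 ∈ states Δ q₀ qf := mem_states.mpr (Or.inl ⟨d, hd, rfl⟩)

lemma target_mem_states {d : Q × Option A × Option (B × Bool) × Q} (hd : d ∈ Δ) (q₀ qf : Q) :
    d.2.2.2 ∈ states Δ q₀ qf := mem_states.mpr (Or.inr (Or.inl ⟨d, hd, rfl⟩))

lemma init_mem_states (q₀ qf : Q) : q₀ ∈ states Δ q₀ qf :=
  mem_states.mpr (Or.inr (Or.inr (Or.inl rfl)))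

lemma final_mem_states (q₀ qf : Q) : qf ∈ states Δ q₀ qf :=
  mem_states.mpr (Or.inr (Or.inr (Or.inr rfl)))

/-- Terminal symbols corresponding to an optional letter. -/
def optT (oa : Option A) : List (Symbol A (Q × Q)) := oa.toList.map Symbol.terminal

/-- The rules of the "triple construction" grammar, as a set. -/
def ruleSet (Δ : Finset (Q × Option A × Option (B × Bool) × Q)) (q₀ qf : Q) :
    Set (ContextFreeRule A (Q × Q)) :=
  { r | (∃ q ∈ states Δ q₀ qf, r = ⟨(q, q), []⟩)
    ∨ (∃ d ∈ Δ, ∃ q' ∈ states Δ q₀ qf, d.2.2.1 = none ∧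
        r = ⟨(d.1, q'), optT d.2.1 ++ [Symbol.nonterminal (d.2.2.2, q')]⟩)
    ∨ (∃ d₁ ∈ Δ, ∃ d₂ ∈ Δ, ∃ q' ∈ states Δ q₀ qf, ∃ x : B × Bool,
        d₁.2.2.1 = some x ∧ d₂.2.2.1 = some (x.1, !x.2) ∧
        r = ⟨(d₁.1, q'), optT d₁.2.1 ++ [Symbol.nonterminal (d₁.2.2.2, d₂.1)]
              ++ optT d₂.2.1 ++ [Symbol.nonterminal (d₂.2.2.2, q')]⟩) }

lemma ruleSet_finite (Δ : Finset (Q × Option A × Option (B × Bool) × Q)) (q₀ qf : Q) :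
    (ruleSet Δ q₀ qf).Finite := by
  classical
  apply Set.Finite.subset (Set.Finite.union (Set.Finite.union
    (Set.Finite.image (fun q => (⟨(q, q), []⟩ : ContextFreeRule A (Q × Q)))
      (states Δ q₀ qf).finite_toSet)
    (Set.Finite.image (fun p : (Q × Option A × Option (B × Bool) × Q) × Q =>
        (⟨(p.1.1, p.2), optT p.1.2.1 ++ [Symbol.nonterminal (p.1.2.2.2, p.2)]⟩ :
          ContextFreeRule A (Q × Q)))
      ((Δ ×ˢ states Δ q₀ qf).finite_toSet)))
    (Set.Finite.image (fun p : ((Q × Option A × Option (B × Bool) × Q)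
          × (Q × Option A × Option (B × Bool) × Q)) × Q =>
        (⟨(p.1.1.1, p.2), optT p.1.1.2.1 ++ [Symbol.nonterminal (p.1.1.2.2.2, p.1.2.1)]
            ++ optT p.1.2.2.1 ++ [Symbol.nonterminal (p.1.2.2.2.2, p.2)]⟩ :
          ContextFreeRule A (Q × Q)))
      (((Δ ×ˢ Δ) ×ˢ states Δ q₀ qf).finite_toSet)))
  rintro r (⟨q, hq, rfl⟩ | ⟨d, hd, q', hq', hnone, rfl⟩ |
    ⟨d₁, hd₁, d₂, hd₂, q', hq', x, hx₁, hx₂, rfl⟩)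
  · exact Or.inl (Or.inl ⟨q, hq, rfl⟩)
  · exact Or.inl (Or.inr ⟨(d, q'), by simp [hd, hq'], rfl⟩)
  · exact Or.inr ⟨((d₁, d₂), q'), by simp [hd₁, hd₂, hq'], rfl⟩

/-- The "triple construction" grammar associated to a pushdown machine. -/
noncomputable def pdaGrammar (Δ : Finset (Q × Option A × Option (B × Bool) × Q)) (q₀ qf : Q) :
    ContextFreeGrammar A where
  NT := Q × Q
  initial := (q₀, qf)
  rules := (ruleSet_finite Δ q₀ qf).toFinset

lemma mem_pdaGrammar_rules {r : ContextFreeRule A (Q × Q)} {q₀ qf : Q} :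
    r ∈ (pdaGrammar Δ q₀ qf).rules ↔ r ∈ ruleSet Δ q₀ qf :=
  Set.Finite.mem_toFinset _

/-- Semantics of a nonterminal `(q, r)`: words readable on a walk from `q` to `r` whose
emitted stack word is trivial in the free group. -/
def SemNT (Δ : Finset (Q × Option A × Option (B × Bool) × Q)) (p : Q × Q) : Language A :=
  {w | ∃ n s, FreeGroup.mk s = 1 ∧ PWalk Δ n p.1 w s p.2}

def SemSym (Δ : Finset (Q × Option A × Option (B × Bool) × Q)) :
    Symbol A (Q × Q) → Language A
  | .terminal a => {[a]}
  | .nonterminal p => SemNT Δ p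

def SemSF (Δ : Finset (Q × Option A × Option (B × Bool) × Q))
    (l : List (Symbol A (Q × Q))) : Language A :=
  (l.map (SemSym Δ)).prod

lemma SemSF_append (l₁ l₂ : List (Symbol A (Q × Q))) :
    SemSF Δ (l₁ ++ l₂) = SemSF Δ l₁ * SemSF Δ l₂ := by
  simp [SemSF, List.map_append, List.prod_append]

lemma SemSF_single (x : Symbol A (Q × Q)) : SemSF Δ [x] = SemSym Δ x := by
  simp [SemSF]

lemma mem_SemSF_optT {u : List A} {oa : Option A} : u ∈ SemSF Δ (optT oa) ↔ u = oa.toList := by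
  cases oa with
  | none => simp [SemSF, optT, Language.mem_one]
  | some a =>
    simp only [optT, Option.toList, List.map_cons, List.map_nil]
    rw [SemSF_single]
    exact Set.mem_singleton_iff

lemma rule_sound {r : ContextFreeRule A (Q × Q)} {q₀ qf : Q}
    (hr : r ∈ (pdaGrammar Δ q₀ qf).rules) :
    ∀ w : List A, w ∈ SemSF Δ r.output → w ∈ SemNT Δ r.input := by
  rw [mem_pdaGrammar_rules] at hr
  rcases hr with ⟨q, hq, rfl⟩ | ⟨d, hd, q', hq', hnone, rfl⟩ |
    ⟨d₁, hd₁, d₂, hd₂, q', hq', x, hx₁, hx₂, rfl⟩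
  · intro w hw
    simp only [SemSF, List.map_nil, List.prod_nil] at hw
    rw [Language.mem_one] at hw
    subst hw
    exact ⟨0, [], one_eq_mk.symm, PWalk.nil q⟩
  · intro w hw
    rw [SemSF_append, Language.mem_mul] at hw
    obtain ⟨u, hu, v, hv, rfl⟩ := hw
    rw [mem_SemSF_optT] at hu
    rw [SemSF_single] at hv
    obtain ⟨n, s, hmk, hwalk⟩ := hv
    subst hu
    refine ⟨n + 1, s, hmk, ?_⟩
    have hdm : (d.1, d.2.1, d.2.2.1, d.2.2.2) ∈ Δ := by simpa using hd
    rw [hnone] at hdm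
    simpa using PWalk.cons d.2.1 none hdm hwalk
  · intro w hw
    rw [List.append_assoc, List.append_assoc, SemSF_append, Language.mem_mul] at hw
    obtain ⟨u, hu, v, hv, rfl⟩ := hw
    rw [mem_SemSF_optT] at hu
    rw [SemSF_append, Language.mem_mul] at hv
    obtain ⟨v₁, hv₁, v₂, hv₂, rfl⟩ := hv
    rw [SemSF_single] at hv₁
    rw [SemSF_append, Language.mem_mul] at hv₂
    obtain ⟨v₃, hv₃, v₄, hv₄, rfl⟩ := hv₂
    rw [mem_SemSF_optT] at hv₃
    rw [SemSF_single] at hv₄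
    obtain ⟨n₁, s₁, hmk₁, hwalk₁⟩ := hv₁
    obtain ⟨n₂, s₂, hmk₂, hwalk₂⟩ := hv₄
    subst hu hv₃
    have hd₂m : (d₂.1, d₂.2.1, d₂.2.2.1, d₂.2.2.2) ∈ Δ := by simpa using hd₂
    rw [hx₂] at hd₂m
    have hmid : PWalk Δ (n₂ + 1) d₂.1 (d₂.2.1.toList ++ v₄) ((x.1, !x.2) :: s₂) q' := by
      simpa using PWalk.cons d₂.2.1 (some (x.1, !x.2)) hd₂m hwalk₂
    have hcomb := hwalk₁.append hmid
    have hd₁m : (d₁.1, d₁.2.1, d₁.2.2.1, d₁.2.2.2) ∈ Δ := by simpa using hd₁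
    rw [hx₁] at hd₁m
    have hall := PWalk.cons d₁.2.1 (some x) hd₁m hcomb
    refine ⟨n₁ + (n₂ + 1) + 1, x :: (s₁ ++ (x.1, !x.2) :: s₂), ?_, by simpa using hall⟩
    have h1 : (x :: (s₁ ++ (x.1, !x.2) :: s₂))
        = [x] ++ s₁ ++ ([(x.1, !x.2)] ++ s₂) := by simp
    rw [h1, ← mul_mk, ← mul_mk, ← mul_mk, hmk₁, hmk₂, mul_one, mul_one, mul_mk]
    exact mk_pair_cancel x

variable {q₀ qf : Q}

lemma produces_sound {u v : List (Symbol A (Q × Q))}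
    (h : (pdaGrammar Δ q₀ qf).Produces u v) :
    ∀ w : List A, w ∈ SemSF Δ v → w ∈ SemSF Δ u := by
  obtain ⟨r, hr, hrw⟩ := h
  obtain ⟨p, q, rfl, rfl⟩ := hrw.exists_parts
  intro w hw
  erw [SemSF_append, SemSF_append, Language.mem_mul] at hw ⊢
  obtain ⟨uv, huv, z, hz, rfl⟩ := hw
  rw [Language.mem_mul] at huv
  obtain ⟨u', hu', y, hy, rfl⟩ := huv
  have : y ∈ SemSF Δ [Symbol.nonterminal r.input] := by
    rw [SemSF_single]
    exact rule_sound hr y hy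
  exact ⟨u' ++ y, Language.mem_mul.mpr ⟨u', hu', y, this, rfl⟩, z, hz, rfl⟩

lemma derives_sound {u v : List (Symbol A (Q × Q))}
    (h : (pdaGrammar Δ q₀ qf).Derives u v) :
    ∀ w : List A, w ∈ SemSF Δ v → w ∈ SemSF Δ u := by
  induction h with
  | refl => exact fun w hw => hw
  | tail _ hstep ih => exact fun w hw => ih w (produces_sound hstep w hw)

lemma self_mem_SemSF (w : List A) : w ∈ SemSF Δ (w.map Symbol.terminal) := by
  induction w with
  | nil => simp [SemSF, Language.mem_one]
  | cons a w ih =>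
    have : (a :: w).map (Symbol.terminal : A → Symbol A (Q × Q))
        = [Symbol.terminal a] ++ w.map Symbol.terminal := by simp
    rw [this, SemSF_append, Language.mem_mul]
    exact ⟨[a], by rw [SemSF_single]; exact rfl, w, ih, rfl⟩

lemma language_sound {w : List A} (h : w ∈ (pdaGrammar Δ q₀ qf).language) :
    w ∈ SemNT Δ (q₀, qf) := by
  have := derives_sound h w (self_mem_SemSF w)
  rwa [show [Symbol.nonterminal ((pdaGrammar Δ q₀ qf).initial)]
      = [Symbol.nonterminal ((q₀, qf) : Q × Q)] from rfl, SemSF_single] at this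

/-- Splitting a walk at a designated position of its emitted stack word. -/
lemma walk_split {n : ℕ} {q q'' : Q} {w : List A} {s : List (B × Bool)}
    (h : PWalk Δ n q w s q'') {y : B × Bool} {s₂ : List (B × Bool)} :
    ∀ s₁, s = s₁ ++ y :: s₂ →
    ∃ n₁ n₂ q₂ q₃ ob w₁ w₂, n = n₁ + n₂ + 1 ∧ w = w₁ ++ ob.toList ++ w₂ ∧
      PWalk Δ n₁ q w₁ s₁ q₂ ∧ (q₂, ob, some y, q₃) ∈ Δ ∧ PWalk Δ n₂ q₃ w₂ s₂ q'' := by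
  induction h with
  | nil q => intro s₁ hs; exact absurd hs (by simp)
  | cons oa ox hd hw ih =>
    intro s₁ hs
    cases ox with
    | none =>
      simp only [Option.toList, List.nil_append] at hs
      obtain ⟨n₁, n₂, q₂, q₃, ob, w₁, w₂, hn, hww, hw1, hmem, hw2⟩ := ih s₁ hs
      refine ⟨n₁ + 1, n₂, q₂, q₃, ob, oa.toList ++ w₁, w₂, (by omega), ?_, ?_, hmem, hw2⟩
      · rw [hww]; simp [List.append_assoc]
      · simpa using PWalk.cons oa none hd hw1
    | some z =>
      simp only [Option.toList, List.cons_append, List.singleton_append] at hs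
      match s₁, hs with
      | [], hs =>
        simp only [List.nil_append, List.cons.injEq] at hs
        obtain ⟨rfl, rfl⟩ := hs
        exact ⟨0, _, _, _, oa, [], _, (by omega), (by simp), PWalk.nil _, hd, hw⟩
      | z' :: s₁', hs =>
        simp only [List.cons_append, List.cons.injEq] at hs
        obtain ⟨hz, hs⟩ := hs
        subst hz
        obtain ⟨n₁, n₂, q₂, q₃, ob, w₁, w₂, hn, hww, hw1, hmem, hw2⟩ := ih s₁' hs
        refine ⟨n₁ + 1, n₂, q₂, q₃, ob, oa.toList ++ w₁, w₂, (by omega), ?_, ?_, hmem, hw2⟩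
        · rw [hww]; simp [List.append_assoc]
        · simpa using PWalk.cons oa (some z) hd hw1

lemma complete : ∀ (N n : ℕ) (s : List (B × Bool)) (q : Q) (w : List A) (r : Q), n ≤ N →
    FreeGroup.mk s = 1 → PWalk Δ n q w s r →
    q ∈ states Δ q₀ qf → r ∈ states Δ q₀ qf →
    (pdaGrammar Δ q₀ qf).Derives [Symbol.nonterminal (q, r)] (w.map Symbol.terminal) := by
  intro N
  induction N with
  | zero =>
    intro n s q w r hn hmk hwalk hq hr
    interval_cases n
    cases hwalk
    apply ContextFreeGrammar.Produces.single
    refine ⟨⟨(q, q), []⟩, ?_, ?_⟩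
    · exact mem_pdaGrammar_rules.mpr (Or.inl ⟨q, hq, rfl⟩)
    · exact ContextFreeRule.Rewrites.input_output (r := ⟨(q, q), []⟩)
  | succ N ihN =>
    intro n s q w r hn hmk hwalk hq hr
    cases hwalk with
    | nil q =>
      apply ContextFreeGrammar.Produces.single
      refine ⟨⟨(q, q), []⟩, ?_, ?_⟩
      · exact mem_pdaGrammar_rules.mpr (Or.inl ⟨q, hq, rfl⟩)
      · exact ContextFreeRule.Rewrites.input_output (r := ⟨(q, q), []⟩)
    | @cons n' _ q' _ oa ox w' s' hd hw =>
      cases ox with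
      | none =>
        have ih := ihN n' s' q' w' r (by omega) (by simpa using hmk) hw
          (target_mem_states hd q₀ qf) hr
        have hrule : (⟨((q : Q), r), optT oa ++ [Symbol.nonterminal (q', r)]⟩ :
            ContextFreeRule A (Q × Q)) ∈ (pdaGrammar Δ q₀ qf).rules :=
          mem_pdaGrammar_rules.mpr (Or.inr (Or.inl ⟨(q, oa, none, q'), hd, r, hr, rfl, rfl⟩))
        have hprod : (pdaGrammar Δ q₀ qf).Produces [Symbol.nonterminal (q, r)]
            (optT oa ++ [Symbol.nonterminal (q', r)]) := by
          refine ⟨_, hrule, ?_⟩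
          exact ContextFreeRule.Rewrites.input_output
            (r := ⟨(q, r), optT oa ++ [Symbol.nonterminal (q', r)]⟩)
        apply hprod.trans_derives
        have := ih.append_left (optT oa)
        simp only [optT, List.map_append] at this ⊢
        exact this
      | some x =>
        simp only [Option.toList, List.singleton_append] at hmk
        obtain ⟨L₁, L₂, hsplit, hmk₁, hmk₂⟩ := key_split hmk
        obtain ⟨n₁, n₂, q₂, q₃, ob, w₁, w₂, hnn, hww, hw1, hmem, hw2⟩ :=
          walk_split hw L₁ hsplit
        have ih₁ := ihN n₁ L₁ q' w₁ q₂ (by omega) hmk₁ hw1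
          (target_mem_states hd q₀ qf) (source_mem_states hmem q₀ qf)
        have ih₂ := ihN n₂ L₂ q₃ w₂ r (by omega) hmk₂ hw2
          (target_mem_states hmem q₀ qf) hr
        have hrule : (⟨((q : Q), r), optT oa ++ [Symbol.nonterminal (q', q₂)]
            ++ optT ob ++ [Symbol.nonterminal (q₃, r)]⟩ :
            ContextFreeRule A (Q × Q)) ∈ (pdaGrammar Δ q₀ qf).rules :=
          mem_pdaGrammar_rules.mpr (Or.inr (Or.inr
            ⟨(q, oa, some x, q'), hd, (q₂, ob, some (x.1, !x.2), q₃), hmem, r, hr, x,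
              rfl, rfl, rfl⟩))
        have hprod : (pdaGrammar Δ q₀ qf).Produces [Symbol.nonterminal (q, r)]
            (optT oa ++ [Symbol.nonterminal (q', q₂)] ++ optT ob
              ++ [Symbol.nonterminal (q₃, r)]) := by
          refine ⟨_, hrule, ?_⟩
          exact ContextFreeRule.Rewrites.input_output
            (r := ⟨(q, r), optT oa ++ [Symbol.nonterminal (q', q₂)] ++ optT ob
              ++ [Symbol.nonterminal (q₃, r)]⟩)
        apply hprod.trans_derives
        have step1 : (pdaGrammar Δ q₀ qf).Derives
            (optT oa ++ [Symbol.nonterminal (q', q₂)] ++ optT ob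
              ++ [Symbol.nonterminal (q₃, r)])
            (optT oa ++ w₁.map Symbol.terminal ++ optT ob ++ [Symbol.nonterminal (q₃, r)]) := by
          have := (ih₁.append_left (optT oa)).append_right
            (optT ob ++ [Symbol.nonterminal (q₃, r)])
          exact (congrArg₂ (pdaGrammar Δ q₀ qf).Derives
            (List.append_assoc (optT oa ++ [Symbol.nonterminal (q', q₂)]) (optT ob)
              [Symbol.nonterminal (q₃, r)])
            (List.append_assoc (optT oa ++ w₁.map Symbol.terminal) (optT ob)
              [Symbol.nonterminal (q₃, r)])).mpr this
        have step2 : (pdaGrammar Δ q₀ qf).Derives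
            (optT oa ++ w₁.map Symbol.terminal ++ optT ob ++ [Symbol.nonterminal (q₃, r)])
            (optT oa ++ w₁.map Symbol.terminal ++ optT ob ++ w₂.map Symbol.terminal) :=
          ih₂.append_left _
        have := step1.trans step2
        rw [hww]
        simp only [optT, List.map_append, List.append_assoc] at this ⊢
        have e : (List.map Symbol.terminal oa.toList ++ (List.map Symbol.terminal w₁
            ++ List.map Symbol.terminal ob.toList) ++ List.map Symbol.terminal w₂ :
            List (Symbol A (Q × Q))) = List.map Symbol.terminal oa.toList
            ++ (List.map Symbol.terminal w₁ ++ (List.map Symbol.terminal ob.toList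
            ++ List.map Symbol.terminal w₂)) := by simp
        exact (congrArg ((pdaGrammar Δ q₀ qf).Derives _) e).mp this

/-- The triple-construction grammar generates exactly the trivial-stack walk language. -/
theorem pdaGrammar_language (Δ : Finset (Q × Option A × Option (B × Bool) × Q)) (q₀ qf : Q) :
    (pdaGrammar Δ q₀ qf).language = SemNT Δ (q₀, qf) := by
  ext w
  constructor
  · exact language_sound
  · rintro ⟨n, s, hmk, hwalk⟩
    rw [ContextFreeGrammar.mem_language_iff]
    exact complete n n s q₀ w qf le_rfl hmk hwalk (init_mem_states q₀ qf)
      (final_mem_states q₀ qf)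

/-- Main abstract theorem (single-letter transitions): the language of walks with trivial
total stack word is context-free. -/
theorem isContextFree_pwalk (Δ : Finset (Q × Option A × Option (B × Bool) × Q)) (q₀ qf : Q) :
    Language.IsContextFree
      {w : List A | ∃ n s, FreeGroup.mk s = 1 ∧ PWalk Δ n q₀ w s qf} :=
  ⟨pdaGrammar Δ q₀ qf, pdaGrammar_language Δ q₀ qf⟩

end Machine

section ListMachine

variable {A Q B : Type}

/-- A walk of a machine whose transitions emit whole words of stack letters. -/
inductive LWalk (Θ : Finset (Q × Option A × List (B × Bool) × Q)) :
    Q → List A → List (B × Bool) → Q → Prop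
  | nil (q : Q) : LWalk Θ q [] [] q
  | cons {q q' q'' : Q} (oa : Option A) (l : List (B × Bool)) {w : List A}
      {s : List (B × Bool)}
      (hd : (q, oa, l, q') ∈ Θ) (hw : LWalk Θ q' w s q'') :
      LWalk Θ q (oa.toList ++ w) (l ++ s) q''

variable {Θ : Finset (Q × Option A × List (B × Bool) × Q)}

lemma LWalk.append {q q' q'' : Q} {w w' : List A} {s s' : List (B × Bool)}
    (h1 : LWalk Θ q w s q') (h2 : LWalk Θ q' w' s' q'') :
    LWalk Θ q (w ++ w') (s ++ s') q'' := by
  induction h1 with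
  | nil q => simpa using h2
  | cons oa l hd hw ih =>
    have := LWalk.cons oa l hd (ih h2)
    simpa [List.append_assoc] using this

/-- Expansion of word-emitting transitions into single-letter ones, with buffer states. -/
def expandSet (Θ : Finset (Q × Option A × List (B × Bool) × Q)) :
    Set ((Q × List (B × Bool)) × Option A × Option (B × Bool) × (Q × List (B × Bool))) :=
  { d | (∃ e ∈ Θ, d = ((e.1, []), e.2.1, none, (e.2.2.2, e.2.2.1)))
      ∨ (∃ e ∈ Θ, ∃ x : B × Bool, ∃ v : List (B × Bool), (x :: v) <:+ e.2.2.1 ∧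
          d = ((e.2.2.2, x :: v), none, some x, (e.2.2.2, v))) }

lemma expandSet_finite (Θ : Finset (Q × Option A × List (B × Bool) × Q)) :
    (expandSet Θ).Finite := by
  classical
  apply Set.Finite.subset (Set.Finite.union
    (Set.Finite.image (fun e : Q × Option A × List (B × Bool) × Q =>
      ((e.1, ([] : List (B × Bool))), e.2.1, (none : Option (B × Bool)), (e.2.2.2, e.2.2.1)))
      Θ.finite_toSet)
    (Set.Finite.biUnion Θ.finite_toSet (fun e _ =>
      Set.Finite.image (fun t : List (B × Bool) =>
        ((e.2.2.2, t), (none : Option A), t.head?, (e.2.2.2, t.tail)))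
        (e.2.2.1.tails.toFinset : Finset (List (B × Bool))).finite_toSet)))
  rintro d (⟨e, he, rfl⟩ | ⟨e, he, x, v, hsuf, rfl⟩)
  · exact Or.inl ⟨e, he, rfl⟩
  · refine Or.inr (Set.mem_biUnion he ⟨x :: v, ?_, rfl⟩)
    simpa [List.mem_tails] using hsuf

/-- The expanded single-letter machine. -/
noncomputable def expΔ (Θ : Finset (Q × Option A × List (B × Bool) × Q)) :
    Finset ((Q × List (B × Bool)) × Option A × Option (B × Bool) × (Q × List (B × Bool))) :=
  (expandSet_finite Θ).toFinset

lemma mem_expΔ {d} : d ∈ expΔ Θ ↔ d ∈ expandSet Θ := Set.Finite.mem_toFinset _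

lemma pop_chain {e : Q × Option A × List (B × Bool) × Q} (he : e ∈ Θ) :
    ∀ t : List (B × Bool), t <:+ e.2.2.1 →
      ∃ n, CFPair.PWalk (expΔ Θ) n (e.2.2.2, t) [] t (e.2.2.2, []) := by
  intro t
  induction t with
  | nil => exact fun _ => ⟨0, CFPair.PWalk.nil _⟩
  | cons x v ih =>
    intro hsuf
    have hv : v <:+ e.2.2.1 := (List.suffix_cons x v).trans hsuf
    obtain ⟨n, hw⟩ := ih hv
    have hd : ((e.2.2.2, x :: v), (none : Option A), some x, (e.2.2.2, v)) ∈ expΔ Θ :=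
      mem_expΔ.mpr (Or.inr ⟨e, he, x, v, hsuf, rfl⟩)
    exact ⟨n + 1, by simpa using CFPair.PWalk.cons none (some x) hd hw⟩

lemma lwalk_to_pwalk {q q' : Q} {w : List A} {s : List (B × Bool)}
    (h : LWalk Θ q w s q') : ∃ n, CFPair.PWalk (expΔ Θ) n (q, []) w s (q', []) := by
  induction h with
  | nil q => exact ⟨0, CFPair.PWalk.nil _⟩
  | cons oa l hd hw ih =>
    rename_i qa qb qc wx sx
    obtain ⟨n₂, hw₂⟩ := ih
    have hmain : ((qa, ([] : List (B × Bool))), oa, (none : Option (B × Bool)), (qb, l))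
        ∈ expΔ Θ := mem_expΔ.mpr (Or.inl ⟨(qa, oa, l, qb), hd, rfl⟩)
    obtain ⟨n₁, hchain⟩ := pop_chain (e := (qa, oa, l, qb)) hd l (List.suffix_refl l)
    have hcomb := hchain.append hw₂
    have := CFPair.PWalk.cons oa none hmain hcomb
    exact ⟨n₁ + n₂ + 1, by simpa using this⟩

lemma pwalk_to_lwalk {n : ℕ} {qp qfp : Q × List (B × Bool)} {w : List A}
    {s : List (B × Bool)}
    (h : CFPair.PWalk (expΔ Θ) n qp w s qfp) :
    qfp.2 = [] → ∃ s₁, s = qp.2 ++ s₁ ∧ LWalk Θ qp.1 w s₁ qfp.1 := by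
  induction h with
  | nil q => exact fun hfp => ⟨[], by simp [hfp], LWalk.nil _⟩
  | cons oa ox hd hw ih =>
    intro hfp
    obtain ⟨s₁, rfl, hlw⟩ := ih hfp
    rcases mem_expΔ.mp hd with ⟨e, he, heq⟩ | ⟨e, he, x, v, hsuf, heq⟩
    · have h1 := congrArg (fun p => p.1) heq
      have h2 := congrArg (fun p => p.2.1) heq
      have h3 := congrArg (fun p => p.2.2.1) heq
      have h4 := congrArg (fun p => p.2.2.2) heq
      simp only at h1 h2 h3 h4
      rw [h4] at hlw ⊢
      refine ⟨e.2.2.1 ++ s₁, ?_, ?_⟩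
      · rw [h1, h3]; simp
      · rw [h1, h2]
        simpa using LWalk.cons e.2.1 e.2.2.1 he hlw
    · have h1 := congrArg (fun p => p.1) heq
      have h3 := congrArg (fun p => p.2.2.1) heq
      have h4 := congrArg (fun p => p.2.2.2) heq
      simp only at h1 h3 h4
      rw [h4] at hlw ⊢
      refine ⟨s₁, ?_, ?_⟩
      · rw [h1, h3]; simp
      · rw [h1]
        have h2 := congrArg (fun p => p.2.1) heq
        simp only at h2
        rw [h2]
        simpa using hlw

/-- Main abstract theorem (word-emitting transitions): the language of walks with trivial
total stack word is context-free. -/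
theorem isContextFree_lwalk (Θ : Finset (Q × Option A × List (B × Bool) × Q)) (q₀ qf : Q) :
    Language.IsContextFree {w : List A | ∃ s, FreeGroup.mk s = 1 ∧ LWalk Θ q₀ w s qf} := by
  obtain ⟨g, hg⟩ := CFPair.isContextFree_pwalk (expΔ Θ) (q₀, ([] : List (B × Bool))) (qf, [])
  refine ⟨g, ?_⟩
  rw [hg]
  ext w
  constructor
  · rintro ⟨n, s, hmk, hp⟩
    obtain ⟨s₁, hs, hl⟩ := pwalk_to_lwalk hp rfl
    simp only [List.nil_append] at hs
    subst hs
    exact ⟨s, hmk, hl⟩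
  · rintro ⟨s, hmk, hl⟩
    obtain ⟨n, hp⟩ := lwalk_to_pwalk hl
    exact ⟨n, s, hmk, hp⟩

end ListMachine

end CFPair

section Main

theorem contextFree_pair_of_virtuallyFree'
    {G : Type} [Group G]
    (F : Subgroup G) [IsFreeGroup F] [F.FiniteIndex]
    (K : Subgroup G) (S : Finset G) (hS : Subgroup.closure (S : Set G) = K)
    {α : Type} [Fintype α] (ψ : α → G) :
    Language.IsContextFree {w : List α | (w.map ψ).prod ∈ K} := by
  classical
  haveI : Finite (Quotient (QuotientGroup.rightRel F)) :=
    Finite.of_equiv _ (QuotientGroup.quotientRightRelEquivQuotientLeftRel F).symm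
  set B := IsFreeGroup.Generators F with hB
  let e : FreeGroup B ≃* F := IsFreeGroup.mulEquiv F
  -- transversal function
  let tf : G → G := fun g => (Quotient.mk (QuotientGroup.rightRel F) g).out
  have htf : ∀ g : G, g * (tf g)⁻¹ ∈ F := by
    intro g
    have h1 : Quotient.mk (QuotientGroup.rightRel F) (tf g)
        = Quotient.mk (QuotientGroup.rightRel F) g := Quotient.out_eq _
    exact QuotientGroup.rightRel_apply.mp (Quotient.exact h1)
  -- words
  let wd : G → List (B × Bool) := fun g => (e.symm ⟨g * (tf g)⁻¹, htf g⟩).toWord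
  have hwd : ∀ g : G, (↑(e (FreeGroup.mk (wd g))) : G) = g * (tf g)⁻¹ := by
    intro g
    show (↑(e (FreeGroup.mk (e.symm ⟨g * (tf g)⁻¹, htf g⟩).toWord)) : G) = _
    rw [FreeGroup.mk_toWord, MulEquiv.apply_symm_apply]
  have hT1 : tf 1 ∈ F := by
    have := htf 1
    simpa using F.inv_mem (by simpa using this)
  let wfin : List (B × Bool) := (e.symm ⟨tf 1, hT1⟩).toWord
  have hwfin : (↑(e (FreeGroup.mk wfin)) : G) = tf 1 := by
    show (↑(e (FreeGroup.mk (e.symm ⟨tf 1, hT1⟩).toWord)) : G) = _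
    rw [FreeGroup.mk_toWord, MulEquiv.apply_symm_apply]
  -- the transversal as a finset
  have hTfin : (Set.range tf).Finite := by
    apply Set.Finite.subset (Set.finite_range
      (fun q : Quotient (QuotientGroup.rightRel F) => q.out))
    rintro _ ⟨g, rfl⟩
    exact ⟨_, rfl⟩
  let Tq : Finset G := hTfin.toFinset
  have mem_Tq : ∀ {t : G}, t ∈ Tq ↔ ∃ x, tf x = t := fun {t} =>
    (Set.Finite.mem_toFinset _).trans Iff.rfl
  have hTqr : ∀ g : G, tf g ∈ Tq := fun g => mem_Tq.mpr ⟨g, rfl⟩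
  have htf_congr : ∀ {a b : G}, a * b⁻¹ ∈ F → tf a = tf b := by
    intro a b h
    have h2 : Quotient.mk (QuotientGroup.rightRel F) a
        = Quotient.mk (QuotientGroup.rightRel F) b := by
      exact Quotient.sound (QuotientGroup.rightRel_apply.mpr (by simpa using F.inv_mem h))
    show (Quotient.mk (QuotientGroup.rightRel F) a).out = _
    rw [h2]
  have hidem : ∀ g : G, tf (tf g) = tf g := fun g =>
    htf_congr (by simpa using F.inv_mem (htf g))
  have hUniq : ∀ x : G, (tf x) * (tf 1)⁻¹ ∈ F → tf x = tf 1 := by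
    intro x hx
    rw [← hidem x, htf_congr hx, hidem 1]
  -- generators of K with inverses
  let S' : Finset G := S ∪ S.image (·⁻¹)
  have hS'K : ∀ c ∈ S', c ∈ K := by
    intro c hc
    rcases Finset.mem_union.mp hc with h | h
    · rw [← hS]; exact Subgroup.subset_closure h
    · obtain ⟨z, hz, rfl⟩ := Finset.mem_image.mp h
      exact K.inv_mem (by rw [← hS]; exact Subgroup.subset_closure hz)
  have hSgen : ∀ k : G, k ∈ K → ∃ l : List G, (∀ c ∈ l, c ∈ S') ∧ l.prod = k := by
    intro k hk
    rw [← hS] at hk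
    have hk2 : k ∈ Submonoid.closure ((S : Set G) ∪ (S : Set G)⁻¹) := by
      rw [← Subgroup.closure_toSubmonoid]; exact hk
    obtain ⟨l, hl, hlp⟩ := Submonoid.exists_list_of_mem_closure hk2
    refine ⟨l, ?_, hlp⟩
    intro c hc
    rcases hl c hc with h | h
    · exact Finset.mem_union.mpr (Or.inl h)
    · exact Finset.mem_union.mpr (Or.inr (Finset.mem_image.mpr
        ⟨c⁻¹, by simpa using h, by simp⟩))
  -- the machine
  let Θ : Finset ((G × ℕ) × Option α × List (B × Bool) × (G × ℕ)) :=
    {(((1 : G), 0), none, wd 1, (tf 1, 1))}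
    ∪ (Tq ×ˢ (Finset.univ : Finset α)).image
        (fun p => ((p.1, 1), some p.2, wd (p.1 * ψ p.2), (tf (p.1 * ψ p.2), 1)))
    ∪ Tq.image (fun t => ((t, 1), none, ([] : List (B × Bool)), (t, 2)))
    ∪ (Tq ×ˢ S').image
        (fun p => ((p.1, 2), none, wd (p.1 * p.2), (tf (p.1 * p.2), 2)))
    ∪ {((tf 1, 2), none, wfin, ((1 : G), 3))}
  -- soundness
  have sound : ∀ (q : G × ℕ) (w : List α) (s : List (B × Bool)) (q' : G × ℕ),
      CFPair.LWalk Θ q w s q' →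
      ∃ k : G, k ∈ K ∧ q.1 * (w.map ψ).prod * k = ↑(e (FreeGroup.mk s)) * q'.1
        ∧ (2 ≤ q.2 → w = []) := by
    intro q w s q' hwalk
    induction hwalk with
    | nil q =>
      refine ⟨1, K.one_mem, ?_, fun _ => rfl⟩
      rw [show FreeGroup.mk ([] : List (B × Bool)) = 1 from FreeGroup.one_eq_mk.symm]
      simp
    | cons oa l hd hw ih =>
      rename_i qs qmid qend ww ss
      obtain ⟨k, hk, heq, hph⟩ := ih
      have hmul : (↑(e (FreeGroup.mk (l ++ ss))) : G)
          = (↑(e (FreeGroup.mk l)) : G) * (↑(e (FreeGroup.mk ss)) : G) := by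
        rw [← FreeGroup.mul_mk, map_mul]; rfl
      rcases Finset.mem_union.mp hd with hd | hd
      case inr => -- final transition
        rw [Finset.mem_singleton] at hd
        have h1 : qs = (tf 1, 2) := congrArg (fun p => p.1) hd
        have h2 : oa = none := congrArg (fun p => p.2.1) hd
        have h3 : l = wfin := congrArg (fun p => p.2.2.1) hd
        have h4 : qmid = ((1 : G), 3) := congrArg (fun p => p.2.2.2) hd
        have hww : ww = [] := hph (by simp [h4])
        subst hww h2 h3 h1
        rw [h4] at heq
        refine ⟨k, hk, ?_, fun _ => by simp⟩
        rw [hmul, hwfin]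
        simp only [Option.toList, List.nil_append, List.map_nil, List.prod_nil]
        conv_rhs => rw [mul_assoc, ← heq]
        simp only [List.map_nil, List.prod_nil]
        group
      rcases Finset.mem_union.mp hd with hd | hd
      case inr => -- K-generator transition
        obtain ⟨p, hp, hpe⟩ := Finset.mem_image.mp hd
        obtain ⟨hpt, hpc⟩ := Finset.mem_product.mp hp
        have h1 : qs = (p.1, 2) := (congrArg (fun x => x.1) hpe).symm
        have h2 : oa = none := (congrArg (fun x => x.2.1) hpe).symm
        have h3 : l = wd (p.1 * p.2) := (congrArg (fun x => x.2.2.1) hpe).symm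
        have h4 : qmid = (tf (p.1 * p.2), 2) := (congrArg (fun x => x.2.2.2) hpe).symm
        have hww : ww = [] := hph (by simp [h4])
        subst hww h2 h3 h1
        rw [h4] at heq
        refine ⟨p.2 * k, K.mul_mem (hS'K _ hpc) hk, ?_, fun _ => by simp⟩
        rw [hmul, hwd]
        simp only [Option.toList, List.nil_append, List.map_nil, List.prod_nil]
        conv_rhs => rw [mul_assoc, ← heq]
        simp only [List.map_nil, List.prod_nil]
        group
      rcases Finset.mem_union.mp hd with hd | hd
      case inr => -- switch transition
        obtain ⟨t, ht, hpe⟩ := Finset.mem_image.mp hd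
        have h1 : qs = (t, 1) := (congrArg (fun x => x.1) hpe).symm
        have h2 : oa = none := (congrArg (fun x => x.2.1) hpe).symm
        have h3 : l = [] := (congrArg (fun x => x.2.2.1) hpe).symm
        have h4 : qmid = (t, 2) := (congrArg (fun x => x.2.2.2) hpe).symm
        subst h2 h3 h1
        rw [h4] at heq
        refine ⟨k, hk, ?_, fun hc => by norm_num at hc⟩
        simpa using heq
      rcases Finset.mem_union.mp hd with hd | hd
      case inr => -- letter transition
        obtain ⟨p, hp, hpe⟩ := Finset.mem_image.mp hd
        have h1 : qs = (p.1, 1) := (congrArg (fun x => x.1) hpe).symm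
        have h2 : oa = some p.2 := (congrArg (fun x => x.2.1) hpe).symm
        have h3 : l = wd (p.1 * ψ p.2) := (congrArg (fun x => x.2.2.1) hpe).symm
        have h4 : qmid = (tf (p.1 * ψ p.2), 1) := (congrArg (fun x => x.2.2.2) hpe).symm
        subst h2 h3 h1
        rw [h4] at heq
        refine ⟨k, hk, ?_, fun hc => by norm_num at hc⟩
        rw [hmul, hwd]
        simp only [Option.toList, List.singleton_append, List.map_cons, List.prod_cons]
        conv_rhs => rw [mul_assoc, ← heq]
        simp only [List.map_cons, List.prod_cons]
        group
      case inl => -- initial transition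
        rw [Finset.mem_singleton] at hd
        have h1 : qs = ((1 : G), 0) := congrArg (fun p => p.1) hd
        have h2 : oa = none := congrArg (fun p => p.2.1) hd
        have h3 : l = wd 1 := congrArg (fun p => p.2.2.1) hd
        have h4 : qmid = (tf 1, 1) := congrArg (fun p => p.2.2.2) hd
        subst h2 h3 h1
        rw [h4] at heq
        refine ⟨k, hk, ?_, fun hc => by norm_num at hc⟩
        rw [hmul, hwd]
        simp only [Option.toList, List.nil_append]
        conv_rhs => rw [mul_assoc, ← heq]
        group
  -- completeness helpers
  have compA : ∀ (w : List α) (t : G), t ∈ Tq → ∃ s t', CFPair.LWalk Θ (t, 1) w s (t', 1)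
      ∧ t' ∈ Tq ∧ (↑(e (FreeGroup.mk s)) : G) * t' = t * (w.map ψ).prod := by
    intro w
    induction w with
    | nil =>
      intro t ht
      refine ⟨[], t, CFPair.LWalk.nil _, ht, ?_⟩
      rw [show FreeGroup.mk ([] : List (B × Bool)) = 1 from FreeGroup.one_eq_mk.symm]
      simp
    | cons a w' ih =>
      intro t ht
      obtain ⟨s', t', hw, ht', heq⟩ := ih (tf (t * ψ a)) (hTqr _)
      have hdm : (((t : G), (1 : ℕ)), some a, wd (t * ψ a), (tf (t * ψ a), 1)) ∈ Θ := by
        apply Finset.mem_union.mpr; left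
        apply Finset.mem_union.mpr; left
        apply Finset.mem_union.mpr; left
        apply Finset.mem_union.mpr; right
        exact Finset.mem_image.mpr ⟨(t, a), Finset.mem_product.mpr ⟨ht, Finset.mem_univ a⟩, rfl⟩
      refine ⟨wd (t * ψ a) ++ s', t', ?_, ht', ?_⟩
      · simpa using CFPair.LWalk.cons (some a) (wd (t * ψ a)) hdm hw
      · rw [← FreeGroup.mul_mk, map_mul]
        push_cast [hwd]
        rw [mul_assoc, heq]
        simp [List.map_cons, List.prod_cons]
        group
  have compK : ∀ (cs : List G), (∀ c ∈ cs, c ∈ S') → ∀ t : G, t ∈ Tq →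
      ∃ s t', CFPair.LWalk Θ (t, 2) [] s (t', 2)
      ∧ t' ∈ Tq ∧ (↑(e (FreeGroup.mk s)) : G) * t' = t * cs.prod := by
    intro cs
    induction cs with
    | nil =>
      intro _ t ht
      refine ⟨[], t, CFPair.LWalk.nil _, ht, ?_⟩
      rw [show FreeGroup.mk ([] : List (B × Bool)) = 1 from FreeGroup.one_eq_mk.symm]
      simp
    | cons c cs' ih =>
      intro hcs t ht
      obtain ⟨s', t', hw, ht', heq⟩ := ih (fun x hx => hcs x (List.mem_cons_of_mem c hx))
        (tf (t * c)) (hTqr _)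
      have hdm : (((t : G), (2 : ℕ)), (none : Option α), wd (t * c), (tf (t * c), 2)) ∈ Θ := by
        apply Finset.mem_union.mpr; left
        apply Finset.mem_union.mpr; right
        exact Finset.mem_image.mpr ⟨(t, c),
          Finset.mem_product.mpr ⟨ht, hcs c List.mem_cons_self⟩, rfl⟩
      refine ⟨wd (t * c) ++ s', t', ?_, ht', ?_⟩
      · simpa using CFPair.LWalk.cons none (wd (t * c)) hdm hw
      · rw [← FreeGroup.mul_mk, map_mul]
        push_cast [hwd]
        rw [mul_assoc, heq]
        simp [List.prod_cons]
        group
  -- conclude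
  have := CFPair.isContextFree_lwalk Θ (((1 : G), 0)) (((1 : G), 3))
  convert this using 2
  apply iff_of_eq
  congr 1
  ext w
  constructor
  · -- completeness
    intro hwK
    obtain ⟨cs, hcs, hcsp⟩ := hSgen ((w.map ψ).prod)⁻¹ (K.inv_mem hwK)
    obtain ⟨s₁, t₁, hw₁, ht₁, heq₁⟩ := compA w (tf 1) (hTqr 1)
    obtain ⟨s₂, t₂, hw₂, ht₂, heq₂⟩ := compK cs hcs t₁ ht₁
    rw [hcsp] at heq₂
    -- t₂ = tf 1
    have ht₂1 : t₂ * (tf 1)⁻¹ ∈ F := by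
      have h1 : t₁ = (↑(e (FreeGroup.mk s₁)) : G)⁻¹ * (tf 1 * (w.map ψ).prod) := by
        rw [← heq₁]; group
      have h2 : t₂ = (↑(e (FreeGroup.mk s₂)) : G)⁻¹ * (t₁ * ((w.map ψ).prod)⁻¹) := by
        rw [← heq₂]; group
      have hv : t₂ * (tf 1)⁻¹
          = (↑(e (FreeGroup.mk s₂)) : G)⁻¹ * (↑(e (FreeGroup.mk s₁)) : G)⁻¹ := by
        rw [h2, h1]; group
      rw [hv]
      exact F.mul_mem (F.inv_mem (SetLike.coe_mem _)) (F.inv_mem (SetLike.coe_mem _))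
    obtain ⟨x, rfl⟩ := mem_Tq.mp ht₂
    have ht₂e : tf x = tf 1 := hUniq x ht₂1
    rw [ht₂e] at hw₂ heq₂
    -- assemble the walk
    have hinit : ((((1 : G), 0) : G × ℕ), (none : Option α), wd 1, (tf 1, 1)) ∈ Θ := by
      apply Finset.mem_union.mpr; left
      apply Finset.mem_union.mpr; left
      apply Finset.mem_union.mpr; left
      apply Finset.mem_union.mpr; left
      exact Finset.mem_singleton_self _
    have hsw : (((t₁ : G), (1 : ℕ)), (none : Option α), ([] : List (B × Bool)), (t₁, 2)) ∈ Θ := by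
      apply Finset.mem_union.mpr; left
      apply Finset.mem_union.mpr; left
      apply Finset.mem_union.mpr; right
      exact Finset.mem_image.mpr ⟨t₁, ht₁, rfl⟩
    have hfin : (((tf 1 : G), (2 : ℕ)), (none : Option α), wfin, ((1 : G), 3)) ∈ Θ := by
      apply Finset.mem_union.mpr; right
      exact Finset.mem_singleton_self _
    have w0 : CFPair.LWalk Θ ((1 : G), 0) [] (wd 1) (tf 1, 1) := by
      simpa using CFPair.LWalk.cons none (wd 1) hinit (CFPair.LWalk.nil _)
    have wsw : CFPair.LWalk Θ (t₁, 1) [] [] (t₁, 2) := by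
      simpa using CFPair.LWalk.cons none [] hsw (CFPair.LWalk.nil _)
    have wfin' : CFPair.LWalk Θ (tf 1, 2) [] wfin ((1 : G), 3) := by
      simpa using CFPair.LWalk.cons none wfin hfin (CFPair.LWalk.nil _)
    have total := w0.append (hw₁.append (wsw.append (hw₂.append wfin')))
    refine ⟨wd 1 ++ (s₁ ++ ([] ++ (s₂ ++ wfin))), ?_, by simpa using total⟩
    -- the total stack word is trivial
    have hE1 : (↑(e (FreeGroup.mk s₁)) : G) = tf 1 * (w.map ψ).prod * t₁⁻¹ := by
      rw [← heq₁]; group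
    have hE2 : (↑(e (FreeGroup.mk s₂)) : G) = t₁ * ((w.map ψ).prod)⁻¹ * (tf 1)⁻¹ := by
      rw [← heq₂]; group
    have hcoe : (↑(e (FreeGroup.mk (wd 1 ++ (s₁ ++ ([] ++ (s₂ ++ wfin)))))) : G) = 1 := by
      simp only [List.nil_append]
      rw [← FreeGroup.mul_mk, ← FreeGroup.mul_mk, ← FreeGroup.mul_mk]
      rw [map_mul, map_mul, map_mul]
      push_cast
      rw [hwd, hwfin, hE1, hE2]
      group
    have hone : e (FreeGroup.mk (wd 1 ++ (s₁ ++ ([] ++ (s₂ ++ wfin))))) = 1 := by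
      apply Subtype.ext
      simpa using hcoe
    exact e.injective (by rw [hone, map_one])
  · -- soundness
    rintro ⟨s, hmk, hwalk⟩
    obtain ⟨k, hk, heq, -⟩ := sound _ _ _ _ hwalk
    rw [hmk, map_one] at heq
    show (List.map ψ w).prod ∈ K
    have h3 : (List.map ψ w).prod * k = 1 := by simpa using heq
    rw [mul_eq_one_iff_eq_inv] at h3
    rw [h3]
    exact K.inv_mem hk

end Main



/-- If `G` is virtually free (contains a free subgroup of finite index)
and `K` is a finitely generated subgroup of `G`, then the pair `(G,K)` is context-free:
for every semigroup presentation `ψ` of `G`, the language `L(G,K,ψ)` is context-free. -/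
theorem contextFree_pair_of_virtuallyFree
    {G : Type} [Group G] [Group.FG G]
    (hvf : ∃ F : Subgroup G, IsFreeGroup F ∧ F.FiniteIndex)
    (K : Subgroup G) (hK : K.FG)
    {α : Type} [Fintype α] (ψ : α → G)
    (hψ : ∀ g : G, ∃ w : List α, (w.map ψ).prod = g) :
    Language.IsContextFree {w : List α | (w.map ψ).prod ∈ K} := by
  obtain ⟨F, hfree, hfi⟩ := hvf
  haveI := hfree
  haveI := hfi
  obtain ⟨S, hS⟩ := hK
  exact contextFree_pair_of_virtuallyFree' F K S hS ψ
end

section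
/- Let G be a finitely generated group with semigroup presentation ψ : Σ → G, and let K be a subgroup of finite index in G. Let M be a deterministic finite automaton over the alphabet Σ accepting the language L(G,K,ψ) = { w ∈ Σ* : ψ(w) ∈ K }, and assume every state of M is reachable from the start state (by reading some word). Then there is a surjective map κ from the states of M onto the set K\G of right cosets of K in G such that κ(start) = K and κ(M.step q a) = κ(q)·ψ(a) for every state q and letter a ∈ Σ (where the right coset Kg is sent to Kg·ψ(a)). In other words, M, viewed as a labelled graph, admits a surjective labelled-graph homomorphism onto the Schreier graph of (G,K) with respect to ψ. -/
/-- Let `K` be a finite-index subgroup of a finitely generated group `G`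
with semigroup presentation `ψ`, and let `M` be a DFA accepting `L(G,K,ψ)` in which every
state is reachable. Then there is a surjective map `κ` from the states of `M` onto the set
`K\G` of right cosets (the vertices of the Schreier graph) sending the start state to `K`
and intertwining the transitions with right multiplication: if `κ q = Kg` then
`κ (M.step q a) = Kg·ψ(a)`. -/
theorem dfa_maps_onto_schreier_graph
    {G : Type} [Group G] [Group.FG G] (K : Subgroup G) [K.FiniteIndex]
    {α : Type} [Fintype α] (ψ : α → G)
    (hψ : ∀ g : G, ∃ w : List α, (w.map ψ).prod = g)
    {σ : Type} (M : DFA α σ)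
    (hacc : M.accepts = {w : List α | (w.map ψ).prod ∈ K})
    (hreach : ∀ q : σ, ∃ w : List α, M.eval w = q) :
    ∃ κ : σ → Quotient (QuotientGroup.rightRel K),
      Function.Surjective κ ∧
      κ M.start = Quotient.mk'' (1 : G) ∧
      ∀ (q : σ) (a : α) (g : G), κ q = Quotient.mk'' g →
        κ (M.step q a) = Quotient.mk'' (g * ψ a) := by
  classical
  -- key: words reaching the same state have the same right coset
  have key : ∀ w w' : List α, M.eval w = M.eval w' →
      (Quotient.mk'' ((w.map ψ).prod) : Quotient (QuotientGroup.rightRel K)) =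
      Quotient.mk'' ((w'.map ψ).prod) := by
    intro w w' h
    obtain ⟨u, hu⟩ := hψ ((w'.map ψ).prod)⁻¹
    have hw' : w' ++ u ∈ M.accepts := by
      rw [hacc]; show ((w' ++ u).map ψ).prod ∈ K
      simp [hu]
    have e : M.eval (w ++ u) = M.eval (w' ++ u) := by
      show M.evalFrom M.start _ = M.evalFrom M.start _
      rw [DFA.evalFrom_of_append, DFA.evalFrom_of_append]
      show M.evalFrom (M.eval w) u = M.evalFrom (M.eval w') u
      rw [h]
    have hw : w ++ u ∈ M.accepts := by
      rw [DFA.mem_accepts, e, ← DFA.mem_accepts]; exact hw'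
    rw [hacc] at hw; change ((w ++ u).map ψ).prod ∈ K at hw
    simp only [List.map_append, List.prod_append, hu] at hw
    refine Quotient.sound' ?_
    rw [QuotientGroup.rightRel_apply]
    simpa using K.inv_mem hw
  set κ : σ → Quotient (QuotientGroup.rightRel K) :=
    fun q => Quotient.mk'' (((hreach q).choose.map ψ).prod) with hκ
  have hκeval : ∀ w : List α, κ (M.eval w) = Quotient.mk'' ((w.map ψ).prod) := by
    intro w
    exact key _ _ ((hreach (M.eval w)).choose_spec)
  refine ⟨κ, ?_, ?_, ?_⟩
  · intro x
    induction x using Quotient.inductionOn' with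
    | h g =>
      obtain ⟨w, hw⟩ := hψ g
      exact ⟨M.eval w, by rw [hκeval, hw]⟩
  · have := hκeval []
    simpa using this
  · intro q a g hq
    obtain ⟨w, hw⟩ := hreach q
    have h1 : κ q = Quotient.mk'' ((w.map ψ).prod) := by rw [← hw, hκeval]
    have h2 : M.step q a = M.eval (w ++ [a]) := by
      rw [DFA.eval_append_singleton, hw]
    have hrel : g * ((w.map ψ).prod)⁻¹ ∈ K := by
      rw [h1] at hq
      have := Quotient.exact' hq
      rwa [QuotientGroup.rightRel_apply] at this
    rw [h2, hκeval]
    refine Quotient.sound' ?_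
    rw [QuotientGroup.rightRel_apply]
    simpa [mul_assoc] using hrel
end
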